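/- arXiv:1012.5187 — 7 statements merged into one kernel-verified Lean document; each statement's English description precedes it below -/
import Mathlib

section
/- Let P be a finite set of points in the plane, not all collinear, and let G be its point visibility graph (two points adjacent iff the open segment between them contains no other point of P). Then the diameter of G is at most 2; that is, any two points of P are either mutually visible or there exists a third point of P visible from both. -/
/-- The point visibility graph of a finite planar point set `P`: two points are
adjacent iff they are distinct and the open segment between them contains no
point of `P`. -/
def visGraph (P : Finset (ℝ × ℝ)) : SimpleGraph (ℝ × ℝ) where
  Adj p q := p ≠ q ∧ ∀ r ∈ P, r ∉ openSegment ℝ p q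
  symm := by
    constructor
    rintro p q ⟨h1, h2⟩
    refine ⟨h1.symm, fun r hr => ?_⟩
    rw [openSegment_symm]
    exact h2 r hr
  loopless := by constructor; rintro p ⟨h1, _⟩; exact h1 rfl

/-- If a finite planar point set `P` is not contained in a line, then its point
visibility graph has diameter at most `2`: any two points of `P` are mutually
visible, or some third point of `P` is visible from both. -/
theorem diameter_le_two_of_not_collinear (P : Finset (ℝ × ℝ))
    (h : ¬ Collinear ℝ (↑P : Set (ℝ × ℝ))) :
    ∀ p ∈ P, ∀ q ∈ P, p ≠ q →
      (visGraph P).Adj p q ∨ ∃ r ∈ P, (visGraph P).Adj p r ∧ (visGraph P).Adj r q := by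
  classical
  intro p hp q hq hpq
  set g : ℝ × ℝ → ℝ := fun x => (q.1 - p.1) * (x.2 - p.2) - (q.2 - p.2) * (x.1 - p.1) with hg
  -- some point of P has g ≠ 0
  have hex : ∃ x ∈ P, g x ≠ 0 := by
    by_contra hC
    push_neg at hC
    apply h
    rw [collinear_iff_of_mem (Finset.mem_coe.mpr hp)]
    refine ⟨q - p, fun x hx => ?_⟩
    have hg0 : g x = 0 := hC x hx
    simp only [hg] at hg0
    by_cases h1 : q.1 - p.1 = 0
    · have h2 : q.2 - p.2 ≠ 0 := by
        intro h2
        apply hpq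
        apply Prod.ext <;> [linarith; linarith]
      refine ⟨(x.2 - p.2) / (q.2 - p.2), ?_⟩
      have hx1 : x.1 - p.1 = 0 := by
        rw [h1] at hg0
        rcases mul_eq_zero.mp (by simpa using hg0 : (q.2 - p.2) * (x.1 - p.1) = 0) with h' | h'
        · exact absurd h' h2
        · exact h'
      apply Prod.ext <;> simp [Prod.smul_fst, Prod.smul_snd, smul_eq_mul]
      · field_simp
        linarith
      · field_simp
        ring
    · refine ⟨(x.1 - p.1) / (q.1 - p.1), ?_⟩
      apply Prod.ext <;> simp [Prod.smul_fst, Prod.smul_snd, smul_eq_mul]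
      · field_simp
        ring
      · field_simp
        nlinarith [hg0]
  right
  obtain ⟨x0, hx0P, hx0⟩ := hex
  have hne : (P.filter (fun x => g x ≠ 0)).Nonempty := ⟨x0, Finset.mem_filter.mpr ⟨hx0P, hx0⟩⟩
  obtain ⟨r, hrm, hmin⟩ := Finset.exists_min_image _ (fun x => |g x|) hne
  obtain ⟨hrP, hgr⟩ := Finset.mem_filter.mp hrm
  have hgrpos : 0 < |g r| := abs_pos.mpr hgr
  have hgp : g p = 0 := by simp [hg]
  have hgq : g q = 0 := by simp [hg]; ring
  refine ⟨r, hrP, ⟨fun hpr => hgr (hpr ▸ hgp), fun s hs hmem => ?_⟩,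
    ⟨fun hrq => hgr (hrq ▸ hgq), fun s hs hmem => ?_⟩⟩
  · -- s in open segment p r
    obtain ⟨a, b, ha, hb, hab, rfl⟩ := hmem
    have hkey : g (a • p + b • r) = b * g r := by
      simp only [hg, Prod.fst_add, Prod.snd_add, Prod.smul_fst, Prod.smul_snd, smul_eq_mul]
      have : a = 1 - b := by linarith
      rw [this]; ring
    have hb1 : b < 1 := by linarith
    have hsmem : a • p + b • r ∈ P.filter (fun x => g x ≠ 0) := by
      refine Finset.mem_filter.mpr ⟨hs, ?_⟩
      rw [hkey]
      exact mul_ne_zero (by linarith) hgr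
    have := hmin _ hsmem
    rw [hkey, abs_mul, abs_of_pos hb] at this
    nlinarith
  · -- s in open segment r q
    obtain ⟨a, b, ha, hb, hab, rfl⟩ := hmem
    have hkey : g (a • r + b • q) = a * g r := by
      simp only [hg, Prod.fst_add, Prod.snd_add, Prod.smul_fst, Prod.smul_snd, smul_eq_mul]
      have : b = 1 - a := by linarith
      rw [this]; ring
    have ha1 : a < 1 := by linarith
    have hsmem : a • r + b • q ∈ P.filter (fun x => g x ≠ 0) := by
      refine Finset.mem_filter.mpr ⟨hs, ?_⟩
      rw [hkey]
      exact mul_ne_zero (by linarith) hgr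
    have := hmin _ hsmem
    rw [hkey, abs_mul, abs_of_pos ha] at this
    nlinarith
end

section
/- For any finite set P of n ≥ 3 points in the plane in general position (no three collinear), every blocking set for P has size at least 2n − 3. -/
noncomputable section

lemma det_collinear' (p q r : ℝ × ℝ)
    (h : (q.1 - p.1) * (r.2 - p.2) - (q.2 - p.2) * (r.1 - p.1) = 0) :
    Collinear ℝ ({p, q, r} : Set (ℝ × ℝ)) := by
  rcases eq_or_ne q p with rfl | hq
  · have : ({q, q, r} : Set (ℝ × ℝ)) = {q, r} := by simp
    rw [this]; exact collinear_pair ℝ q r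
  · rw [collinear_iff_of_mem (Set.mem_insert p {q, r})]
    refine ⟨q - p, ?_⟩
    intro x hx
    have goal : ∀ t : ℝ, x.1 = t * (q.1 - p.1) + p.1 → x.2 = t * (q.2 - p.2) + p.2 →
        ∃ t : ℝ, x = t • (q - p) +ᵥ p := by
      intro t h1 h2
      exact ⟨t, by ext <;> simpa [Prod.ext_iff]⟩
    rcases hx with rfl | rfl | rfl
    · exact goal 0 (by ring) (by ring)
    · exact goal 1 (by ring) (by ring)
    · rcases eq_or_ne (q.1 - p.1) 0 with h1 | h1
      · have h2 : q.2 - p.2 ≠ 0 := by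
          intro h2; apply hq; ext
          · linarith [h1]
          · linarith [h2]
        have hx1 : x.1 = p.1 := by
          have : (q.2 - p.2) * (x.1 - p.1) = 0 := by
            linarith [h, mul_eq_zero_of_left h1 (x.2 - p.2)]
          rcases mul_eq_zero.mp this with hc | hc
          · exact absurd hc h2
          · linarith
        exact goal ((x.2 - p.2) / (q.2 - p.2)) (by rw [h1]; simp [hx1]) (by field_simp; ring)
      · refine goal ((x.1 - p.1) / (q.1 - p.1)) (by field_simp; ring) ?_
        field_simp
        linear_combination h

lemma slope_between' (fa ga fb gb θ : ℝ) (hfa : 0 < fa) (hfb : 0 < fb)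
    (hθ0 : 0 < θ) (hθ1 : θ < 1) (hlt : ga/fa < gb/fb) :
    ga/fa < ((1-θ)*ga + θ*gb)/((1-θ)*fa + θ*fb) ∧
      ((1-θ)*ga+θ*gb)/((1-θ)*fa+θ*fb) < gb/fb := by
  have hD : 0 < fa*gb - ga*fb := by rw [div_lt_div_iff₀ hfa hfb] at hlt; linarith
  have hfx : 0 < (1-θ)*fa + θ*fb := by nlinarith
  constructor
  · rw [div_lt_div_iff₀ hfa hfx]; nlinarith
  · rw [div_lt_div_iff₀ hfx hfb]; nlinarith

theorem blocking_aux (P : Finset (ℝ × ℝ)) (n : ℕ) (hn : 3 ≤ n)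
    (hcard : P.card = n)
    (hgen : ∀ p ∈ P, ∀ q ∈ P, ∀ r ∈ P, p ≠ q → p ≠ r → q ≠ r →
      ¬ Collinear ℝ ({p, q, r} : Set (ℝ × ℝ)))
    (Q : Finset (ℝ × ℝ))
    (hblock : ∀ p ∈ P, ∀ q ∈ P, p ≠ q → ∃ r ∈ Q, r ∈ openSegment ℝ p q) :
    2 * n - 3 ≤ Q.card := by
  classical
  -- generic coefficient c so that p ↦ p.1 + c*p.2 is injective on P
  obtain ⟨c, hc⟩ : ∃ c : ℝ, ∀ p ∈ P, ∀ q ∈ P,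
      p.1 + c * p.2 = q.1 + c * q.2 → p = q := by
    obtain ⟨c, hc⟩ := Finset.exists_notMem
      ((P ×ˢ P).image (fun pr => -(pr.1.1 - pr.2.1)/(pr.1.2 - pr.2.2)))
    refine ⟨c, fun p hp q hq hfe => ?_⟩
    rcases eq_or_ne p.2 q.2 with h2 | h2
    · have h1 : p.1 = q.1 := by rw [h2] at hfe; linarith
      exact Prod.ext h1 h2
    · exfalso
      apply hc
      rw [Finset.mem_image]
      refine ⟨(p, q), Finset.mem_product.mpr ⟨hp, hq⟩, ?_⟩
      have hne : p.2 - q.2 ≠ 0 := sub_ne_zero.mpr h2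
      field_simp
      linarith
  have hPne : P.Nonempty := Finset.card_pos.mp (by omega)
  obtain ⟨p₀, hp₀P, hp₀min⟩ := P.exists_min_image (fun p => p.1 + c * p.2) hPne
  set R := P.erase p₀ with hRdef
  set m := n - 1 with hmdef
  have hm : R.card = m := by rw [hRdef, Finset.card_erase_of_mem hp₀P, hcard]
  have hm2 : 2 ≤ m := by omega
  have hRP : ∀ {x}, x ∈ R → x ∈ P := fun hx => Finset.mem_of_mem_erase hx
  have hRne : ∀ {x}, x ∈ R → x ≠ p₀ := fun hx => Finset.ne_of_mem_erase hx
  set F : ℝ × ℝ → ℝ := fun p => (p.1 - p₀.1) + c * (p.2 - p₀.2) with hFdef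
  set G : ℝ × ℝ → ℝ := fun p => p.2 - p₀.2 with hGdef
  set sl : ℝ × ℝ → ℝ := fun p => G p / F p with hsldef
  have hFpos : ∀ q ∈ R, 0 < F q := by
    intro q hq
    have h1 : p₀.1 + c * p₀.2 ≤ q.1 + c * q.2 := hp₀min q (hRP hq)
    have h2 : p₀.1 + c * p₀.2 ≠ q.1 + c * q.2 := by
      intro h; exact (hRne hq) (hc q (hRP hq) p₀ hp₀P h.symm)
    simp only [hFdef]
    have : p₀.1 + c * p₀.2 < q.1 + c * q.2 := lt_of_le_of_ne h1 h2
    nlinarith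
  have hdet : ∀ q ∈ R, ∀ q' ∈ R, q ≠ q' → F q * G q' - G q * F q' ≠ 0 := by
    intro q hq q' hq' hne h0
    apply hgen p₀ hp₀P q (hRP hq) q' (hRP hq') (Ne.symm (hRne hq)) (Ne.symm (hRne hq')) hne
    apply det_collinear' p₀ q q'
    simp only [hFdef, hGdef] at h0
    linear_combination h0
  have hslinj : Set.InjOn sl ↑R := by
    intro q hq q' hq' he
    by_contra hne
    apply hdet q hq q' hq' hne
    have hfq := hFpos q hq
    have hfq' := hFpos q' hq'
    rw [hsldef] at he
    simp only at he
    rw [div_eq_div_iff (ne_of_gt hfq) (ne_of_gt hfq')] at he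
    linarith
  set T := R.image sl with hTdef
  have hT : T.card = m := by rw [hTdef, Finset.card_image_of_injOn hslinj, hm]
  set e := T.orderIsoOfFin hT with hedef
  set σ : Fin m → ℝ := fun i => (e i : ℝ) with hσdef
  have hσmono : StrictMono σ := fun i j hij => Subtype.coe_lt_coe.mpr (e.strictMono hij)
  have hexin : ∀ i : Fin m, ∃ a ∈ (↑R : Set (ℝ × ℝ)), sl a = σ i := by
    intro i
    have hmem : σ i ∈ T := (e i).2
    rw [hTdef, Finset.mem_image] at hmem
    obtain ⟨a, ha, hae⟩ := hmem
    exact ⟨a, ha, hae⟩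
  set q : Fin m → ℝ × ℝ := fun i => Function.invFunOn sl ↑R (σ i) with hqdef
  have hqR : ∀ i, q i ∈ R := fun i => Function.invFunOn_mem (hexin i)
  have hslq : ∀ i, sl (q i) = σ i := fun i => Function.invFunOn_eq (hexin i)
  have hqinj : ∀ i j, q i = q j → i = j := by
    intro i j h
    apply hσmono.injective
    rw [← hslq i, ← hslq j, h]
  -- index maps
  set idx0 : Fin (m - 1) → Fin m := fun j => ⟨j.1, by have := j.2; omega⟩ with hidx0
  set idx1 : Fin (m - 1) → Fin m := fun j => ⟨j.1 + 1, by have := j.2; omega⟩ with hidx1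
  -- the segments
  set A : Fin m ⊕ Fin (m - 1) → (ℝ × ℝ) × (ℝ × ℝ) :=
    Sum.elim (fun i => (p₀, q i)) (fun j => (q (idx0 j), q (idx1 j))) with hAdef
  have hAP : ∀ k, (A k).1 ∈ P ∧ (A k).2 ∈ P ∧ (A k).1 ≠ (A k).2 := by
    intro k
    rcases k with i | j
    · exact ⟨hp₀P, hRP (hqR i), fun h => (hRne (hqR i)) h.symm⟩
    · refine ⟨hRP (hqR (idx0 j)), hRP (hqR (idx1 j)), fun h => ?_⟩
      have := hqinj _ _ h
      simp only [hidx0, hidx1, Fin.mk.injEq] at this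
      omega
  have hbl : ∀ k, ∃ r ∈ Q, r ∈ openSegment ℝ (A k).1 (A k).2 :=
    fun k => hblock _ (hAP k).1 _ (hAP k).2.1 (hAP k).2.2
  choose B hBQ hBseg using hbl
  -- affine behaviour of F and G
  have hFG : ∀ (θ : ℝ) (a b : ℝ × ℝ),
      F ((1 - θ) • a + θ • b) = (1 - θ) * F a + θ * F b ∧
      G ((1 - θ) • a + θ • b) = (1 - θ) * G a + θ * G b := by
    intro θ a b
    constructor <;>
      simp only [hFdef, hGdef, Prod.fst_add, Prod.snd_add, Prod.smul_fst, Prod.smul_snd,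
        smul_eq_mul] <;> ring
  have hFp₀ : F p₀ = 0 := by simp [hFdef]
  have hGp₀ : G p₀ = 0 := by simp [hGdef]
  -- slope of blockers on star segments
  have hstar : ∀ i, sl (B (Sum.inl i)) = σ i := by
    intro i
    have hs := hBseg (Sum.inl i)
    rw [openSegment_eq_image] at hs
    obtain ⟨θ, hθ, hx⟩ := hs
    simp only [hAdef, Sum.elim_inl] at hx
    rw [← hx, hsldef]
    simp only
    rw [(hFG θ p₀ (q i)).1, (hFG θ p₀ (q i)).2, hFp₀, hGp₀]
    have hθ0 : θ ≠ 0 := ne_of_gt hθ.1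
    rw [show (1 - θ) * 0 + θ * F (q i) = θ * F (q i) by ring,
      show (1 - θ) * 0 + θ * G (q i) = θ * G (q i) by ring,
      mul_div_mul_left _ _ hθ0]
    exact hslq i
  -- slope of blockers on path segments
  have hpath : ∀ j, σ (idx0 j) < sl (B (Sum.inr j)) ∧ sl (B (Sum.inr j)) < σ (idx1 j) := by
    intro j
    have hs := hBseg (Sum.inr j)
    rw [openSegment_eq_image] at hs
    obtain ⟨θ, hθ, hx⟩ := hs
    simp only [hAdef, Sum.elim_inr] at hx
    have hlt : σ (idx0 j) < σ (idx1 j) := by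
      apply hσmono
      simp only [hidx0, hidx1, Fin.mk_lt_mk]
      omega
    have hfa := hFpos _ (hqR (idx0 j))
    have hfb := hFpos _ (hqR (idx1 j))
    have hsl_lt : sl (q (idx0 j)) < sl (q (idx1 j)) := by
      rw [hslq, hslq]; exact hlt
    rw [hsldef] at hsl_lt
    simp only at hsl_lt
    have hsb := slope_between' (F (q (idx0 j))) (G (q (idx0 j))) (F (q (idx1 j)))
      (G (q (idx1 j))) θ hfa hfb hθ.1 hθ.2 hsl_lt
    rw [← hx, hsldef]
    simp only
    rw [(hFG θ _ _).1, (hFG θ _ _).2]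
    constructor
    · rw [← hslq (idx0 j), hsldef]; exact hsb.1
    · rw [← hslq (idx1 j), hsldef]; exact hsb.2
  -- injectivity of the blocker assignment
  have hBinj : Function.Injective B := by
    intro k k' he
    rcases k with i | j <;> rcases k' with i' | j'
    · have : σ i = σ i' := by rw [← hstar i, ← hstar i', he]
      rw [hσmono.injective this]
    · exfalso
      have h1 : σ i = sl (B (Sum.inr j')) := by rw [← hstar i, he]
      have h2 := hpath j'
      rw [← h1] at h2
      have l1 : idx0 j' < i := hσmono.lt_iff_lt.mp h2.1
      have l2 : i < idx1 j' := hσmono.lt_iff_lt.mp h2.2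
      simp only [hidx0, hidx1, Fin.lt_def] at l1 l2
      omega
    · exfalso
      have h1 : σ i' = sl (B (Sum.inr j)) := by rw [← hstar i', ← he]
      have h2 := hpath j
      rw [← h1] at h2
      have l1 : idx0 j < i' := hσmono.lt_iff_lt.mp h2.1
      have l2 : i' < idx1 j := hσmono.lt_iff_lt.mp h2.2
      simp only [hidx0, hidx1, Fin.lt_def] at l1 l2
      omega
    · rcases lt_trichotomy j.1 j'.1 with h | h | h
      · exfalso
        have hle : idx1 j ≤ idx0 j' := by
          simp only [hidx0, hidx1, Fin.le_def]; omega
        have := hσmono.monotone hle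
        have h2 := hpath j
        have h3 := hpath j'
        rw [he] at h2
        linarith [h2.2, h3.1]
      · exact congrArg Sum.inr (Fin.ext h)
      · exfalso
        have hle : idx1 j' ≤ idx0 j := by
          simp only [hidx0, hidx1, Fin.le_def]; omega
        have := hσmono.monotone hle
        have h2 := hpath j
        have h3 := hpath j'
        rw [he] at h2
        linarith [h2.1, h3.2]
  -- conclude by counting
  have hcount : (Finset.univ : Finset (Fin m ⊕ Fin (m - 1))).card ≤ Q.card :=
    Finset.card_le_card_of_injOn B (fun k _ => hBQ k) (hBinj.injOn)
  rw [Finset.card_univ, Fintype.card_sum, Fintype.card_fin, Fintype.card_fin] at hcount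
  omega

end




/-- `Q` is a blocking set for the finite planar point set `P`: `Q` is disjoint
from `P` and every open segment joining two distinct points of `P` contains a
point of `Q`. -/
def IsBlockingSet (P Q : Finset (ℝ × ℝ)) : Prop :=
  Disjoint P Q ∧ ∀ p ∈ P, ∀ q ∈ P, p ≠ q → ∃ r ∈ Q, r ∈ openSegment ℝ p q

/-- A finite planar point set is in general position if no three of its points
are collinear. -/
def GenPos (P : Finset (ℝ × ℝ)) : Prop :=
  ∀ p ∈ P, ∀ q ∈ P, ∀ r ∈ P, p ≠ q → p ≠ r → q ≠ r →
    ¬ Collinear ℝ ({p, q, r} : Set (ℝ × ℝ))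

/-- For any set of `n ≥ 3` points in general position in the plane, every
blocking set has size at least `2n - 3`. -/
theorem blocking_set_lower_bound (P : Finset (ℝ × ℝ)) (n : ℕ) (hn : 3 ≤ n)
    (hcard : P.card = n) (hgen : GenPos P) :
    ∀ Q : Finset (ℝ × ℝ), IsBlockingSet P Q → 2 * n - 3 ≤ Q.card := by
  intro Q hQ
  exact blocking_aux P n hn hcard hgen Q hQ.2
end

section
/- In every k-blocked point set, at most three points are collinear. -/
/-- A colouring `c` of a finite planar point set `P` with `k` colours is
`k`-blocked if two distinct points of `P` receive different colours exactly when
they are mutually visible, i.e. when the open segment between them contains no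
other point of `P`. -/
def KBlocked (k : ℕ) (P : Finset (ℝ × ℝ)) (c : (ℝ × ℝ) → Fin k) : Prop :=
  ∀ p ∈ P, ∀ q ∈ P, p ≠ q →
    ((∀ r ∈ P, r ∉ openSegment ℝ p q) ↔ c p ≠ c q)

theorem kb_seg_mem (v p0 : ℝ × ℝ) (s t u : ℝ) (hs : s < u) (ht : u < t) :
    u • v + p0 ∈ openSegment ℝ (s • v + p0) (t • v + p0) := by
  have hts : (0:ℝ) < t - s := by linarith
  refine ⟨(t - u)/(t - s), (u - s)/(t - s), div_pos (by linarith) hts,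
    div_pos (by linarith) hts, ?_, ?_⟩
  · field_simp; ring
  · have hts' : t - s ≠ 0 := by linarith
    match_scalars <;> field_simp <;> ring

theorem kb_seg_param (v p0 : ℝ × ℝ) (s t : ℝ) (r : ℝ × ℝ)
    (hr : r ∈ openSegment ℝ (s • v + p0) (t • v + p0)) (hst : s < t) :
    ∃ u : ℝ, s < u ∧ u < t ∧ r = u • v + p0 := by
  obtain ⟨a, b, ha, hb, hab, heq⟩ := hr
  have ha' : a = 1 - b := by linarith
  subst ha'
  have h1 : 0 < b * (t - s) := mul_pos hb (by linarith)
  have h2 : 0 < (1 - b) * (t - s) := mul_pos ha (by linarith)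
  refine ⟨(1 - b) * s + b * t, by nlinarith, by nlinarith, ?_⟩
  rw [← heq]; match_scalars <;> ring

/-- In every `k`-blocked point set, at most three points are collinear: no four
points of the set lie on a common line. -/
theorem kBlocked_at_most_three_collinear (k : ℕ) (P : Finset (ℝ × ℝ))
    (c : (ℝ × ℝ) → Fin k) (h : KBlocked k P c) :
    ∀ S ⊆ P, S.card = 4 → ¬ Collinear ℝ (↑S : Set (ℝ × ℝ)) := by
  classical
  intro S hSP hS4 hcol
  rw [collinear_iff_exists_forall_eq_smul_vadd] at hcol
  obtain ⟨p0, v, hv⟩ := hcol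
  -- v ≠ 0
  have hv0 : v ≠ 0 := by
    rintro rfl
    have : S ⊆ {p0} := by
      intro x hx
      obtain ⟨t, ht⟩ := hv x (by exact_mod_cast hx)
      simp [ht]
    have := Finset.card_le_card this
    simp [hS4] at this
  have huniq : ∀ s t : ℝ, s • v + p0 = t • v + p0 → s = t := by
    intro s t hst
    have : s • v = t • v := by
      have := congrArg (fun x => x - p0) hst
      simpa using this
    exact smul_left_injective ℝ hv0 this
  -- points of P on the line
  set T : Finset (ℝ × ℝ) := P.filter (fun x => ∃ t : ℝ, x = t • v + p0) with hT
  have hST : S ⊆ T := by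
    intro x hx
    refine Finset.mem_filter.mpr ⟨hSP hx, ?_⟩
    obtain ⟨t, ht⟩ := hv x (by exact_mod_cast hx)
    exact ⟨t, by simpa [vadd_eq_add] using ht⟩
  -- parameter function
  set g : (ℝ × ℝ) → ℝ := fun x =>
    if hx : ∃ t : ℝ, x = t • v + p0 then hx.choose else 0 with hg
  have hgspec : ∀ x ∈ T, x = g x • v + p0 := by
    intro x hx
    have hex := (Finset.mem_filter.mp hx).2
    simp only [hg, dif_pos hex]
    exact hex.choose_spec
  have hgval : ∀ x ∈ T, ∀ t : ℝ, x = t • v + p0 → g x = t := by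
    intro x hx t ht
    exact huniq _ _ ((hgspec x hx).symm.trans ht)
  set U : Finset ℝ := T.image g with hU
  have hUmem : ∀ u ∈ U, u • v + p0 ∈ P ∧ g (u • v + p0) = u := by
    intro u hu
    obtain ⟨x, hx, rfl⟩ := Finset.mem_image.mp hu
    have := hgspec x hx
    constructor
    · rw [← this]; exact (Finset.mem_filter.mp hx).1
    · rw [← this]
  have hUcard : 4 ≤ U.card := by
    have : U.card = T.card := Finset.card_image_of_injOn (by
      intro x hx y hy hxy
      rw [hgspec x hx, hgspec y hy, hxy])
    rw [this]
    calc 4 = S.card := hS4.symm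
    _ ≤ T.card := Finset.card_le_card hST
  -- pick the four parameters
  have hUne : U.Nonempty := Finset.card_pos.mp (by omega)
  set d' := U.max' hUne with hd'
  have hdU : d' ∈ U := U.max'_mem hUne
  set U1 := U.erase d' with hU1
  have hU1card : 3 ≤ U1.card := by
    have h1 : U1.card = U.card - 1 := by rw [hU1]; exact Finset.card_erase_of_mem hdU
    omega
  have hU1ne : U1.Nonempty := Finset.card_pos.mp (by omega)
  set c' := U1.max' hU1ne with hc'
  have hcU1 : c' ∈ U1 := U1.max'_mem hU1ne
  set U2 := U1.erase c' with hU2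
  have hU2card : 2 ≤ U2.card := by
    have h1 : U2.card = U1.card - 1 := by rw [hU2]; exact Finset.card_erase_of_mem hcU1
    omega
  have hU2ne : U2.Nonempty := Finset.card_pos.mp (by omega)
  set a' := U2.min' hU2ne with ha'
  have haU2 : a' ∈ U2 := U2.min'_mem hU2ne
  set U3 := U2.erase a' with hU3
  have hU3card : 1 ≤ U3.card := by
    have h1 : U3.card = U2.card - 1 := by rw [hU3]; exact Finset.card_erase_of_mem haU2
    omega
  obtain ⟨b', hbU3⟩ := Finset.card_pos.mp (by omega : 0 < U3.card)
  have hbU2 : b' ∈ U2 := Finset.mem_of_mem_erase hbU3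
  have hcU : c' ∈ U := Finset.mem_of_mem_erase hcU1
  have haU1 : a' ∈ U1 := Finset.mem_of_mem_erase haU2
  have hbU1 : b' ∈ U1 := Finset.mem_of_mem_erase hbU2
  have haU : a' ∈ U := Finset.mem_of_mem_erase haU1
  have hbU : b' ∈ U := Finset.mem_of_mem_erase hbU1
  have hab : a' < b' :=
    lt_of_le_of_ne (U2.min'_le b' hbU2) (Ne.symm (Finset.ne_of_mem_erase hbU3))
  have hbc : b' < c' :=
    lt_of_le_of_ne (U1.le_max' b' hbU1) (Finset.ne_of_mem_erase hbU2)
  have hcd : c' < d' :=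
    lt_of_le_of_ne (U.le_max' c' hcU) (Finset.ne_of_mem_erase hcU1)
  -- the four points
  set pa := a' • v + p0
  set pb := b' • v + p0
  set pc := c' • v + p0
  set pd := d' • v + p0
  have hpa : pa ∈ P := (hUmem a' haU).1
  have hpb : pb ∈ P := (hUmem b' hbU).1
  have hpc : pc ∈ P := (hUmem c' hcU).1
  have hpd : pd ∈ P := (hUmem d' hdU).1
  have hne : ∀ s t : ℝ, s ≠ t → s • v + p0 ≠ t • v + p0 :=
    fun s t hst heq => hst (huniq s t heq)
  -- pa and pc get the same colour (blocked by pb)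
  have hac : c pa = c pc := by
    by_contra hco
    have := (h pa hpa pc hpc (hne _ _ (hab.trans hbc).ne)).mpr hco
    exact this pb hpb (kb_seg_mem v p0 a' c' b' hab hbc)
  -- pa and pd get the same colour (blocked by pb)
  have had : c pa = c pd := by
    by_contra hco
    have := (h pa hpa pd hpd (hne _ _ (by linarith))).mpr hco
    exact this pb hpb (kb_seg_mem v p0 a' d' b' hab (by linarith))
  -- pc and pd are mutually visible, hence differently coloured
  have hvis : ∀ r ∈ P, r ∉ openSegment ℝ pc pd := by
    intro r hrP hr
    obtain ⟨u, hcu, hud, rfl⟩ := kb_seg_param v p0 c' d' r hr hcd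
    have hrT : u • v + p0 ∈ T :=
      Finset.mem_filter.mpr ⟨hrP, u, rfl⟩
    have huU : u ∈ U := by
      have := hgval _ hrT u rfl
      rw [← this]
      exact Finset.mem_image_of_mem g hrT
    have huU1 : u ∈ U1 := Finset.mem_erase.mpr ⟨by linarith, huU⟩
    have := U1.le_max' u huU1
    linarith
  have hcdne : c pc ≠ c pd :=
    (h pc hpc pd hpd (hne _ _ hcd.ne)).mp hvis
  exact hcdne (hac.symm.trans had)
end

section
/- Every 2-blocked point set has at most 3 points. -/
private lemma finTwo_trans : ∀ a b d : Fin 2, a ≠ b → b ≠ d → a = d := by decide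

private lemma convex_strict {u v a b : ℝ} (ha : 0 < a) (hb : 0 < b)
    (hab : a + b = 1) (huv : u < v) : u < a * u + b * v ∧ a * u + b * v < v := by
  have k1 : a * u + b * v - u = b * (v - u) := by linear_combination u * hab
  have k2 : v - (a * u + b * v) = a * (v - u) := by linear_combination (-v) * hab
  have m1 : 0 < b * (v - u) := mul_pos hb (sub_pos.mpr huv)
  have m2 : 0 < a * (v - u) := mul_pos ha (sub_pos.mpr huv)
  constructor <;> linarith

/-- Every `2`-blocked point set has at most `3` points. -/
theorem two_blocked_card_le_three (P : Finset (ℝ × ℝ)) (c : (ℝ × ℝ) → Fin 2)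
    (h : KBlocked 2 P c) : P.card ≤ 3 := by
  by_contra hcard
  push_neg at hcard
  -- choose a slope t making the projection injective on P
  obtain ⟨t, ht⟩ := Infinite.exists_notMem_finset
    ((P ×ˢ P).image (fun pq => (pq.2.1 - pq.1.1) / (pq.1.2 - pq.2.2)))
  set ℓ : ℝ × ℝ → ℝ := fun p => p.1 + t * p.2 with hℓdef
  have hinj : ∀ p ∈ P, ∀ q ∈ P, ℓ p = ℓ q → p = q := by
    intro p hp q hq he
    by_contra hne
    simp only [hℓdef] at he
    rcases eq_or_ne p.2 q.2 with h2 | h2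
    · rw [h2] at he
      exact hne (Prod.ext (by linarith) h2)
    · apply ht
      refine Finset.mem_image.mpr ⟨(p, q), Finset.mem_product.mpr ⟨hp, hq⟩, ?_⟩
      have hsub : p.2 - q.2 ≠ 0 := sub_ne_zero.mpr h2
      field_simp
      nlinarith [he]
  -- projection of a point of an open segment is strictly between
  have hseg : ∀ {x y r : ℝ × ℝ}, r ∈ openSegment ℝ x y → ℓ x < ℓ y →
      ℓ x < ℓ r ∧ ℓ r < ℓ y := by
    rintro x y r ⟨a, b, ha, hb, hab, he⟩ hxy
    subst he
    simp only [hℓdef, Prod.fst_add, Prod.snd_add, Prod.smul_fst, Prod.smul_snd,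
      smul_eq_mul] at *
    have heq : a * x.1 + b * y.1 + t * (a * x.2 + b * y.2)
        = a * (x.1 + t * x.2) + b * (y.1 + t * y.2) := by ring
    rw [heq]
    exact convex_strict ha hb hab hxy
  -- extract the four points with smallest ℓ-values
  set V := P.image ℓ with hVdef
  have hVcard : 4 ≤ V.card := by
    rw [hVdef, Finset.card_image_of_injOn (fun p hp q hq => hinj p hp q hq)]
    omega
  have hne1 : V.Nonempty := Finset.card_pos.mp (by omega)
  set v1 := V.min' hne1 with hv1def
  have hv1V : v1 ∈ V := V.min'_mem hne1
  have hec1 : (V.erase v1).card = V.card - 1 := Finset.card_erase_of_mem hv1V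
  have hne2 : (V.erase v1).Nonempty := Finset.card_pos.mp (by omega)
  set v2 := (V.erase v1).min' hne2 with hv2def
  have hv2e : v2 ∈ V.erase v1 := Finset.min'_mem _ hne2
  have hv2V : v2 ∈ V := Finset.mem_of_mem_erase hv2e
  set V2 := (V.erase v1).erase v2 with hV2def
  have hec2 : V2.card = (V.erase v1).card - 1 := Finset.card_erase_of_mem hv2e
  have hne3 : V2.Nonempty := Finset.card_pos.mp (by omega)
  set v3 := V2.min' hne3 with hv3def
  have hv3e : v3 ∈ V2 := V2.min'_mem hne3
  have hv3V : v3 ∈ V := Finset.mem_of_mem_erase (Finset.mem_of_mem_erase hv3e)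
  set V3 := V2.erase v3 with hV3def
  have hec3 : V3.card = V2.card - 1 := Finset.card_erase_of_mem hv3e
  have hne4 : V3.Nonempty := Finset.card_pos.mp (by omega)
  set v4 := V3.min' hne4 with hv4def
  have hv4e : v4 ∈ V3 := V3.min'_mem hne4
  have hv4V : v4 ∈ V :=
    Finset.mem_of_mem_erase (Finset.mem_of_mem_erase (Finset.mem_of_mem_erase hv4e))
  -- order facts
  have H2 : ∀ v ∈ V, v1 < v → v2 ≤ v := by
    intro v hv hlt
    exact Finset.min'_le _ v (Finset.mem_erase.mpr ⟨ne_of_gt hlt, hv⟩)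
  have h12 : v1 < v2 :=
    lt_of_le_of_ne (Finset.min'_le _ v2 hv2V) (Ne.symm (Finset.mem_erase.mp hv2e).1)
  have H3 : ∀ v ∈ V, v2 < v → v3 ≤ v := by
    intro v hv hlt
    refine Finset.min'_le _ v (Finset.mem_erase.mpr ⟨ne_of_gt hlt,
      Finset.mem_erase.mpr ⟨ne_of_gt (h12.trans hlt), hv⟩⟩)
  have h23 : v2 < v3 := by
    have h1 : v3 ∈ V.erase v1 := Finset.mem_of_mem_erase hv3e
    exact lt_of_le_of_ne (Finset.min'_le _ v3 h1) (Ne.symm (Finset.mem_erase.mp hv3e).1)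
  have H4 : ∀ v ∈ V, v3 < v → v4 ≤ v := by
    intro v hv hlt
    refine Finset.min'_le _ v (Finset.mem_erase.mpr ⟨ne_of_gt hlt,
      Finset.mem_erase.mpr ⟨ne_of_gt (h23.trans hlt),
        Finset.mem_erase.mpr ⟨ne_of_gt (h12.trans (h23.trans hlt)), hv⟩⟩⟩)
  have h34 : v3 < v4 := by
    have h1 : v4 ∈ V2 := Finset.mem_of_mem_erase hv4e
    exact lt_of_le_of_ne (Finset.min'_le _ v4 h1) (Ne.symm (Finset.mem_erase.mp hv4e).1)
  -- points realizing the values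
  obtain ⟨p1, hp1, hℓ1⟩ := Finset.mem_image.mp hv1V
  obtain ⟨p2, hp2, hℓ2⟩ := Finset.mem_image.mp hv2V
  obtain ⟨p3, hp3, hℓ3⟩ := Finset.mem_image.mp hv3V
  obtain ⟨p4, hp4, hℓ4⟩ := Finset.mem_image.mp hv4V
  have hmemV : ∀ r ∈ P, ℓ r ∈ V := fun r hr => Finset.mem_image_of_mem ℓ hr
  have hne12 : p1 ≠ p2 := by rintro rfl; rw [hℓ1] at hℓ2; exact absurd hℓ2 (ne_of_lt h12)
  have hne23 : p2 ≠ p3 := by rintro rfl; rw [hℓ2] at hℓ3; exact absurd hℓ3 (ne_of_lt h23)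
  have hne34 : p3 ≠ p4 := by rintro rfl; rw [hℓ3] at hℓ4; exact absurd hℓ4 (ne_of_lt h34)
  have hne13 : p1 ≠ p3 := by
    rintro rfl; rw [hℓ1] at hℓ3; exact absurd hℓ3 (ne_of_lt (h12.trans h23))
  have hne24 : p2 ≠ p4 := by
    rintro rfl; rw [hℓ2] at hℓ4; exact absurd hℓ4 (ne_of_lt (h23.trans h34))
  have hne14 : p1 ≠ p4 := by
    rintro rfl; rw [hℓ1] at hℓ4
    exact absurd hℓ4 (ne_of_lt ((h12.trans h23).trans h34))
  -- consecutive points are visible, hence differently coloured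
  have vis12 : c p1 ≠ c p2 := by
    apply (h p1 hp1 p2 hp2 hne12).mp
    intro r hr hrseg
    have hb := hseg hrseg (by rw [hℓ1, hℓ2]; exact h12)
    rw [hℓ1, hℓ2] at hb
    exact absurd (H2 (ℓ r) (hmemV r hr) hb.1) (not_le.mpr hb.2)
  have vis23 : c p2 ≠ c p3 := by
    apply (h p2 hp2 p3 hp3 hne23).mp
    intro r hr hrseg
    have hb := hseg hrseg (by rw [hℓ2, hℓ3]; exact h23)
    rw [hℓ2, hℓ3] at hb
    exact absurd (H3 (ℓ r) (hmemV r hr) hb.1) (not_le.mpr hb.2)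
  have vis34 : c p3 ≠ c p4 := by
    apply (h p3 hp3 p4 hp4 hne34).mp
    intro r hr hrseg
    have hb := hseg hrseg (by rw [hℓ3, hℓ4]; exact h34)
    rw [hℓ3, hℓ4] at hb
    exact absurd (H4 (ℓ r) (hmemV r hr) hb.1) (not_le.mpr hb.2)
  have hc13 : c p1 = c p3 := finTwo_trans _ _ _ vis12 vis23
  have hc24 : c p2 = c p4 := finTwo_trans _ _ _ vis23 vis34
  -- p1, p3 same colour : blocked, and the blocker must be p2
  have hm2 : p2 ∈ openSegment ℝ p1 p3 := by
    have hnv : ¬ (∀ r ∈ P, r ∉ openSegment ℝ p1 p3) := by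
      intro hv
      exact (h p1 hp1 p3 hp3 hne13).mp hv hc13
    push_neg at hnv
    obtain ⟨r, hrP, hrseg⟩ := hnv
    have hb := hseg hrseg (by rw [hℓ1, hℓ3]; exact h12.trans h23)
    rw [hℓ1, hℓ3] at hb
    have h2le : v2 ≤ ℓ r := H2 (ℓ r) (hmemV r hrP) hb.1
    have h2eq : ℓ r = v2 := by
      rcases eq_or_lt_of_le h2le with he | hlt
      · exact he.symm
      · exact absurd (H3 (ℓ r) (hmemV r hrP) hlt) (not_le.mpr hb.2)
    have : r = p2 := hinj r hrP p2 hp2 (by rw [hℓ2, h2eq])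
    rwa [this] at hrseg
  -- p2, p4 same colour : blocked, and the blocker must be p3
  have hm3 : p3 ∈ openSegment ℝ p2 p4 := by
    have hnv : ¬ (∀ r ∈ P, r ∉ openSegment ℝ p2 p4) := by
      intro hv
      exact (h p2 hp2 p4 hp4 hne24).mp hv hc24
    push_neg at hnv
    obtain ⟨r, hrP, hrseg⟩ := hnv
    have hb := hseg hrseg (by rw [hℓ2, hℓ4]; exact h23.trans h34)
    rw [hℓ2, hℓ4] at hb
    have h3le : v3 ≤ ℓ r := H3 (ℓ r) (hmemV r hrP) hb.1
    have h3eq : ℓ r = v3 := by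
      rcases eq_or_lt_of_le h3le with he | hlt
      · exact he.symm
      · exact absurd (H4 (ℓ r) (hmemV r hrP) hlt) (not_le.mpr hb.2)
    have : r = p3 := hinj r hrP p3 hp3 (by rw [hℓ3, h3eq])
    rwa [this] at hrseg
  -- hence p2 lies on the open segment p1 p4, but c p1 ≠ c p4 : contradiction
  have hdiff14 : c p1 ≠ c p4 := by rw [hc13]; exact vis34
  obtain ⟨a, b, ha, hb, hab, he2⟩ := hm2
  obtain ⟨a', b', ha', hb', hab', he3⟩ := hm3
  have e1 : a * p1.1 + b * p3.1 = p2.1 := by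
    have := congrArg Prod.fst he2; simpa using this
  have e2 : a * p1.2 + b * p3.2 = p2.2 := by
    have := congrArg Prod.snd he2; simpa using this
  have e3 : a' * p2.1 + b' * p4.1 = p3.1 := by
    have := congrArg Prod.fst he3; simpa using this
  have e4 : a' * p2.2 + b' * p4.2 = p3.2 := by
    have := congrArg Prod.snd he3; simpa using this
  have hlam : (0:ℝ) < a + b * b' := by positivity
  have hlamne : a + b * b' ≠ 0 := ne_of_gt hlam
  have hmem14 : p2 ∈ openSegment ℝ p1 p4 := by
    refine ⟨a / (a + b * b'), (b * b') / (a + b * b'), by positivity, by positivity,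
      by field_simp, ?_⟩
    have key1 : (a + b * b') * p2.1 = a * p1.1 + (b * b') * p4.1 := by
      linear_combination -e1 - b * e3 + p2.1 * hab + b * p2.1 * hab'
    have key2 : (a + b * b') * p2.2 = a * p1.2 + (b * b') * p4.2 := by
      linear_combination -e2 - b * e4 + p2.2 * hab + b * p2.2 * hab'
    apply Prod.ext
    · simp only [Prod.fst_add, Prod.smul_fst, smul_eq_mul]
      field_simp
      linarith [key1]
    · simp only [Prod.snd_add, Prod.smul_snd, smul_eq_mul]
      field_simp
      linarith [key2]
  exact (h p1 hp1 p4 hp4 hne14).mpr hdiff14 p2 hp2 hmem14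
end

section
/- For every positive integer k ≥ 3 there exists a smallest integer g(k) such that any set of at least g(k) points in the plane in general position contains k points that are the vertices of a convex polygon (Erdős–Szekeres theorem). -/
/-- A finite planar point set is in (strictly) convex position if no point of it
lies in the convex hull of the remaining points; such points are the vertices of
a convex polygon. -/
def ConvexPos (S : Finset (ℝ × ℝ)) : Prop :=
  ∀ p ∈ S, p ∉ convexHull ℝ (↑(S.erase p) : Set (ℝ × ℝ))

namespace ESaux

noncomputable def slope (y : ℝ → ℝ) (a b : ℝ) : ℝ := (y b - y a) / (b - a)

lemma slope_combo (y : ℝ → ℝ) {a b c : ℝ} (hab : a < b) (hbc : b < c) :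
    (c - a) * slope y a c = (b - a) * slope y a b + (c - b) * slope y b c := by
  have h1 : b - a ≠ 0 := by linarith
  have h2 : c - b ≠ 0 := by linarith
  have h3 : c - a ≠ 0 := by linarith
  rw [ESaux.slope, ESaux.slope, ESaux.slope]
  field_simp
  ring

lemma slope_lt_left (y : ℝ → ℝ) {a b c : ℝ} (hab : a < b) (hbc : b < c) :
    slope y a b < slope y b c ↔ slope y a b < slope y a c := by
  have h := slope_combo y hab hbc
  constructor <;> intro h' <;> nlinarith

def IsCup (y : ℝ → ℝ) (S : Finset ℝ) : Prop :=
  ∀ a ∈ S, ∀ b ∈ S, ∀ c ∈ S, a < b → b < c → slope y a b < slope y b c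

lemma slope_lt_right (y : ℝ → ℝ) {a b c : ℝ} (hab : a < b) (hbc : b < c) :
    slope y a b < slope y b c ↔ slope y a c < slope y b c := by
  have h := slope_combo y hab hbc
  constructor <;> intro h' <;> nlinarith

lemma slope_neg (y : ℝ → ℝ) (a b : ℝ) :
    slope (fun t => -(y t)) a b = -(slope y a b) := by
  simp [slope, neg_div, neg_sub]
  ring_nf

lemma cup_insert_max {y : ℝ → ℝ} {S : Finset ℝ} {p e q : ℝ}
    (hcup : IsCup y S) (he : e ∈ S) (hmax : ∀ s ∈ S, s ≤ e)
    (hp : p ∈ S) (hpe : p < e) (hp2 : ∀ s ∈ S, s ≠ e → s ≤ p)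
    (hq : e < q) (hslope : slope y p e < slope y e q) :
    IsCup y (insert q S) := by
  have key : ∀ a ∈ S, a < e → slope y a e < slope y e q := by
    intro a ha hae
    rcases eq_or_lt_of_le (hp2 a ha (ne_of_lt hae)) with h | h
    · rw [h]; exact hslope
    · have h1 := hcup a ha p hp e he h hpe
      have h2 : slope y a e < slope y p e := (slope_lt_right y h hpe).mp h1
      linarith
  have hlt : ∀ z ∈ S, z < q := fun z hz => lt_of_le_of_lt (hmax z hz) hq
  intro x hx b hb c hc hxb hbc
  rcases Finset.mem_insert.mp hc with hcq | hcS
  · have hbS : b ∈ S := by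
      rcases Finset.mem_insert.mp hb with hbq | h
      · exfalso; rw [hbq, hcq] at hbc; exact lt_irrefl _ hbc
      · exact h
    have hxS : x ∈ S := by
      rcases Finset.mem_insert.mp hx with hxq | h
      · exfalso; have := hlt b hbS; rw [hxq] at hxb; linarith
      · exact h
    rw [hcq]
    rcases eq_or_lt_of_le (hmax b hbS) with hbe | hbe
    · rw [hbe]; exact key x hxS (hbe ▸ hxb)
    · have h1 := hcup x hxS b hbS e he hxb hbe
      have h2 := key b hbS hbe
      have h3 : slope y b e < slope y b q := (slope_lt_left y hbe hq).mp h2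
      linarith
  · have hbS : b ∈ S := by
      rcases Finset.mem_insert.mp hb with hbq | h
      · exfalso; have := hlt c hcS; rw [hbq] at hbc; linarith
      · exact h
    have hxS : x ∈ S := by
      rcases Finset.mem_insert.mp hx with hxq | h
      · exfalso; have := hlt b hbS; rw [hxq] at hxb; linarith
      · exact h
    exact hcup x hxS b hbS c hcS hxb hbc

lemma cup_insert_min {y : ℝ → ℝ} {S : Finset ℝ} {p e d : ℝ}
    (hcup : IsCup y S) (he : e ∈ S) (hmin : ∀ s ∈ S, e ≤ s)
    (hd : d ∈ S) (hed : e < d) (hd2 : ∀ s ∈ S, s ≠ e → d ≤ s)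
    (hp : p < e) (hslope : slope y p e < slope y e d) :
    IsCup y (insert p S) := by
  have key : ∀ c ∈ S, e < c → slope y p e < slope y e c := by
    intro c hc hec
    rcases eq_or_lt_of_le (hd2 c hc (ne_of_gt hec)) with h | h
    · rw [← h]; exact hslope
    · have h1 := hcup e he d hd c hc hed h
      have h2 : slope y e d < slope y e c := (slope_lt_left y hed h).mp h1
      linarith
  have hlt : ∀ z ∈ S, p < z := fun z hz => lt_of_lt_of_le hp (hmin z hz)
  intro x hx b hb c hc hxb hbc
  rcases Finset.mem_insert.mp hx with hxp | hxS
  · have hbS : b ∈ S := by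
      rcases Finset.mem_insert.mp hb with hbp | h
      · exfalso; rw [hxp, hbp] at hxb; exact lt_irrefl _ hxb
      · exact h
    have hcS : c ∈ S := by
      rcases Finset.mem_insert.mp hc with hcp | h
      · exfalso; have := hlt b hbS; rw [hcp] at hbc; linarith
      · exact h
    rw [hxp]
    rcases eq_or_lt_of_le (hmin b hbS) with hbe | hbe
    · rw [← hbe]; exact key c hcS (hbe ▸ hbc)
    · have h1 := hcup e he b hbS c hcS hbe hbc
      have h2 := key b hbS hbe
      have h3 : slope y p b < slope y e b :=
        (slope_lt_right y hp hbe).mp h2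
      linarith [(slope_lt_left y hbe hbc).mp h1,
        (slope_lt_right y hbe hbc).mp h1]
  · have hbS : b ∈ S := by
      rcases Finset.mem_insert.mp hb with hbp | h
      · exfalso; have := hlt x hxS; rw [hbp] at hxb; linarith
      · exact h
    have hcS : c ∈ S := by
      rcases Finset.mem_insert.mp hc with hcp | h
      · exfalso; have := hlt b hbS; rw [hcp] at hbc; linarith
      · exact h
    exact hcup x hxS b hbS c hcS hxb hbc

lemma two_cup (y : ℝ → ℝ) {X : Finset ℝ} (h : 2 ≤ X.card) :
    ∃ S ⊆ X, S.card = 2 ∧ IsCup y S := by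
  obtain ⟨u, hu, v, hv, huv⟩ := Finset.one_lt_card.mp h
  refine ⟨{u, v}, ?_, ?_, ?_⟩
  · intro z hz; rcases Finset.mem_insert.mp hz with rfl | hz
    · exact hu
    · rw [Finset.mem_singleton.mp hz]; exact hv
  · rw [Finset.card_insert_of_notMem (by simp [huv]), Finset.card_singleton]
  · intro a ha b hb c hc hab hbc
    have hm : ∀ z ∈ ({u, v} : Finset ℝ), z = u ∨ z = v := by
      intro z hz; rcases Finset.mem_insert.mp hz with rfl | hz
      · exact Or.inl rfl
      · exact Or.inr (Finset.mem_singleton.mp hz)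
    rcases hm a ha with rfl | rfl <;> rcases hm b hb with rfl | rfl <;>
      rcases hm c hc with rfl | rfl <;> linarith


theorem cupcap : ∀ n a b : ℕ, ∀ X : Finset ℝ, ∀ y : ℝ → ℝ, a + b ≤ n →
    (∀ p ∈ X, ∀ q ∈ X, ∀ r ∈ X, p < q → q < r → slope y p q ≠ slope y q r) →
    Nat.choose (a + b) a + 1 ≤ X.card →
    (∃ S ⊆ X, S.card = a + 2 ∧ IsCup y S) ∨
      (∃ S ⊆ X, S.card = b + 2 ∧ IsCup (fun t => -(y t)) S) := by
  intro n
  induction n with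
  | zero =>
    intro a b X y hn _ hcard
    obtain rfl : a = 0 := by omega
    obtain rfl : b = 0 := by omega
    exact Or.inl (by simpa using two_cup y (by simpa using hcard))
  | succ n ih =>
    intro a b X y hn hgen hcard
    classical
    rcases Nat.eq_zero_or_pos a with rfl | ha
    · exact Or.inl (by simpa using two_cup y (by simp at hcard; omega))
    rcases Nat.eq_zero_or_pos b with rfl | hb
    · exact Or.inr (by simpa using two_cup (fun t => -(y t)) (by simp at hcard; omega))
    obtain ⟨a', rfl⟩ : ∃ a', a = a' + 1 := ⟨a - 1, by omega⟩
    obtain ⟨b', rfl⟩ : ∃ b', b = b' + 1 := ⟨b - 1, by omega⟩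
    set a := a' + 1 with hadef
    set b := b' + 1 with hbdef
    -- the set of right endpoints of (a+1)-point cups
    set E : Finset ℝ := X.filter (fun e =>
      ∃ C : Finset ℝ, C ⊆ X ∧ C.card = a + 1 ∧ IsCup y C ∧ e ∈ C ∧ ∀ s ∈ C, s ≤ e) with hEdef
    have hEX : E ⊆ X := Finset.filter_subset _ _
    have hgenE : ∀ Z : Finset ℝ, Z ⊆ X →
        ∀ p ∈ Z, ∀ q ∈ Z, ∀ r ∈ Z, p < q → q < r → slope y p q ≠ slope y q r :=
      fun Z hZ p hp q hq r hr h1 h2 => hgen p (hZ hp) q (hZ hq) r (hZ hr) h1 h2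
    have hsplit : (X \ E).card + E.card = X.card :=
      Finset.card_sdiff_add_card_eq_card hEX
    rcases le_or_gt (X \ E).card (Nat.choose (a' + b) a') with hle | hlt
    · -- E is big
      have hEcard : Nat.choose (a + b') a + 1 ≤ E.card := by
        have hp : Nat.choose (a + b) a = Nat.choose (a' + b) a' + Nat.choose (a + b') a := by
          rw [hadef, hbdef, show a' + 1 + (b' + 1) = (a' + (b' + 1)) + 1 by omega,
            Nat.choose_succ_succ, show a' + (b' + 1) = a' + 1 + b' by omega]
        omega
      have := ih a b' E y (by omega) (hgenE E hEX) hEcard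
      rcases this with ⟨S, hSE, hScard, hScup⟩ | ⟨D, hDE, hDcard, hDcap⟩
      · exact Or.inl ⟨S, hSE.trans hEX, hScard, hScup⟩
      · -- D is a cap of size b + 1 inside E
        have hDne : D.Nonempty := Finset.card_pos.mp (by omega)
        set e := D.min' hDne with hedef
        have heD : e ∈ D := D.min'_mem hDne
        have hemin : ∀ s ∈ D, e ≤ s := fun s hs => D.min'_le s hs
        have heE : e ∈ E := hDE heD
        obtain ⟨C, hCX, hCcard, hCcup, heC, hCmax⟩ := (Finset.mem_filter.mp heE).2
        have hCne : (C.erase e).Nonempty := by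
          apply Finset.card_pos.mp
          rw [Finset.card_erase_of_mem heC]
          omega
        set p := (C.erase e).max' hCne with hpdef
        have hpC' : p ∈ C.erase e := (C.erase e).max'_mem hCne
        have hpC : p ∈ C := Finset.mem_of_mem_erase hpC'
        have hpe : p < e :=
          lt_of_le_of_ne (hCmax p hpC) (Finset.ne_of_mem_erase hpC')
        have hp2 : ∀ s ∈ C, s ≠ e → s ≤ p := fun s hs hse =>
          (C.erase e).le_max' s (Finset.mem_erase.mpr ⟨hse, hs⟩)
        have hDne' : (D.erase e).Nonempty := by
          apply Finset.card_pos.mp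
          rw [Finset.card_erase_of_mem heD]
          omega
        set d := (D.erase e).min' hDne' with hddef
        have hdD' : d ∈ D.erase e := (D.erase e).min'_mem hDne'
        have hdD : d ∈ D := Finset.mem_of_mem_erase hdD'
        have hed : e < d :=
          lt_of_le_of_ne (hemin d hdD) (Ne.symm (Finset.ne_of_mem_erase hdD'))
        have hd2 : ∀ s ∈ D, s ≠ e → d ≤ s := fun s hs hse =>
          (D.erase e).min'_le s (Finset.mem_erase.mpr ⟨hse, hs⟩)
        have hne : slope y p e ≠ slope y e d :=
          hgen p (hCX hpC) e (hCX heC) d (hEX (hDE hdD)) hpe hed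
        rcases lt_or_gt_of_ne hne with hs | hs
        · -- extend the cup C by d
          have hdC : d ∉ C := fun h => absurd (lt_of_le_of_lt (hCmax d h) hed) (lt_irrefl _)
          refine Or.inl ⟨insert d C, ?_, ?_, ?_⟩
          · intro z hz
            rcases Finset.mem_insert.mp hz with rfl | hz
            · exact hEX (hDE hdD)
            · exact hCX hz
          · rw [Finset.card_insert_of_notMem hdC, hCcard]
          · exact cup_insert_max hCcup heC hCmax hpC hpe hp2 hed hs
        · -- extend the cap D by p
          have hpD : p ∉ D := fun h => absurd (lt_of_lt_of_le hpe (hemin p h)) (lt_irrefl _)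
          have hs' : slope (fun t => -(y t)) p e < slope (fun t => -(y t)) e d := by
            rw [slope_neg, slope_neg]; linarith
          refine Or.inr ⟨insert p D, ?_, ?_, ?_⟩
          · intro z hz
            rcases Finset.mem_insert.mp hz with rfl | hz
            · exact hCX hpC
            · exact hEX (hDE hz)
          · rw [Finset.card_insert_of_notMem hpD, hDcard]
          · exact cup_insert_min hDcap heD hemin hdD hed hd2 hpe hs'
    · -- X \ E is big: find an (a+1)-cup or a (b+2)-cap inside it
      have := ih a' b (X \ E) y (by omega) (hgenE _ (Finset.sdiff_subset)) (by omega)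
      rcases this with ⟨S, hSXE, hScard, hScup⟩ | ⟨D, hDXE, hDcard, hDcap⟩
      · exfalso
        have hSne : S.Nonempty := Finset.card_pos.mp (by omega)
        set m := S.max' hSne with hmdef
        have hmS : m ∈ S := S.max'_mem hSne
        have hmE : m ∈ E := by
          rw [hEdef, Finset.mem_filter]
          refine ⟨(Finset.sdiff_subset (hSXE hmS)), S, ?_, by omega, hScup, hmS,
            fun s hs => S.le_max' s hs⟩
          exact hSXE.trans Finset.sdiff_subset
        exact (Finset.mem_sdiff.mp (hSXE hmS)).2 hmE
      · exact Or.inr ⟨D, hDXE.trans Finset.sdiff_subset, hDcard, hDcap⟩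



-- ## Collinearity from equal slopes
lemma collinear_of_slope_eq {y : ℝ → ℝ} {p q r : ℝ} (hpq : p < q) (hqr : q < r)
    (h : slope y p q = slope y q r) :
    Collinear ℝ ({(p, y p), (q, y q), (r, y r)} : Set (ℝ × ℝ)) := by
  rw [collinear_iff_of_mem (Set.mem_insert _ _)]
  refine ⟨(q - p, y q - y p), ?_⟩
  have hqp : q - p ≠ 0 := by linarith
  have hrq : r - q ≠ 0 := by linarith
  have hyr : y r - y p = ((r - p) / (q - p)) * (y q - y p) := by
    have h' : (y q - y p) / (q - p) = (y r - y q) / (r - q) := h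
    field_simp at h' ⊢
    nlinarith [h']
  intro z hz
  rcases hz with rfl | hz
  · exact ⟨0, by simp⟩
  rcases hz with rfl | hz
  · refine ⟨1, ?_⟩
    simp [Prod.ext_iff]
  · rw [Set.mem_singleton_iff] at hz
    subst hz
    refine ⟨(r - p) / (q - p), ?_⟩
    have h1 : (r - p) / (q - p) * (q - p) + p = r := by field_simp; ring
    simp only [Prod.smul_mk, smul_eq_mul, Prod.mk_add_mk, Prod.ext_iff]
    constructor
    · simpa using h1.symm
    · show y r = (r - p) / (q - p) * (y q - y p) + y p
      linarith [hyr]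

-- ## Transport under linear equivalences
lemma collinear_of_image (T : (ℝ × ℝ) ≃ₗ[ℝ] (ℝ × ℝ)) {s : Set (ℝ × ℝ)}
    (h : Collinear ℝ (⇑T '' s)) : Collinear ℝ s := by
  rw [collinear_iff_exists_forall_eq_smul_vadd] at h ⊢
  obtain ⟨p₀, v, hv⟩ := h
  refine ⟨T.symm p₀, T.symm v, fun p hp => ?_⟩
  obtain ⟨r, hr⟩ := hv (T p) ⟨p, hp, rfl⟩
  refine ⟨r, ?_⟩
  apply T.injective
  have : T (r • T.symm v +ᵥ T.symm p₀) = r • v +ᵥ p₀ := by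
    simp [vadd_eq_add, map_add, map_smul]
  rw [this, ← hr]

lemma genPos_image (T : (ℝ × ℝ) ≃ₗ[ℝ] (ℝ × ℝ)) {P : Finset (ℝ × ℝ)} (h : GenPos P) :
    GenPos (P.image ⇑T) := by
  intro p hp q hq r hr hpq hpr hqr hcol
  obtain ⟨a, ha, rfl⟩ := Finset.mem_image.mp hp
  obtain ⟨b, hb, rfl⟩ := Finset.mem_image.mp hq
  obtain ⟨c, hc, rfl⟩ := Finset.mem_image.mp hr
  have hab : a ≠ b := fun e => hpq (by rw [e])
  have hac : a ≠ c := fun e => hpr (by rw [e])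
  have hbc : b ≠ c := fun e => hqr (by rw [e])
  apply h a ha b hb c hc hab hac hbc
  apply collinear_of_image T
  have : ⇑T '' {a, b, c} = {T a, T b, T c} := by
    simp [Set.image_insert_eq]
  rw [this]
  exact hcol

lemma convexPos_image (T : (ℝ × ℝ) ≃ₗ[ℝ] (ℝ × ℝ)) {S : Finset (ℝ × ℝ)} (h : ConvexPos S) :
    ConvexPos (S.image ⇑T) := by
  classical
  intro q hq
  obtain ⟨p, hp, rfl⟩ := Finset.mem_image.mp hq
  rw [← Finset.image_erase T.injective, Finset.coe_image]
  rw [show ⇑T '' ↑(S.erase p) = ⇑T.toLinearMap '' ↑(S.erase p) from rfl,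
    ← T.toLinearMap.image_convexHull]
  intro hmem
  obtain ⟨z, hz, hze⟩ := hmem
  have : z = p := T.injective hze
  exact h p hp (this ▸ hz)

-- ## Explicit linear equivalences
noncomputable def shear (c : ℝ) : (ℝ × ℝ) ≃ₗ[ℝ] (ℝ × ℝ) where
  toFun v := (v.1 + c * v.2, v.2)
  invFun v := (v.1 - c * v.2, v.2)
  map_add' u v := by simp [Prod.ext_iff]; ring
  map_smul' t v := by simp [Prod.ext_iff]; ring
  left_inv v := by simp [Prod.ext_iff]
  right_inv v := by simp [Prod.ext_iff]

noncomputable def negY : (ℝ × ℝ) ≃ₗ[ℝ] (ℝ × ℝ) where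
  toFun v := (v.1, -v.2)
  invFun v := (v.1, -v.2)
  map_add' u v := by simp [Prod.ext_iff]; ring
  map_smul' t v := by simp [Prod.ext_iff]
  left_inv v := by simp [Prod.ext_iff]
  right_inv v := by simp [Prod.ext_iff]


lemma cup_slope_chord {y : ℝ → ℝ} {l r : ℝ} (hlr : l < r) :
    slope y l r * (r - l) = y r - y l := by
  have : r - l ≠ 0 := by linarith
  rw [ESaux.slope]
  field_simp

lemma convexPos_of_cup {y : ℝ → ℝ} {S : Finset ℝ} (h : IsCup y S) :
    ConvexPos (S.image fun x => (x, y x)) := by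
  classical
  intro pt hpt
  obtain ⟨x0, hx0, rfl⟩ := Finset.mem_image.mp hpt
  have hinj : Function.Injective (fun x : ℝ => (x, y x)) :=
    fun a b hab => congrArg Prod.fst hab
  rw [← Finset.image_erase hinj, Finset.coe_image]
  by_cases hmin : ∀ s ∈ S, x0 ≤ s
  · intro hmem
    have hconv : Convex ℝ {z : ℝ × ℝ | x0 < z.1} :=
      convex_halfSpace_gt ⟨fun a b => rfl, fun c a => rfl⟩ x0
    have hsub : (fun x => (x, y x)) '' ↑(S.erase x0) ⊆ {z : ℝ × ℝ | x0 < z.1} := by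
      rintro z ⟨s, hs, rfl⟩
      have hsF := Finset.mem_erase.mp hs
      exact lt_of_le_of_ne (hmin s hsF.2) (Ne.symm hsF.1)
    have := convexHull_min hsub hconv hmem
    exact lt_irrefl x0 this
  · by_cases hmax : ∀ s ∈ S, s ≤ x0
    · intro hmem
      have hconv : Convex ℝ {z : ℝ × ℝ | z.1 < x0} :=
        convex_halfSpace_lt ⟨fun a b => rfl, fun c a => rfl⟩ x0
      have hsub : (fun x => (x, y x)) '' ↑(S.erase x0) ⊆ {z : ℝ × ℝ | z.1 < x0} := by
        rintro z ⟨s, hs, rfl⟩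
        have hsF := Finset.mem_erase.mp hs
        exact lt_of_le_of_ne (hmax s hsF.2) hsF.1
      have := convexHull_min hsub hconv hmem
      exact lt_irrefl x0 this
    · push_neg at hmin hmax
      obtain ⟨u, huS, hu⟩ := hmin
      obtain ⟨v, hvS, hv⟩ := hmax
      have hBne : ((S.filter (fun s => s < x0))).Nonempty :=
        ⟨u, Finset.mem_filter.mpr ⟨huS, hu⟩⟩
      have hAne : ((S.filter (fun s => x0 < s))).Nonempty :=
        ⟨v, Finset.mem_filter.mpr ⟨hvS, hv⟩⟩
      set l := (S.filter (fun s => s < x0)).max' hBne with hldef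
      set r := (S.filter (fun s => x0 < s)).min' hAne with hrdef
      have hlmem := Finset.mem_filter.mp ((S.filter (fun s => s < x0)).max'_mem hBne)
      have hrmem := Finset.mem_filter.mp ((S.filter (fun s => x0 < s)).min'_mem hAne)
      have hlS : l ∈ S := hlmem.1
      have hrS : r ∈ S := hrmem.1
      have hlx : l < x0 := hlmem.2
      have hxr : x0 < r := hrmem.2
      have hlr : l < r := lt_trans hlx hxr
      set m := slope y l r with hmdef
      set c := y l - m * l with hcdef
      have hchord := cup_slope_chord (y := y) hlr
      have hcr : c = y r - m * r := by
        rw [hcdef]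
        nlinarith [hchord]
      intro hmem
      have hconv : Convex ℝ {z : ℝ × ℝ | c ≤ z.2 - m * z.1} := by
        have hlin : IsLinearMap ℝ (fun z : ℝ × ℝ => z.2 - m * z.1) := by
          constructor
          · intro a b; simp; ring
          · intro t a; simp; ring
        exact convex_halfSpace_ge hlin c
      have hsub : (fun x => (x, y x)) '' ↑(S.erase x0) ⊆
          {z : ℝ × ℝ | c ≤ z.2 - m * z.1} := by
        rintro z ⟨s, hs, rfl⟩
        have hsF := Finset.mem_erase.mp hs
        have hsS : s ∈ S := hsF.2
        simp only [Set.mem_setOf_eq]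
        rcases lt_trichotomy s x0 with hsx | hsx | hsx
        · -- s ≤ l
          have hsl : s ≤ l := (S.filter (fun s => s < x0)).le_max'
            s (Finset.mem_filter.mpr ⟨hsS, hsx⟩)
          rcases eq_or_lt_of_le hsl with rfl | hsl
          · rw [hcdef]
          · -- cup (s, l, r)
            have hc := h s hsS l hlS r hrS hsl hlr
            have h2 : slope y s l < m := hc
            have h3 : y l - y s < m * (l - s) := by
              have hls : (0:ℝ) < l - s := by linarith
              have := (div_lt_iff₀ hls).mp h2
              · linarith [this]
            rw [hcdef]; nlinarith [h3]
        · exact absurd hsx hsF.1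
        · -- r ≤ s
          have hrs : r ≤ s := (S.filter (fun s => x0 < s)).min'_le
            s (Finset.mem_filter.mpr ⟨hsS, hsx⟩)
          rcases eq_or_lt_of_le hrs with rfl | hrs
          · rw [hcr]
          · -- cup (l, r, s)
            have hc := h l hlS r hrS s hsS hlr hrs
            have h2 : m < slope y r s := hc
            have h3 : m * (s - r) < y s - y r := by
              have hsr : (0:ℝ) < s - r := by linarith
              have := (lt_div_iff₀ hsr).mp h2
              linarith [this]
            rw [hcr]; nlinarith [h3]
      have hle := convexHull_min hsub hconv hmem
      simp only [Set.mem_setOf_eq] at hle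
      -- but the cup condition puts (x0, y x0) strictly below the chord
      have hc := h l hlS x0 hx0 r hrS hlx hxr
      have h2 : slope y l x0 < m := by
        rw [hmdef]
        exact (slope_lt_left y hlx hxr).mp hc
      have h3 : y x0 - y l < m * (x0 - l) := by
        have hxl : (0:ℝ) < x0 - l := by linarith
        have := (div_lt_iff₀ hxl).mp h2
        linarith [this]
      rw [hcdef] at hle
      nlinarith [h3, hle]


lemma exists_bound (k : ℕ) (hk : 3 ≤ k) (P : Finset (ℝ × ℝ)) (hP : GenPos P)
    (hcard : Nat.choose ((k - 2) + (k - 2)) (k - 2) + 1 ≤ P.card) :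
    ∃ S ⊆ P, S.card = k ∧ ConvexPos S := by
  classical
  -- choose a shear constant making all first coordinates distinct
  obtain ⟨cc, hcc⟩ : ∃ c : ℝ, ∀ p ∈ P, ∀ q ∈ P, p ≠ q →
      p.1 + c * p.2 ≠ q.1 + c * q.2 := by
    set B : Finset ℝ :=
      (P ×ˢ P).image (fun pq => (pq.2.1 - pq.1.1) / (pq.1.2 - pq.2.2)) with hBdef
    obtain ⟨c, hc⟩ := Infinite.exists_notMem_finset B
    refine ⟨c, fun p hp q hq hpq heq => ?_⟩
    by_cases h2 : p.2 = q.2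
    · apply hpq
      have h1 : p.1 = q.1 := by rw [h2] at heq; linarith
      exact Prod.ext h1 h2
    · apply hc
      rw [hBdef, Finset.mem_image]
      refine ⟨(p, q), Finset.mem_product.mpr ⟨hp, hq⟩, ?_⟩
      have hne : p.2 - q.2 ≠ 0 := fun h => h2 (by linarith)
      field_simp
      linarith
  set T := shear cc with hTdef
  set Q := P.image ⇑T with hQdef
  have hQgen : GenPos Q := genPos_image T hP
  have hQcard : Q.card = P.card := Finset.card_image_of_injective _ T.injective
  have hTfst : ∀ p : ℝ × ℝ, (T p).1 = p.1 + cc * p.2 := fun p => rfl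
  have hQinj : ∀ u ∈ Q, ∀ v ∈ Q, u.1 = v.1 → u = v := by
    intro u hu v hv h1
    obtain ⟨p, hp, rfl⟩ := Finset.mem_image.mp hu
    obtain ⟨q, hq, rfl⟩ := Finset.mem_image.mp hv
    rcases eq_or_ne p q with rfl | hne
    · rfl
    · exact absurd (by rw [← hTfst p, ← hTfst q, h1]) (hcc p hp q hq hne)
  set X := Q.image Prod.fst with hXdef
  have hXcard : X.card = Q.card :=
    Finset.card_image_of_injOn (fun u hu v hv h => hQinj u hu v hv h)
  set yf : ℝ → ℝ := fun x => if h : ∃ p ∈ Q, p.1 = x then h.choose.2 else 0 with hyfdef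
  have hyQ : ∀ x ∈ X, (x, yf x) ∈ Q := by
    intro x hx
    obtain ⟨p, hp, rfl⟩ := Finset.mem_image.mp hx
    have hex : ∃ q ∈ Q, q.1 = p.1 := ⟨p, hp, rfl⟩
    obtain ⟨hq1, hq2⟩ := hex.choose_spec
    have hy : yf p.1 = hex.choose.2 := by
      show (if h : ∃ q ∈ Q, q.1 = p.1 then h.choose.2 else 0) = hex.choose.2
      rw [dif_pos hex]
    rw [hy, show (p.1, hex.choose.2) = hex.choose from Prod.ext hq2.symm rfl]
    exact hq1
  have hgenX : ∀ p ∈ X, ∀ q ∈ X, ∀ r ∈ X, p < q → q < r →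
      slope yf p q ≠ slope yf q r := by
    intro p hp q hq r hr h1 h2 heq
    refine hQgen (p, yf p) (hyQ p hp) (q, yf q) (hyQ q hq) (r, yf r) (hyQ r hr)
      (fun h => absurd (congrArg Prod.fst h) (ne_of_lt h1))
      (fun h => absurd (congrArg Prod.fst h) (ne_of_lt (lt_trans h1 h2)))
      (fun h => absurd (congrArg Prod.fst h) (ne_of_lt h2)) ?_
    exact collinear_of_slope_eq h1 h2 heq
  have hXc : Nat.choose ((k - 2) + (k - 2)) (k - 2) + 1 ≤ X.card := by
    rw [hXcard, hQcard]; exact hcard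
  have hk2 : (k - 2) + 2 = k := by omega
  have hinj : Function.Injective (fun x : ℝ => (x, yf x)) :=
    fun a b hab => congrArg Prod.fst hab
  have key : ∃ Sp ⊆ Q, Sp.card = k ∧ ConvexPos Sp := by
    rcases cupcap ((k - 2) + (k - 2)) (k - 2) (k - 2) X yf le_rfl hgenX hXc with
      ⟨S, hSX, hScard, hScup⟩ | ⟨S, hSX, hScard, hScap⟩
    · refine ⟨S.image (fun x => (x, yf x)), ?_, ?_, convexPos_of_cup hScup⟩
      · intro z hz
        obtain ⟨x, hx, rfl⟩ := Finset.mem_image.mp hz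
        exact hyQ x (hSX hx)
      · rw [Finset.card_image_of_injective _ hinj, hScard, hk2]
    · have hcp := convexPos_of_cup (y := fun t => -(yf t)) hScap
      have hcp2 := convexPos_image negY hcp
      have himg : (S.image (fun x => (x, -(yf x)))).image ⇑negY
          = S.image (fun x => (x, yf x)) := by
        rw [Finset.image_image]
        refine Finset.image_congr ?_
        intro x _
        show negY (x, -(yf x)) = (x, yf x)
        show ((x : ℝ), -(-(yf x))) = (x, yf x)
        rw [neg_neg]
      rw [himg] at hcp2
      refine ⟨S.image (fun x => (x, yf x)), ?_, ?_, hcp2⟩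
      · intro z hz
        obtain ⟨x, hx, rfl⟩ := Finset.mem_image.mp hz
        exact hyQ x (hSX hx)
      · rw [Finset.card_image_of_injective _ hinj, hScard, hk2]
  obtain ⟨Sp, hSpQ, hSpcard, hSppos⟩ := key
  refine ⟨Sp.image ⇑T.symm, ?_, ?_, convexPos_image T.symm hSppos⟩
  · intro z hz
    obtain ⟨w, hw, rfl⟩ := Finset.mem_image.mp hz
    obtain ⟨p, hp, rfl⟩ := Finset.mem_image.mp (hSpQ hw)
    simpa using hp
  · rw [Finset.card_image_of_injective _ T.symm.injective, hSpcard]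

end ESaux

/-- Erdős–Szekeres: for every `k ≥ 3` there is a smallest integer `g` such that
every set of at least `g` points in general position in the plane contains `k`
points in convex position. -/
theorem erdos_szekeres (k : ℕ) (hk : 3 ≤ k) :
    ∃ g : ℕ,
      (∀ P : Finset (ℝ × ℝ), GenPos P → g ≤ P.card →
        ∃ S ⊆ P, S.card = k ∧ ConvexPos S) ∧
      (∀ g' < g, ¬ ∀ P : Finset (ℝ × ℝ), GenPos P → g' ≤ P.card →
        ∃ S ⊆ P, S.card = k ∧ ConvexPos S) := by
  classical
  have hex : ∃ g : ℕ, ∀ P : Finset (ℝ × ℝ), GenPos P → g ≤ P.card →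
      ∃ S ⊆ P, S.card = k ∧ ConvexPos S :=
    ⟨Nat.choose ((k - 2) + (k - 2)) (k - 2) + 1,
      fun P hP hc => ESaux.exists_bound k hk P hP hc⟩
  exact ⟨Nat.find hex, Nat.find_spec hex, fun g' h => Nat.find_min hex h⟩
end

section
/- Every set of 5 points in the plane in general position contains 4 points forming an empty convex quadrilateral, i.e., h(4) = 5 ≤ 5: among any 5 points in general position there exist 4 points in convex position whose convex hull contains none of the remaining points. -/
/-! ### Auxiliary material: signed area / orientation tests -/

/-- Twice the signed area of the triangle `u v w`. -/
noncomputable def sig (u v w : ℝ × ℝ) : ℝ :=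
  (v.1 - u.1) * (w.2 - u.2) - (v.2 - u.2) * (w.1 - u.1)

lemma sig_vanish₁ (u v : ℝ × ℝ) : sig u v u = 0 := by unfold sig; ring
lemma sig_vanish₂ (u v : ℝ × ℝ) : sig u v v = 0 := by unfold sig; ring

lemma sig_affine (u v x y : ℝ × ℝ) (a b : ℝ) (hab : a + b = 1) :
    sig u v (a • x + b • y) = a * sig u v x + b * sig u v y := by
  have h1 : (a • x + b • y).1 = a * x.1 + b * y.1 := by simp
  have h2 : (a • x + b • y).2 = a * x.2 + b * y.2 := by simp
  unfold sig
  rw [h1, h2]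
  have : b = 1 - a := by linarith
  subst this; ring

lemma convex_sig_le (u v : ℝ × ℝ) : Convex ℝ {w : ℝ × ℝ | sig u v w ≤ 0} := by
  intro x hx y hy a b ha hb hab
  simp only [Set.mem_setOf_eq] at hx hy ⊢
  rw [sig_affine u v x y a b hab]
  nlinarith [mul_nonneg ha (neg_nonneg.2 hx), mul_nonneg hb (neg_nonneg.2 hy)]

/-- Strict halfplane separation from a triple's hull. -/
lemma notMemHullH {u v x y z p : ℝ × ℝ} (hx : sig u v x ≤ 0) (hy : sig u v y ≤ 0)
    (hz : sig u v z ≤ 0) (hp : 0 < sig u v p) :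
    p ∉ convexHull ℝ ({x, y, z} : Set (ℝ × ℝ)) := by
  intro hmem
  have hsub : ({x, y, z} : Set (ℝ × ℝ)) ⊆ {w | sig u v w ≤ 0} := by
    intro w hw
    rcases hw with rfl | rfl | rfl <;> assumption
  have := convexHull_min hsub (convex_sig_le u v) hmem
  simp only [Set.mem_setOf_eq] at this
  linarith

/-- Boundary-case separation: `p` lies on the line `u v`, the triple lies
(weakly) on the negative side, with only `z` allowed on the line. -/
lemma notMemHullN {u v x y z p : ℝ × ℝ} (hx : sig u v x < 0) (hy : sig u v y < 0)
    (hz : sig u v z = 0) (hp : 0 ≤ sig u v p) (hpz : p ≠ z) :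
    p ∉ convexHull ℝ ({x, y, z} : Set (ℝ × ℝ)) := by
  intro hmem
  rw [show ({x, y, z} : Set (ℝ × ℝ)) = insert x {y, z} from rfl,
    convexHull_insert ⟨y, by simp⟩, mem_convexJoin] at hmem
  obtain ⟨x', hx', q, hq, hseg⟩ := hmem
  rw [Set.mem_singleton_iff] at hx'
  rw [hx'] at hseg
  rw [convexHull_pair] at hq
  obtain ⟨c, d, hc, hd, hcd, rfl⟩ := hq
  obtain ⟨a, b, ha, hb, hab, rfl⟩ := hseg
  have hfp : sig u v (a • x + b • (c • y + d • z))
      = a * sig u v x + b * (c * sig u v y + d * sig u v z) := by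
    rw [sig_affine u v x _ a b hab, sig_affine u v y z c d hcd]
  rw [hfp, hz] at hp
  have ha0 : a = 0 := by
    rcases ha.eq_or_lt with h | h
    · exact h.symm
    · nlinarith [mul_nonneg hb (mul_nonneg hc (neg_nonneg.2 hy.le)),
        mul_pos h (neg_pos.2 hx)]
  have hb1 : b = 1 := by linarith
  have hc0 : c = 0 := by
    rcases hc.eq_or_lt with h | h
    · exact h.symm
    · nlinarith [mul_pos h (neg_pos.2 hy)]
  have hd1 : d = 1 := by linarith
  apply hpz
  rw [ha0, hc0, hb1, hd1]
  simp

/-- A point weakly on the other side of a line supporting a quadruple is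
not in the interior of the quadruple's hull. -/
lemma notMemInterior {u v x y z w p : ℝ × ℝ} (huv : u ≠ v)
    (hx : sig u v x ≤ 0) (hy : sig u v y ≤ 0) (hz : sig u v z ≤ 0) (hw : sig u v w ≤ 0)
    (hp : 0 ≤ sig u v p) :
    p ∉ interior (convexHull ℝ ({x, y, z, w} : Set (ℝ × ℝ))) := by
  intro hmem
  have hsub : ({x, y, z, w} : Set (ℝ × ℝ)) ⊆ {t | sig u v t ≤ 0} := by
    intro t ht
    rcases ht with rfl | rfl | rfl | rfl <;> assumption
  have h2 : p ∈ interior {t : ℝ × ℝ | sig u v t ≤ 0} :=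
    interior_mono (convexHull_min hsub (convex_sig_le u v)) hmem
  rw [mem_interior_iff_mem_nhds, Metric.mem_nhds_iff] at h2
  obtain ⟨ε, hε, hball⟩ := h2
  set A : ℝ := -(v.2 - u.2) with hA
  set B : ℝ := v.1 - u.1 with hB
  have hABne : A ≠ 0 ∨ B ≠ 0 := by
    by_contra h
    push_neg at h
    apply huv
    have h1 : v.2 = u.2 := by have := h.1; simp [hA] at this; linarith
    have h2 : v.1 = u.1 := by have := h.2; simp [hB] at this; linarith
    exact (Prod.ext h2 h1).symm
  have hAB : 0 < |A| + |B| := by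
    rcases hABne with h | h
    · have := abs_pos.2 h; have := abs_nonneg B; linarith
    · have := abs_pos.2 h; have := abs_nonneg A; linarith
  set t : ℝ := ε / (2 * (|A| + |B|)) with ht
  have htpos : 0 < t := by positivity
  set q : ℝ × ℝ := (p.1 + t * A, p.2 + t * B) with hq
  have hqball : q ∈ Metric.ball p ε := by
    rw [Metric.mem_ball, Prod.dist_eq]
    have d1 : dist q.1 p.1 = t * |A| := by
      rw [Real.dist_eq]; simp [hq, abs_mul, abs_of_pos htpos]
    have d2 : dist q.2 p.2 = t * |B| := by
      rw [Real.dist_eq]; simp [hq, abs_mul, abs_of_pos htpos]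
    rw [d1, d2]
    have : t * (|A| + |B|) = ε / 2 := by
      rw [ht]; field_simp
    have hle : t * |A| ⊔ t * |B| ≤ t * (|A| + |B|) := by
      apply max_le <;> nlinarith [abs_nonneg A, abs_nonneg B]
    linarith [hle, this ▸ hle]
  have hqmem := hball hqball
  simp only [Set.mem_setOf_eq] at hqmem
  have hsigq : sig u v q = sig u v p + t * (A ^ 2 + B ^ 2) := by
    simp only [sig, hq, hA, hB]; ring
  have hABpos : 0 < A ^ 2 + B ^ 2 := by
    rcases hABne with h | h
    · have := sq_nonneg B; positivity
    · have := sq_nonneg A; positivity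
  nlinarith [hqmem, hsigq, mul_pos htpos hABpos]

/-- A quadrilateral in (positively oriented) convex order is in convex position. -/
lemma convexPos_quad {a b c d : ℝ × ℝ} (h1 : 0 < sig a b c) (h2 : 0 < sig b c d)
    (h3 : 0 < sig c d a) (h4 : 0 < sig d a b) :
    ConvexPos ({a, b, c, d} : Finset (ℝ × ℝ)) := by
  intro p hp
  simp only [Finset.mem_insert, Finset.mem_singleton] at hp
  rcases hp with rfl | rfl | rfl | rfl
  · intro hmem
    refine notMemHullH (u := b) (v := d) (x := b) (y := c) (z := d) ?_ ?_ ?_ ?_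
      (convexHull_mono ?_ hmem)
    · exact le_of_eq (sig_vanish₁ b d)
    · have : sig b d c = - sig b c d := by unfold sig; ring
      linarith
    · exact le_of_eq (sig_vanish₂ b d)
    · have : sig b d p = sig d p b := by unfold sig; ring
      linarith
    · intro w hw; simp at hw ⊢; tauto
  · intro hmem
    refine notMemHullH (u := c) (v := a) (x := a) (y := c) (z := d) ?_ ?_ ?_ ?_
      (convexHull_mono ?_ hmem)
    · exact le_of_eq (sig_vanish₂ c a)
    · exact le_of_eq (sig_vanish₁ c a)
    · have : sig c a d = - sig c d a := by unfold sig; ring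
      linarith
    · have : sig c a p = sig a p c := by unfold sig; ring
      linarith
    · intro w hw; simp at hw ⊢; tauto
  · intro hmem
    refine notMemHullH (u := d) (v := b) (x := a) (y := b) (z := d) ?_ ?_ ?_ ?_
      (convexHull_mono ?_ hmem)
    · have : sig d b a = - sig d a b := by unfold sig; ring
      linarith
    · exact le_of_eq (sig_vanish₂ d b)
    · exact le_of_eq (sig_vanish₁ d b)
    · have : sig d b p = sig b p d := by unfold sig; ring
      linarith
    · intro w hw; simp at hw ⊢; tauto
  · intro hmem
    refine notMemHullH (u := a) (v := c) (x := a) (y := b) (z := c) ?_ ?_ ?_ ?_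
      (convexHull_mono ?_ hmem)
    · exact le_of_eq (sig_vanish₁ a c)
    · have : sig a c b = - sig a b c := by unfold sig; ring
      linarith
    · exact le_of_eq (sig_vanish₂ a c)
    · have : sig a c p = sig c p a := by unfold sig; ring
      linarith
    · intro w hw; simp at hw ⊢; tauto

/-- A minimum exists for a total transitive relation on a nonempty finite set. -/
lemma exists_rmin {α : Type*} (r : α → α → Prop) (S : Finset α) (hne : S.Nonempty)
    (htot : ∀ x ∈ S, ∀ y ∈ S, x ≠ y → r x y ∨ r y x)
    (htrans : ∀ x ∈ S, ∀ y ∈ S, ∀ z ∈ S, r x y → r y z → r x z) :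
    ∃ m ∈ S, ∀ x ∈ S, x ≠ m → r m x := by
  induction S using Finset.cons_induction with
  | empty => exact absurd hne (by simp)
  | cons a T ha ih =>
    rcases T.eq_empty_or_nonempty with rfl | hT
    · exact ⟨a, by simp, fun x hx hxa => by simp at hx; exact absurd hx hxa⟩
    · obtain ⟨m, hm, hmin⟩ := ih hT
        (fun x hx y hy => htot x (Finset.mem_cons_of_mem hx) y (Finset.mem_cons_of_mem hy))
        (fun x hx y hy z hz => htrans x (Finset.mem_cons_of_mem hx) y
          (Finset.mem_cons_of_mem hy) z (Finset.mem_cons_of_mem hz))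
      have ham : a ≠ m := fun h => ha (h ▸ hm)
      have hmem_m : m ∈ Finset.cons a T ha := Finset.mem_cons_of_mem hm
      have hmem_a : a ∈ Finset.cons a T ha := Finset.mem_cons_self a T
      rcases htot a hmem_a m hmem_m ham with hr | hr
      · refine ⟨a, hmem_a, fun x hx hxa => ?_⟩
        rcases Finset.mem_cons.1 hx with rfl | hxT
        · exact absurd rfl hxa
        · by_cases hxm : x = m
          · exact hxm ▸ hr
          · exact htrans a hmem_a m hmem_m x (Finset.mem_cons_of_mem hxT) hr
              (hmin x hxT hxm)
      · refine ⟨m, hmem_m, fun x hx hxm => ?_⟩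
        rcases Finset.mem_cons.1 hx with rfl | hxT
        · exact hr
        · exact hmin x hxT hxm

lemma collinear_of_sig_eq_zero {p q r : ℝ × ℝ} (h : sig p q r = 0) :
    Collinear ℝ ({p, q, r} : Set (ℝ × ℝ)) := by
  rcases eq_or_ne p q with rfl | hpq
  · have : ({p, p, r} : Set (ℝ × ℝ)) = {p, r} := by
      simp [Set.insert_comm]
    rw [this]
    exact collinear_pair ℝ p r
  · rw [collinear_iff_of_mem (Set.mem_insert p {q, r})]
    refine ⟨q - p, fun x hx => ?_⟩
    rcases hx with rfl | rfl | rfl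
    · exact ⟨0, by simp⟩
    · exact ⟨1, by simp⟩
    · unfold sig at h
      have hne : q.1 - p.1 ≠ 0 ∨ q.2 - p.2 ≠ 0 := by
        by_contra hc
        push_neg at hc
        exact hpq (Prod.ext (by linarith [hc.1]) (by linarith [hc.2]))
      rcases hne with h1 | h2
      · refine ⟨(x.1 - p.1) / (q.1 - p.1), ?_⟩
        have e1 : ((x.1 - p.1) / (q.1 - p.1)) * (q.1 - p.1) = x.1 - p.1 :=
          div_mul_cancel₀ _ h1
        have e2 : ((x.1 - p.1) / (q.1 - p.1)) * (q.2 - p.2) = x.2 - p.2 := by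
          field_simp
          nlinarith [h]
        apply Prod.ext <;> simp [Prod.fst_add, Prod.snd_add] <;> linarith [e1, e2]
      · refine ⟨(x.2 - p.2) / (q.2 - p.2), ?_⟩
        have e1 : ((x.2 - p.2) / (q.2 - p.2)) * (q.2 - p.2) = x.2 - p.2 :=
          div_mul_cancel₀ _ h2
        have e2 : ((x.2 - p.2) / (q.2 - p.2)) * (q.1 - p.1) = x.1 - p.1 := by
          field_simp
          nlinarith [h]
        apply Prod.ext <;> simp [Prod.fst_add, Prod.snd_add] <;> linarith [e1, e2]

def lexLt (p q : ℝ × ℝ) : Prop := p.1 < q.1 ∨ (p.1 = q.1 ∧ p.2 < q.2)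

lemma lexLt_total {p q : ℝ × ℝ} (h : p ≠ q) : lexLt p q ∨ lexLt q p := by
  rcases lt_trichotomy p.1 q.1 with h1 | h1 | h1
  · exact Or.inl (Or.inl h1)
  · rcases lt_trichotomy p.2 q.2 with h2 | h2 | h2
    · exact Or.inl (Or.inr ⟨h1, h2⟩)
    · exact absurd (Prod.ext h1 h2) h
    · exact Or.inr (Or.inr ⟨h1.symm, h2⟩)
  · exact Or.inr (Or.inl h1)

lemma lexLt_trans {p q r : ℝ × ℝ} (h1 : lexLt p q) (h2 : lexLt q r) : lexLt p r := by
  rcases h1 with h1 | ⟨h1, h1'⟩ <;> rcases h2 with h2 | ⟨h2, h2'⟩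
  · exact Or.inl (h1.trans h2)
  · exact Or.inl (h2 ▸ h1)
  · exact Or.inl (h1 ▸ h2)
  · exact Or.inr ⟨h1.trans h2, h1'.trans h2'⟩

lemma ang_trans {a x y z : ℝ × ℝ}
    (hx : lexLt a x) (hy : lexLt a y) (hz : lexLt a z)
    (hne : sig a x z ≠ 0) (hxy : 0 < sig a x y) (hyz : 0 < sig a y z) :
    0 < sig a x z := by
  have hX : 0 ≤ x.1 - a.1 := by
    rcases hx with h | ⟨h, _⟩ <;> linarith
  have hZ : 0 ≤ z.1 - a.1 := by
    rcases hz with h | ⟨h, _⟩ <;> linarith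
  rcases hy with h | ⟨h1, h2⟩
  · rcases hne.lt_or_gt with hneg | hpos
    · exfalso
      have key : sig a x z * (y.1 - a.1)
          = sig a x y * (z.1 - a.1) + sig a y z * (x.1 - a.1) := by unfold sig; ring
      have r1 : 0 ≤ sig a x y * (z.1 - a.1) := mul_nonneg hxy.le hZ
      have r2 : 0 ≤ sig a y z * (x.1 - a.1) := mul_nonneg hyz.le hX
      have l1 : sig a x z * (y.1 - a.1) < 0 :=
        mul_neg_of_neg_of_pos hneg (by linarith)
      linarith
    · exact hpos
  · exfalso
    have e2 : sig a y z = -((y.2 - a.2) * (z.1 - a.1)) := by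
      unfold sig; rw [← h1]; ring
    nlinarith [mul_nonneg (show (0:ℝ) ≤ y.2 - a.2 by linarith) hZ]

set_option maxHeartbeats 2000000 in
/-- Among any `5` points in the plane in general position there are `4` points
in convex position whose convex hull contains no other point of the set in its
interior (an empty convex quadrilateral); thus `h(4) ≤ 5`. -/
theorem empty_convex_quadrilateral (P : Finset (ℝ × ℝ)) (hcard : P.card = 5)
    (hgen : GenPos P) :
    ∃ S ⊆ P, S.card = 4 ∧ ConvexPos S ∧
      ∀ p ∈ P, p ∉ S → p ∉ interior (convexHull ℝ (↑S : Set (ℝ × ℝ))) := by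
  have hσ : ∀ p ∈ P, ∀ q ∈ P, ∀ r ∈ P, p ≠ q → p ≠ r → q ≠ r → sig p q r ≠ 0 :=
    fun p hp q hq r hr h1 h2 h3 h =>
      hgen p hp q hq r hr h1 h2 h3 (collinear_of_sig_eq_zero h)
  have hne : P.Nonempty := by rw [← Finset.card_pos, hcard]; norm_num
  obtain ⟨a, haP, hamin⟩ := exists_rmin lexLt P hne
    (fun x _ y _ hxy => lexLt_total hxy)
    (fun x _ y _ z _ => lexLt_trans)
  have hQsubP : P.erase a ⊆ P := Finset.erase_subset a P
  have hQcard : (P.erase a).card = 4 := by rw [Finset.card_erase_of_mem haP, hcard]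
  have hlex : ∀ x ∈ P.erase a, lexLt a x := fun x hx =>
    hamin x (hQsubP hx) (Finset.ne_of_mem_erase hx)
  have htot : ∀ x ∈ P.erase a, ∀ y ∈ P.erase a, x ≠ y →
      0 < sig a x y ∨ 0 < sig a y x := by
    intro x hx y hy hxy
    have h := hσ a haP x (hQsubP hx) y (hQsubP hy)
      (Ne.symm (Finset.ne_of_mem_erase hx)) (Ne.symm (Finset.ne_of_mem_erase hy)) hxy
    rcases h.lt_or_gt with h' | h'
    · right
      have : sig a y x = - sig a x y := by unfold sig; ring
      linarith
    · left; exact h'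
  have htrans : ∀ x ∈ P.erase a, ∀ y ∈ P.erase a, ∀ z ∈ P.erase a,
      0 < sig a x y → 0 < sig a y z → 0 < sig a x z := by
    intro x hx y hy z hz hxy hyz
    rcases eq_or_ne x z with rfl | hxz
    · exfalso
      have : sig a y x = - sig a x y := by unfold sig; ring
      linarith
    · exact ang_trans (hlex x hx) (hlex y hy) (hlex z hz)
        (hσ a haP x (hQsubP hx) z (hQsubP hz)
          (Ne.symm (Finset.ne_of_mem_erase hx)) (Ne.symm (Finset.ne_of_mem_erase hz)) hxz)
        hxy hyz
  obtain ⟨b, hbQ, hbmin⟩ := exists_rmin _ (P.erase a)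
    (by rw [← Finset.card_pos, hQcard]; norm_num) htot htrans
  have hQ3sub : (P.erase a).erase b ⊆ P.erase a := Finset.erase_subset _ _
  have hQ3card : ((P.erase a).erase b).card = 3 := by
    rw [Finset.card_erase_of_mem hbQ, hQcard]
  obtain ⟨c, hcQ3, hcmin⟩ := exists_rmin _ ((P.erase a).erase b)
    (by rw [← Finset.card_pos, hQ3card]; norm_num)
    (fun x hx y hy => htot x (hQ3sub hx) y (hQ3sub hy))
    (fun x hx y hy z hz => htrans x (hQ3sub hx) y (hQ3sub hy) z (hQ3sub hz))
  have hQ2sub : ((P.erase a).erase b).erase c ⊆ (P.erase a).erase b :=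
    Finset.erase_subset _ _
  have hQ2card : (((P.erase a).erase b).erase c).card = 2 := by
    rw [Finset.card_erase_of_mem hcQ3, hQ3card]
  obtain ⟨d, hdQ2, hdmin⟩ := exists_rmin _ (((P.erase a).erase b).erase c)
    (by rw [← Finset.card_pos, hQ2card]; norm_num)
    (fun x hx y hy => htot x (hQ3sub (hQ2sub hx)) y (hQ3sub (hQ2sub hy)))
    (fun x hx y hy z hz => htrans x (hQ3sub (hQ2sub hx)) y (hQ3sub (hQ2sub hy))
      z (hQ3sub (hQ2sub hz)))
  have hQ1card : ((((P.erase a).erase b).erase c).erase d).card = 1 := by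
    rw [Finset.card_erase_of_mem hdQ2, hQ2card]
  obtain ⟨e, hQ1eq⟩ := Finset.card_eq_one.1 hQ1card
  have heQ1 : e ∈ (((P.erase a).erase b).erase c).erase d := by rw [hQ1eq]; simp
  -- memberships
  have hcQ : c ∈ P.erase a := hQ3sub hcQ3
  have hdQ3 : d ∈ (P.erase a).erase b := hQ2sub hdQ2
  have hdQ : d ∈ P.erase a := hQ3sub hdQ3
  have heQ2 : e ∈ ((P.erase a).erase b).erase c := Finset.erase_subset _ _ heQ1
  have heQ3 : e ∈ (P.erase a).erase b := hQ2sub heQ2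
  have heQ : e ∈ P.erase a := hQ3sub heQ3
  have hbP : b ∈ P := hQsubP hbQ
  have hcP : c ∈ P := hQsubP hcQ
  have hdP : d ∈ P := hQsubP hdQ
  have heP : e ∈ P := hQsubP heQ
  -- distinctness
  have hba : b ≠ a := Finset.ne_of_mem_erase hbQ
  have hca : c ≠ a := Finset.ne_of_mem_erase hcQ
  have hda : d ≠ a := Finset.ne_of_mem_erase hdQ
  have hea : e ≠ a := Finset.ne_of_mem_erase heQ
  have hcb : c ≠ b := Finset.ne_of_mem_erase hcQ3
  have hdb : d ≠ b := Finset.ne_of_mem_erase hdQ3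
  have heb : e ≠ b := Finset.ne_of_mem_erase heQ3
  have hdc : d ≠ c := Finset.ne_of_mem_erase hdQ2
  have hec : e ≠ c := Finset.ne_of_mem_erase heQ2
  have hed : e ≠ d := Finset.ne_of_mem_erase heQ1
  -- the six sorted positives
  have hP1 : 0 < sig a b c := hbmin c hcQ hcb
  have hP2 : 0 < sig a b d := hbmin d hdQ hdb
  have hP3 : 0 < sig a b e := hbmin e heQ heb
  have hP4 : 0 < sig a c d := hcmin d hdQ3 hdc
  have hP5 : 0 < sig a c e := hcmin e heQ3 hec
  have hP6 : 0 < sig a d e := hdmin e heQ2 hed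
  -- decomposition of P
  have hPeq : P = insert a (insert b (insert c (insert d {e}))) := by
    rw [← Finset.insert_erase haP, ← Finset.insert_erase hbQ,
      ← Finset.insert_erase hcQ3, ← Finset.insert_erase hdQ2, hQ1eq]
  -- the case analysis
  rcases (hσ c hcP d hdP e heP hdc.symm hec.symm hed.symm).lt_or_gt with hs4 | hs4
  · -- sig c d e < 0
    rcases (hσ b hbP c hcP d hdP hcb.symm hdb.symm hdc.symm).lt_or_gt with hs1 | hs1
    · -- sig b c d < 0 : S = {b, c, d, e}
      have key2 : sig a c d * sig b c e
          = sig c d e * sig a b c + sig b c d * sig a c e := by unfold sig; ring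
      have key3 : sig a c d * sig b d e
          = sig c d e * sig a b d + sig b c d * sig a d e := by unfold sig; ring
      have hs2 : sig b c e < 0 := by
        by_contra h
        push_neg at h
        nlinarith [mul_nonneg hP4.le h, mul_pos (neg_pos.2 hs4) hP1,
          mul_pos (neg_pos.2 hs1) hP5]
      have hs3 : sig b d e < 0 := by
        by_contra h
        push_neg at h
        nlinarith [mul_nonneg hP4.le h, mul_pos (neg_pos.2 hs4) hP2,
          mul_pos (neg_pos.2 hs1) hP6]
      refine ⟨{b, c, d, e}, ?_, ?_, ?_, ?_⟩
      · simp only [Finset.insert_subset_iff, Finset.singleton_subset_iff]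
        exact ⟨hbP, hcP, hdP, heP⟩
      · rw [Finset.card_insert_of_notMem (by simp [hcb.symm, hdb.symm, heb.symm]),
          Finset.card_insert_of_notMem (by simp [hdc.symm, hec.symm]),
          Finset.card_insert_of_notMem (by simp [hed.symm]),
          Finset.card_singleton]
      · -- ConvexPos {b, c, d, e}
        intro p hp
        simp only [Finset.mem_insert, Finset.mem_singleton] at hp
        rcases hp with rfl | rfl | rfl | rfl
        · intro hmem
          refine notMemHullH (u := e) (v := c) (x := c) (y := d) (z := e) ?_ ?_ ?_ ?_
            (convexHull_mono ?_ hmem)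
          · exact le_of_eq (sig_vanish₂ e c)
          · have : sig e c d = sig c d e := by unfold sig; ring
            linarith
          · exact le_of_eq (sig_vanish₁ e c)
          · have : sig e c p = - sig p c e := by unfold sig; ring
            linarith
          · intro w hw; simp at hw ⊢; tauto
        · intro hmem
          refine notMemHullN (u := p) (v := d) (x := b) (y := e) (z := d) ?_ ?_ ?_ ?_ hdc.symm
            (convexHull_mono ?_ hmem)
          · have : sig p d b = sig b p d := by unfold sig; ring
            linarith
          · exact hs4
          · exact sig_vanish₂ p d
          · exact le_of_eq (sig_vanish₁ p d).symm
          · intro w hw; simp at hw ⊢; tauto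
        · intro hmem
          refine notMemHullN (u := c) (v := p) (x := b) (y := e) (z := c) ?_ ?_ ?_ ?_ hdc
            (convexHull_mono ?_ hmem)
          · have : sig c p b = sig b c p := by unfold sig; ring
            linarith
          · exact hs4
          · exact sig_vanish₁ c p
          · exact le_of_eq (sig_vanish₂ c p).symm
          · intro w hw; simp at hw ⊢; tauto
        · intro hmem
          refine notMemHullH (u := d) (v := b) (x := b) (y := c) (z := d) ?_ ?_ ?_ ?_
            (convexHull_mono ?_ hmem)
          · exact le_of_eq (sig_vanish₂ d b)
          · have : sig d b c = sig b c d := by unfold sig; ring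
            linarith
          · exact le_of_eq (sig_vanish₁ d b)
          · have : sig d b p = - sig b d p := by unfold sig; ring
            linarith
          · intro w hw; simp at hw ⊢; tauto
      · -- emptiness: only a remains
        intro p hpP hpS
        have hp : p = a := by
          rw [hPeq] at hpP
          simp only [Finset.mem_insert, Finset.mem_singleton] at hpP hpS
          tauto
        subst hp
        simp only [Finset.coe_insert, Finset.coe_singleton]
        refine notMemInterior (u := c) (v := d) hdc.symm ?_ ?_ ?_ ?_ ?_
        · have : sig c d b = sig b c d := by unfold sig; ring
          linarith
        · exact le_of_eq (sig_vanish₁ c d)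
        · exact le_of_eq (sig_vanish₂ c d)
        · exact hs4.le
        · have : sig c d p = sig p c d := by unfold sig; ring
          linarith
    · -- 0 < sig b c d : S = {a, b, c, d}
      refine ⟨{a, b, c, d}, ?_, ?_, ?_, ?_⟩
      · simp only [Finset.insert_subset_iff, Finset.singleton_subset_iff]
        exact ⟨haP, hbP, hcP, hdP⟩
      · rw [Finset.card_insert_of_notMem (by simp [hba.symm, hca.symm, hda.symm]),
          Finset.card_insert_of_notMem (by simp [hcb.symm, hdb.symm]),
          Finset.card_insert_of_notMem (by simp [hdc.symm]),
          Finset.card_singleton]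
      · refine convexPos_quad hP1 hs1 ?_ ?_
        · have : sig c d a = sig a c d := by unfold sig; ring
          linarith
        · have : sig d a b = sig a b d := by unfold sig; ring
          linarith
      · intro p hpP hpS
        have hp : p = e := by
          rw [hPeq] at hpP
          simp only [Finset.mem_insert, Finset.mem_singleton] at hpP hpS
          tauto
        subst hp
        simp only [Finset.coe_insert, Finset.coe_singleton]
        refine notMemInterior (u := d) (v := c) hdc ?_ ?_ ?_ ?_ ?_
        · have : sig d c a = - sig a c d := by unfold sig; ring
          linarith
        · have : sig d c b = - sig b c d := by unfold sig; ring
          linarith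
        · exact le_of_eq (sig_vanish₂ d c)
        · exact le_of_eq (sig_vanish₁ d c)
        · have : sig d c p = - sig c d p := by unfold sig; ring
          linarith
  · -- 0 < sig c d e : S = {a, c, d, e}
    refine ⟨{a, c, d, e}, ?_, ?_, ?_, ?_⟩
    · simp only [Finset.insert_subset_iff, Finset.singleton_subset_iff]
      exact ⟨haP, hcP, hdP, heP⟩
    · rw [Finset.card_insert_of_notMem (by simp [hca.symm, hda.symm, hea.symm]),
        Finset.card_insert_of_notMem (by simp [hdc.symm, hec.symm]),
        Finset.card_insert_of_notMem (by simp [hed.symm]),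
        Finset.card_singleton]
    · refine convexPos_quad hP4 hs4 ?_ ?_
      · have : sig d e a = sig a d e := by unfold sig; ring
        linarith
      · have : sig e a c = sig a c e := by unfold sig; ring
        linarith
    · intro p hpP hpS
      have hp : p = b := by
        rw [hPeq] at hpP
        simp only [Finset.mem_insert, Finset.mem_singleton] at hpP hpS
        tauto
      subst hp
      simp only [Finset.coe_insert, Finset.coe_singleton]
      refine notMemInterior (u := c) (v := a) hca ?_ ?_ ?_ ?_ ?_
      · exact le_of_eq (sig_vanish₂ c a)
      · exact le_of_eq (sig_vanish₁ c a)
      · have : sig c a d = - sig a c d := by unfold sig; ring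
        linarith
      · have : sig c a e = - sig a c e := by unfold sig; ring
        linarith
      · have : sig c a p = sig a p c := by unfold sig; ring
        linarith
end

section
/- For every pair of integers ℓ ≥ 2, every set P of at least max{7, ℓ+2} points in the plane contains ℓ collinear points or 4 pairwise mutually visible points. -/
/-- The points of `S` are pairwise mutually visible with respect to the ambient
point set `P`: for any two distinct points of `S`, the open segment between
them contains no point of `P`. -/
def PairwiseVisible (P S : Finset (ℝ × ℝ)) : Prop :=
  ∀ p ∈ S, ∀ q ∈ S, p ≠ q → ∀ r ∈ P, r ∉ openSegment ℝ p q

namespace BLC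

abbrev V := ℝ × ℝ

/-- twice signed area -/
def det3 (a b c : V) : ℝ := (b.1-a.1)*(c.2-a.2)-(b.2-a.2)*(c.1-a.1)

/-- mutual visibility of two points w.r.t. blockers in `P` -/
def Vis (P : Finset V) (u v : V) : Prop := ∀ r ∈ P, r ∉ openSegment ℝ u v

lemma vis_symm {P : Finset V} {u v : V} (h : Vis P u v) : Vis P v u := by
  intro r hr hseg
  exact h r hr (by rwa [openSegment_symm])

lemma mem_openSegment_iff {r u v : V} :
    r ∈ openSegment ℝ u v ↔ ∃ t : ℝ, 0 < t ∧ t < 1 ∧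
      r.1 = u.1 + t*(v.1-u.1) ∧ r.2 = u.2 + t*(v.2-u.2) := by
  rw [openSegment_eq_image' ℝ u v]
  constructor
  · rintro ⟨t, ⟨ht0, ht1⟩, rfl⟩
    refine ⟨t, ht0, ht1, ?_, ?_⟩ <;> · simp; try ring
  · rintro ⟨t, ht0, ht1, h1, h2⟩
    refine ⟨t, ⟨ht0, ht1⟩, ?_⟩
    apply Prod.ext <;> simp [h1, h2] <;> ring

lemma left_not_mem_openSegment {u v : V} (hne : u ≠ v) : u ∉ openSegment ℝ u v := by
  rw [mem_openSegment_iff]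
  rintro ⟨t, ht0, ht1, h1, h2⟩
  apply hne
  apply Prod.ext <;> [nlinarith [h1]; nlinarith [h2]]

lemma right_not_mem_openSegment {u v : V} (hne : u ≠ v) : v ∉ openSegment ℝ u v := by
  rw [openSegment_symm]; exact left_not_mem_openSegment (Ne.symm hne)


/-- along-the-line coordinate -/
def dg (a b c : V) : ℝ := (c.1-a.1)*(b.1-a.1)+(c.2-a.2)*(b.2-a.2)

lemma seg_facts (a b : V) {u v r : V} (h : r ∈ openSegment ℝ u v) :
    ∃ t : ℝ, 0 < t ∧ t < 1 ∧
      det3 a b r = det3 a b u + t*(det3 a b v - det3 a b u) ∧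
      dg a b r = dg a b u + t*(dg a b v - dg a b u) ∧
      det3 u v r = 0 := by
  rw [mem_openSegment_iff] at h
  obtain ⟨t, ht0, ht1, h1, h2⟩ := h
  refine ⟨t, ht0, ht1, ?_, ?_, ?_⟩ <;> · simp only [det3, dg, h1, h2]; ring

lemma phi_inj {a b u v : V} (hab : a ≠ b)
    (h1 : det3 a b u = det3 a b v) (h2 : dg a b u = dg a b v) : u = v := by
  have hd : (b.1-a.1)^2 + (b.2-a.2)^2 ≠ 0 := by
    intro hc
    apply hab
    have e1 : b.1 - a.1 = 0 := by nlinarith [sq_nonneg (b.1-a.1), sq_nonneg (b.2-a.2)]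
    have e2 : b.2 - a.2 = 0 := by nlinarith [sq_nonneg (b.1-a.1), sq_nonneg (b.2-a.2)]
    apply Prod.ext <;> linarith
  simp only [det3, dg] at h1 h2
  have hX : (u.1-v.1)*((b.1-a.1)^2+(b.2-a.2)^2) = 0 := by linear_combination (b.1-a.1)*h2 - (b.2-a.2)*h1
  have hY : (u.2-v.2)*((b.1-a.1)^2+(b.2-a.2)^2) = 0 := by linear_combination (b.2-a.2)*h2 + (b.1-a.1)*h1
  have hX' := mul_eq_zero.mp hX
  have hY' := mul_eq_zero.mp hY
  apply Prod.ext
  · rcases hX' with h | h; · linarith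
    exact absurd h hd
  · rcases hY' with h | h; · linarith
    exact absurd h hd

lemma det3_cycle (a b c : V) : det3 a b c = det3 b c a := by unfold det3; ring
lemma det3_swap (a b c : V) : det3 a b c = - det3 b a c := by unfold det3; ring

/-- membership in an open segment gives collinearity (in every ordering we need) -/
lemma coll_of_mem {u v r : V} (h : r ∈ openSegment ℝ u v) : det3 u v r = 0 := by
  obtain ⟨t, _, _, _, _, h5⟩ := seg_facts u v h
  exact h5


def LexLt (a b u v : V) : Prop :=
  det3 a b u < det3 a b v ∨ (det3 a b u = det3 a b v ∧ dg a b u < dg a b v)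

lemma lexlt_trans {a b u v w : V} (h1 : LexLt a b u v) (h2 : LexLt a b v w) : LexLt a b u w := by
  rcases h1 with h1 | ⟨h1, h1'⟩ <;> rcases h2 with h2 | ⟨h2, h2'⟩
  · left; linarith
  · left; linarith
  · left; linarith
  · right; exact ⟨by linarith, by linarith⟩

lemma lexlt_asymm {a b u v : V} (h1 : LexLt a b u v) (h2 : LexLt a b v u) : False := by
  rcases h1 with h1 | ⟨h1, h1'⟩ <;> rcases h2 with h2 | ⟨h2, h2'⟩ <;> linarith

lemma lexlt_irrefl {a b u : V} (h : LexLt a b u u) : False := lexlt_asymm h h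

/-- a point of an open segment is lexicographically strictly between the endpoints -/
lemma lex_between (a b : V) {u v r : V} (h : r ∈ openSegment ℝ u v)
    (huv : LexLt a b u v) : LexLt a b u r ∧ LexLt a b r v := by
  obtain ⟨t, ht0, ht1, hf, hg, _⟩ := seg_facts a b h
  rcases huv with h1 | ⟨h1, h2⟩
  · constructor <;> left <;> nlinarith
  · constructor <;> right <;> exact ⟨by nlinarith, by nlinarith⟩

/-- choose the lex-minimal element of a finite nonempty set -/
lemma exists_lexmin (a b : V) (F : Finset V) (h : F.Nonempty) :
    ∃ x ∈ F, ∀ w ∈ F, det3 a b x < det3 a b w ∨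
      (det3 a b x = det3 a b w ∧ dg a b x ≤ dg a b w) := by
  obtain ⟨x0, hx0, hmin⟩ := F.exists_min_image (fun z => det3 a b z) h
  have hne : (F.filter (fun z => det3 a b z = det3 a b x0)).Nonempty :=
    ⟨x0, Finset.mem_filter.mpr ⟨hx0, rfl⟩⟩
  obtain ⟨x, hx, hgmin⟩ := (F.filter (fun z => det3 a b z = det3 a b x0)).exists_min_image
    (fun z => dg a b z) hne
  obtain ⟨hxF, hxf⟩ := Finset.mem_filter.mp hx
  refine ⟨x, hxF, fun w hw => ?_⟩
  have h0 : det3 a b x0 ≤ det3 a b w := hmin w hw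
  rcases lt_or_eq_of_le (hxf ▸ h0) with h | h
  · exact Or.inl h
  · refine Or.inr ⟨h, hgmin w (Finset.mem_filter.mpr ⟨hw, by rw [← h, hxf]⟩)⟩

lemma lexlt_of_min {a b x w : V} (hab : a ≠ b)
    (hm : det3 a b x < det3 a b w ∨ (det3 a b x = det3 a b w ∧ dg a b x ≤ dg a b w))
    (hne : x ≠ w) : LexLt a b x w := by
  rcases hm with h | ⟨h1, h2⟩
  · exact Or.inl h
  · rcases lt_or_eq_of_le h2 with h | h
    · exact Or.inr ⟨h1, h⟩
    · exact absurd (phi_inj hab h1 h) hne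

lemma not_vis {P : Finset V} {u v : V} (h : ¬ Vis P u v) :
    ∃ r ∈ P, r ∈ openSegment ℝ u v := by
  unfold Vis at h; push_neg at h; exact h

def HasK4 (P : Finset V) : Prop := ∃ S ⊆ P, S.card = 4 ∧ PairwiseVisible P S

lemma hasK4_of {P : Finset V} {a b c d : V}
    (ha : a ∈ P) (hb : b ∈ P) (hc : c ∈ P) (hd : d ∈ P)
    (hab : a ≠ b) (hac : a ≠ c) (had : a ≠ d) (hbc : b ≠ c) (hbd : b ≠ d) (hcd : c ≠ d)
    (v1 : Vis P a b) (v2 : Vis P a c) (v3 : Vis P a d)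
    (v4 : Vis P b c) (v5 : Vis P b d) (v6 : Vis P c d) : HasK4 P := by
  refine ⟨{a, b, c, d}, ?_, ?_, ?_⟩
  · intro z hz
    simp only [Finset.mem_insert, Finset.mem_singleton] at hz
    rcases hz with rfl | rfl | rfl | rfl <;> assumption
  · rw [Finset.card_insert_of_notMem (by simp [hab, hac, had]),
      Finset.card_insert_of_notMem (by simp [hbc, hbd]),
      Finset.card_insert_of_notMem (by simp [hcd]), Finset.card_singleton]
  · intro p hp q hq hpq r hr
    simp only [Finset.mem_insert, Finset.mem_singleton] at hp hq
    rcases hp with rfl | rfl | rfl | rfl <;> rcases hq with rfl | rfl | rfl | rfl <;>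
      first
        | exact absurd rfl hpq
        | exact v1 r hr | exact vis_symm v1 r hr
        | exact v2 r hr | exact vis_symm v2 r hr
        | exact v3 r hr | exact vis_symm v3 r hr
        | exact v4 r hr | exact vis_symm v4 r hr
        | exact v5 r hr | exact vis_symm v5 r hr
        | exact v6 r hr | exact vis_symm v6 r hr


lemma bad_unique {a b x y p p' : V} (hfy : 0 < det3 a b y)
    (hpf : det3 a b p = 0) (hp'f : det3 a b p' = 0)
    (h : x ∈ openSegment ℝ y p) (h' : x ∈ openSegment ℝ y p') : p = p' := by
  obtain ⟨t, ht0, ht1, h1, h2⟩ := mem_openSegment_iff.mp h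
  obtain ⟨s, hs0, hs1, h1', h2'⟩ := mem_openSegment_iff.mp h'
  have e1 : det3 a b x = det3 a b y + t*(det3 a b p - det3 a b y) := by
    simp only [det3, h1, h2]; ring
  have e2 : det3 a b x = det3 a b y + s*(det3 a b p' - det3 a b y) := by
    simp only [det3, h1', h2']; ring
  rw [hpf] at e1; rw [hp'f] at e2
  have h3 : (t - s) * det3 a b y = 0 := by linarith
  have hts : t = s := by
    rcases mul_eq_zero.mp h3 with h | h
    · linarith
    · linarith
  subst hts
  have hp1 : t * (p.1 - p'.1) = 0 := by linarith [h1, h1']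
  have hp2 : t * (p.2 - p'.2) = 0 := by linarith [h2, h2']
  apply Prod.ext
  · rcases mul_eq_zero.mp hp1 with h | h
    · linarith
    · linarith
  · rcases mul_eq_zero.mp hp2 with h | h
    · linarith
    · linarith

lemma min_contra {a b m r : V} {F : Finset V}
    (hm : ∀ w ∈ F, det3 a b m < det3 a b w ∨ (det3 a b m = det3 a b w ∧ dg a b m ≤ dg a b w))
    (hr : r ∈ F) (hlt : LexLt a b r m) : False := by
  rcases hm r hr with h | ⟨h1, h2⟩ <;> rcases hlt with h' | ⟨h1', h2'⟩ <;> linarith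

lemma lemmaM {P : Finset V} {a b : V} (hab : a ≠ b)
    (hS : 4 ≤ (P.filter (fun z => det3 a b z = 0)).card)
    (hA : 2 ≤ (P.filter (fun z => 0 < det3 a b z)).card) :
    HasK4 P := by
  classical
  set S : Finset V := P.filter (fun z => det3 a b z = 0) with hSdef
  set A : Finset V := P.filter (fun z => 0 < det3 a b z) with hAdef
  have memS : ∀ {z}, z ∈ S → z ∈ P ∧ det3 a b z = 0 := fun h => Finset.mem_filter.mp h
  have memA : ∀ {z}, z ∈ A → z ∈ P ∧ 0 < det3 a b z := fun h => Finset.mem_filter.mp h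
  have mkA : ∀ {z}, z ∈ P → 0 < det3 a b z → z ∈ A := fun h1 h2 => Finset.mem_filter.mpr ⟨h1, h2⟩
  have mkS : ∀ {z}, z ∈ P → det3 a b z = 0 → z ∈ S := fun h1 h2 => Finset.mem_filter.mpr ⟨h1, h2⟩
  -- choose x : lex-min of A
  have hAne : A.Nonempty := Finset.card_pos.mp (by omega)
  obtain ⟨x, hxA, hminx⟩ := exists_lexmin a b A hAne
  obtain ⟨hxP, hfx⟩ := memA hxA
  -- choose y : lex-min of A.erase x
  have hA'ne : (A.erase x).Nonempty := by
    rw [← Finset.card_pos, Finset.card_erase_of_mem hxA]; omega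
  obtain ⟨y, hyA', hminy⟩ := exists_lexmin a b (A.erase x) hA'ne
  have hyx : y ≠ x := Finset.ne_of_mem_erase hyA'
  have hyA : y ∈ A := Finset.mem_of_mem_erase hyA'
  obtain ⟨hyP, hfy⟩ := memA hyA
  have hlxy : LexLt a b x y := lexlt_of_min hab (hminx y hyA) (Ne.symm hyx)
  -- x sees every point of S
  have V1 : ∀ p ∈ S, Vis P x p := by
    intro p hp r hrP hseg
    obtain ⟨t, ht0, ht1, hfr, _, _⟩ := seg_facts a b hseg
    rw [(memS hp).2] at hfr
    have h1 : 0 < det3 a b r := by nlinarith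
    have h2 : det3 a b r < det3 a b x := by nlinarith
    exact min_contra hminx (mkA hrP h1) (Or.inl h2)
  -- x and y see each other
  have V2 : Vis P x y := by
    intro r hrP hseg
    obtain ⟨t, ht0, ht1, hfr, _, _⟩ := seg_facts a b hseg
    have h1 : 0 < det3 a b r := by nlinarith
    obtain ⟨hxr, hry⟩ := lex_between a b hseg hlxy
    have hrx : r ≠ x := fun h => lexlt_irrefl (h ▸ hxr)
    exact min_contra hminy (Finset.mem_erase.mpr ⟨hrx, mkA hrP h1⟩) hry
  -- y sees every non-shadowed point of S
  have V4 : ∀ p ∈ S, ¬ (x ∈ openSegment ℝ y p) → Vis P y p := by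
    intro p hp hnb r hrP hseg
    obtain ⟨t, ht0, ht1, hfr, _, _⟩ := seg_facts a b hseg
    rw [(memS hp).2] at hfr
    have h1 : 0 < det3 a b r := by nlinarith
    have h2 : det3 a b r < det3 a b y := by nlinarith
    by_cases hrx : r = x
    · exact hnb (hrx ▸ hseg)
    · exact min_contra hminy (Finset.mem_erase.mpr ⟨hrx, mkA hrP h1⟩) (Or.inl h2)
  -- the set T' of non-shadowed points of S, containing all but at most one point of S
  obtain ⟨T', hT'sub, hT'card, hT'nb, hT'missed⟩ :
      ∃ T' ⊆ S, 3 ≤ T'.card ∧ (∀ p ∈ T', ¬ (x ∈ openSegment ℝ y p)) ∧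
        (∀ s ∈ S, s ∉ T' → ∀ s' ∈ S, s' ∉ T' → s = s') := by
    by_cases hbad : ∃ m ∈ S, x ∈ openSegment ℝ y m
    · obtain ⟨m, hmS, hmseg⟩ := hbad
      refine ⟨S.erase m, Finset.erase_subset _ _, ?_, ?_, ?_⟩
      · rw [Finset.card_erase_of_mem hmS]; omega
      · intro p hp hseg
        exact (Finset.ne_of_mem_erase hp)
          (bad_unique hfy (memS (Finset.mem_of_mem_erase hp)).2 (memS hmS).2 hseg hmseg)
      · intro s hs hs' s' hs2 hs2'
        have h1 : s = m := by
          by_contra h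
          exact hs' (Finset.mem_erase.mpr ⟨h, hs⟩)
        have h2 : s' = m := by
          by_contra h
          exact hs2' (Finset.mem_erase.mpr ⟨h, hs2⟩)
        rw [h1, h2]
    · push_neg at hbad
      exact ⟨S, le_refl _, by omega, hbad, fun s hs hs' => absurd hs hs'⟩
  -- pick three g-minimal points of T'
  have hT1ne : T'.Nonempty := Finset.card_pos.mp (by omega)
  obtain ⟨u1, hu1, hgm1⟩ := T'.exists_min_image (fun z => dg a b z) hT1ne
  have hT2ne : (T'.erase u1).Nonempty := by
    rw [← Finset.card_pos, Finset.card_erase_of_mem hu1]; omega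
  obtain ⟨u2, hu2', hgm2⟩ := (T'.erase u1).exists_min_image (fun z => dg a b z) hT2ne
  have hu2 : u2 ∈ T' := Finset.mem_of_mem_erase hu2'
  have hT3ne : ((T'.erase u1).erase u2).Nonempty := by
    rw [← Finset.card_pos, Finset.card_erase_of_mem hu2', Finset.card_erase_of_mem hu1]; omega
  obtain ⟨u3, hu3', hgm3⟩ := ((T'.erase u1).erase u2).exists_min_image (fun z => dg a b z) hT3ne
  have hu3 : u3 ∈ T' := Finset.mem_of_mem_erase (Finset.mem_of_mem_erase hu3')
  have hfu : ∀ {z}, z ∈ T' → det3 a b z = 0 := fun h => (memS (hT'sub h)).2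
  have hgstrict : ∀ {p q : V}, p ∈ T' → q ∈ T' → p ≠ q → dg a b p ≤ dg a b q → dg a b p < dg a b q := by
    intro p q hp hq hne hle
    rcases lt_or_eq_of_le hle with h | h
    · exact h
    · exact absurd (phi_inj hab (by rw [hfu hp, hfu hq]) h) hne
  have hg12 : dg a b u1 < dg a b u2 :=
    hgstrict hu1 hu2 (fun h => (Finset.ne_of_mem_erase hu2') h.symm) (hgm1 u2 hu2)
  have hg23 : dg a b u2 < dg a b u3 :=
    hgstrict hu2 hu3 (fun h => (Finset.ne_of_mem_erase hu3') h.symm) (hgm2 u3 (Finset.mem_of_mem_erase hu3'))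
  -- an adjacent pair (in S) among (u1,u2) or (u2,u3)
  obtain ⟨p, q, hpT, hqT, hgpq, hadj⟩ :
      ∃ p q, p ∈ T' ∧ q ∈ T' ∧ dg a b p < dg a b q ∧
        ∀ s ∈ S, ¬ (dg a b p < dg a b s ∧ dg a b s < dg a b q) := by
    by_cases h12 : ∃ s ∈ S, dg a b u1 < dg a b s ∧ dg a b s < dg a b u2
    · obtain ⟨m0, hm0S, hm0a, hm0b⟩ := h12
      have hm0T' : m0 ∉ T' := by
        intro hc
        have h1 : m0 ≠ u1 := fun h => by rw [h] at hm0a; linarith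
        have := hgm2 m0 (Finset.mem_erase.mpr ⟨h1, hc⟩)
        linarith
      refine ⟨u2, u3, hu2, hu3, hg23, ?_⟩
      rintro s hs ⟨l1, l2⟩
      by_cases hsT : s ∈ T'
      · have h1 : s ≠ u1 := fun h => by rw [h] at l1; linarith
        have h2 : s ≠ u2 := fun h => by rw [h] at l1; exact lt_irrefl _ l1
        have := hgm3 s (Finset.mem_erase.mpr ⟨h2, Finset.mem_erase.mpr ⟨h1, hsT⟩⟩)
        linarith
      · have := hT'missed s hs hsT m0 hm0S hm0T'
        rw [this] at l1
        linarith
    · refine ⟨u1, u2, hu1, hu2, hg12, ?_⟩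
      rintro s hs ⟨l1, l2⟩
      exact h12 ⟨s, hs, l1, l2⟩
  -- p and q see each other
  have V6 : Vis P p q := by
    intro r hrP hseg
    obtain ⟨t, ht0, ht1, hfr, hgr, _⟩ := seg_facts a b hseg
    rw [hfu hpT, hfu hqT] at hfr
    have h0 : det3 a b r = 0 := by linarith
    have hrS : r ∈ S := mkS hrP h0
    apply hadj r hrS
    constructor <;> nlinarith [hgr]
  -- assemble the K4
  have hxny : x ≠ y := Ne.symm hyx
  have hxp : x ≠ p := fun h => by rw [h, hfu hpT] at hfx; linarith
  have hxq : x ≠ q := fun h => by rw [h, hfu hqT] at hfx; linarith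
  have hyp : y ≠ p := fun h => by rw [h, hfu hpT] at hfy; linarith
  have hyq : y ≠ q := fun h => by rw [h, hfu hqT] at hfy; linarith
  have hpq : p ≠ q := fun h => by rw [h] at hgpq; exact lt_irrefl _ hgpq
  exact hasK4_of hxP hyP (memS (hT'sub hpT)).1 (memS (hT'sub hqT)).1
    hxny hxp hxq hyp hyq hpq
    V2 (V1 p (hT'sub hpT)) (V1 q (hT'sub hqT))
    (V4 p (hT'sub hpT) (hT'nb p hpT)) (V4 q (hT'sub hqT) (hT'nb q hqT)) V6


/-- an extreme (lex-max) point of `P` lies on no open segment between points of `P` -/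
lemma exists_extreme {P : Finset V} (hne : P.Nonempty) :
    ∃ v ∈ P, ∀ p ∈ P, ∀ q ∈ P, p ≠ q → v ∉ openSegment ℝ p q := by
  classical
  obtain ⟨m, hm, hm1⟩ := P.exists_max_image (fun z => z.1) hne
  have hne2 : (P.filter (fun z => z.1 = m.1)).Nonempty := ⟨m, Finset.mem_filter.mpr ⟨hm, rfl⟩⟩
  obtain ⟨v, hv, hv2⟩ := (P.filter (fun z => z.1 = m.1)).exists_max_image (fun z => z.2) hne2
  obtain ⟨hvP, hv1⟩ := Finset.mem_filter.mp hv
  refine ⟨v, hvP, fun p hp q hq hpq hseg => ?_⟩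
  obtain ⟨t, ht0, ht1, h1, h2⟩ := mem_openSegment_iff.mp hseg
  have hp1 : p.1 ≤ v.1 := hv1 ▸ hm1 p hp
  have hq1 : q.1 ≤ v.1 := hv1 ▸ hm1 q hq
  have hpv : p.1 = v.1 := by nlinarith
  have hqv : q.1 = v.1 := by nlinarith
  have hp2 : p.2 ≤ v.2 := hv2 p (Finset.mem_filter.mpr ⟨hp, by rw [hpv, hv1]⟩)
  have hq2 : q.2 ≤ v.2 := hv2 q (Finset.mem_filter.mpr ⟨hq, by rw [hqv, hv1]⟩)
  have hpv2 : p.2 = v.2 := by nlinarith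
  have hqv2 : q.2 = v.2 := by nlinarith
  exact hpq (Prod.ext (by rw [hpv, hqv]) (by rw [hpv2, hqv2]))

lemma noK4_erase {P : Finset V} {v : V} (hnk : ¬ HasK4 P)
    (hv : ∀ p ∈ P, ∀ q ∈ P, p ≠ q → v ∉ openSegment ℝ p q) :
    ¬ HasK4 (P.erase v) := by
  rintro ⟨S, hS, hcard, hvis⟩
  apply hnk
  refine ⟨S, fun z hz => Finset.mem_of_mem_erase (hS hz), hcard, ?_⟩
  intro p hp q hq hpq r hr hseg
  by_cases hrv : r = v
  · subst hrv
    exact hv p (Finset.mem_of_mem_erase (hS hp)) q (Finset.mem_of_mem_erase (hS hq)) hpq hseg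
  · exact hvis p hp q hq hpq r (Finset.mem_erase.mpr ⟨hrv, hr⟩) hseg

/-- if exactly three points of `P` are off a line through ≥ 4 points of `P`, there is a K4 -/
lemma three_off {P : Finset V} {u v : V} (hu : u ∈ P) (hv : v ∈ P) (huv : u ≠ v)
    (hk : 4 ≤ (P.filter (fun z => det3 u v z = 0)).card)
    (ht : (P.filter (fun z => det3 u v z = 0)).card + 3 = P.card) :
    HasK4 P := by
  classical
  have hsplit : (P.filter (fun z => ¬ det3 u v z = 0)).card = 3 := by
    have := Finset.card_filter_add_card_filter_not (s := P)
      (p := fun z => det3 u v z = 0)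
    omega
  have hunion : P.filter (fun z => ¬ det3 u v z = 0) =
      P.filter (fun z => 0 < det3 u v z) ∪ P.filter (fun z => det3 u v z < 0) := by
    ext z
    simp only [Finset.mem_filter, Finset.mem_union]
    constructor
    · rintro ⟨hz, hnz⟩
      rcases lt_trichotomy (det3 u v z) 0 with h | h | h
      · exact Or.inr ⟨hz, h⟩
      · exact absurd h hnz
      · exact Or.inl ⟨hz, h⟩
    · rintro (⟨hz, h⟩ | ⟨hz, h⟩) <;> exact ⟨hz, by linarith⟩
  have hdisj : Disjoint (P.filter (fun z => 0 < det3 u v z))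
      (P.filter (fun z => det3 u v z < 0)) := by
    rw [Finset.disjoint_left]
    intro z h1 h2
    have := (Finset.mem_filter.mp h1).2
    have := (Finset.mem_filter.mp h2).2
    linarith
  have hcards : (P.filter (fun z => 0 < det3 u v z)).card +
      (P.filter (fun z => det3 u v z < 0)).card = 3 := by
    rw [← Finset.card_union_of_disjoint hdisj, ← hunion, hsplit]
  have hswap0 : P.filter (fun z => det3 v u z = 0) = P.filter (fun z => det3 u v z = 0) := by
    apply Finset.filter_congr
    intro z _
    rw [det3_swap v u z]
    constructor <;> intro h <;> linarith
  have hswapA : P.filter (fun z => 0 < det3 v u z) = P.filter (fun z => det3 u v z < 0) := by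
    apply Finset.filter_congr
    intro z _
    rw [det3_swap v u z]
    constructor <;> intro h <;> linarith
  rcases le_or_gt 2 (P.filter (fun z => 0 < det3 u v z)).card with h | h
  · exact lemmaM huv hk h
  · have h2 : 2 ≤ (P.filter (fun z => det3 u v z < 0)).card := by omega
    exact lemmaM (Ne.symm huv) (hswap0 ▸ hk) (hswapA ▸ h2)

lemma det3_left (u v : V) : det3 u v u = 0 := by unfold det3; ring
lemma det3_right (u v : V) : det3 u v v = 0 := by unfold det3; ring

lemma coll_cycle {p q r : V} (h : det3 p q r = 0) : det3 q r p = 0 := by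
  rw [det3_cycle q r p, det3_cycle r p q]; exact h

lemma coll_swap {p q r : V} (h : det3 p q r = 0) : det3 q p r = 0 := by
  rw [det3_swap q p r, h, neg_zero]

/-- a bottom edge: two points of `P` such that all of `P` is weakly on one side -/
lemma exists_bottom {P : Finset V} (h2 : 2 ≤ P.card) :
    ∃ a ∈ P, ∃ b ∈ P, a ≠ b ∧ ∀ z ∈ P, 0 ≤ det3 a b z := by
  classical
  have hne : P.Nonempty := Finset.card_pos.mp (by omega)
  obtain ⟨m, hm, hm1⟩ := P.exists_min_image (fun z => z.2) hne
  have hne2 : (P.filter (fun z => z.2 = m.2)).Nonempty := ⟨m, Finset.mem_filter.mpr ⟨hm, rfl⟩⟩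
  obtain ⟨va, hva, hva2⟩ := (P.filter (fun z => z.2 = m.2)).exists_min_image (fun z => z.1) hne2
  obtain ⟨haP, ha2⟩ := Finset.mem_filter.mp hva
  set a := va with hadef
  have hmin2 : ∀ z ∈ P, a.2 ≤ z.2 := fun z hz => ha2 ▸ hm1 z hz
  have hmin1 : ∀ z ∈ P, z.2 = a.2 → a.1 ≤ z.1 := fun z hz hz2 =>
    hva2 z (Finset.mem_filter.mpr ⟨hz, by rw [hz2, ha2]⟩)
  have hBne : (P.erase a).Nonempty := by
    rw [← Finset.card_pos, Finset.card_erase_of_mem haP]; omega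
  by_cases hhor : ∃ w ∈ P.erase a, w.2 = a.2
  · obtain ⟨b, hbB, hb2⟩ := hhor
    have hbP : b ∈ P := Finset.mem_of_mem_erase hbB
    have hba : b ≠ a := Finset.ne_of_mem_erase hbB
    have hb1 : a.1 < b.1 := by
      rcases lt_or_eq_of_le (hmin1 b hbP hb2) with h | h
      · exact h
      · exact absurd (Prod.ext h.symm hb2) hba
    refine ⟨a, haP, b, hbP, Ne.symm hba, fun z hz => ?_⟩
    have h1 : 0 ≤ z.2 - a.2 := by linarith [hmin2 z hz]
    unfold det3
    rw [hb2]
    have : a.2 - a.2 = 0 := by ring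
    rw [this]
    nlinarith
  · push_neg at hhor
    have hup : ∀ w ∈ P.erase a, 0 < w.2 - a.2 := by
      intro w hw
      rcases lt_or_eq_of_le (hmin2 w (Finset.mem_of_mem_erase hw)) with h | h
      · linarith
      · exact absurd h.symm (hhor w hw)
    obtain ⟨b, hbB, hbmax⟩ := (P.erase a).exists_max_image
      (fun w => (w.1 - a.1)/(w.2 - a.2)) hBne
    have hbP : b ∈ P := Finset.mem_of_mem_erase hbB
    have hb2 : 0 < b.2 - a.2 := hup b hbB
    refine ⟨a, haP, b, hbP, (Finset.ne_of_mem_erase hbB).symm, fun z hz => ?_⟩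
    by_cases hza : z = a
    · rw [hza]; rw [det3_left]
    · have hz2 : 0 < z.2 - a.2 := hup z (Finset.mem_erase.mpr ⟨hza, hz⟩)
      have hk := hbmax z (Finset.mem_erase.mpr ⟨hza, hz⟩)
      rw [div_le_div_iff₀ hz2 hb2] at hk
      unfold det3
      nlinarith

/-- four distinct collinear points contradict the no-4-collinear hypothesis -/
lemma no4c {P : Finset V}
    (hno4 : ∀ u ∈ P, ∀ v ∈ P, u ≠ v → (P.filter (fun z => det3 u v z = 0)).card ≤ 3)
    {u v w r : V} (hu : u ∈ P) (hv : v ∈ P) (hw : w ∈ P) (hr : r ∈ P)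
    (huv : u ≠ v) (huw : u ≠ w) (hur : u ≠ r) (hvw : v ≠ w) (hvr : v ≠ r) (hwr : w ≠ r)
    (h1 : det3 u v w = 0) (h2 : det3 u v r = 0) : False := by
  classical
  have hsub : {u, v, w, r} ⊆ P.filter (fun z => det3 u v z = 0) := by
    intro z hz
    simp only [Finset.mem_insert, Finset.mem_singleton] at hz
    rcases hz with rfl | rfl | rfl | rfl
    · exact Finset.mem_filter.mpr ⟨hu, det3_left _ _⟩
    · exact Finset.mem_filter.mpr ⟨hv, det3_right _ _⟩
    · exact Finset.mem_filter.mpr ⟨hw, h1⟩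
    · exact Finset.mem_filter.mpr ⟨hr, h2⟩
  have hc : ({u, v, w, r} : Finset V).card = 4 := by
    rw [Finset.card_insert_of_notMem (by simp [huv, huw, hur]),
      Finset.card_insert_of_notMem (by simp [hvw, hvr]),
      Finset.card_insert_of_notMem (by simp [hwr]), Finset.card_singleton]
  have := Finset.card_le_card hsub
  have := hno4 u hu v hv huv
  omega

lemma seg_aff (a b : V) {u v r : V} {t : ℝ} (h1 : r.1 = u.1 + t*(v.1-u.1))
    (h2 : r.2 = u.2 + t*(v.2-u.2)) :
    det3 a b r = det3 a b u + t*(det3 a b v - det3 a b u) := by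
  simp only [det3, h1, h2]; ring

lemma det3_swap23 (a b c : V) : det3 a c b = - det3 a b c := by unfold det3; ring

set_option maxHeartbeats 1000000 in
/-- the final affine impossibility -/
lemma lemmaQ {p1 p2 x y z1 z2 z3 : V} (hind : det3 p1 p2 x ≠ 0)
    (h1 : x ∈ openSegment ℝ y p1) (h2 : y ∈ openSegment ℝ z1 p2)
    (h3 : z1 ∈ openSegment ℝ z2 x) (h4 : z1 ∈ openSegment ℝ z3 p1)
    (h5 : z2 ∈ openSegment ℝ z3 y) : False := by
  obtain ⟨t1, ht10, ht11, e11, e12⟩ := mem_openSegment_iff.mp h1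
  obtain ⟨t2, ht20, ht21, e21, e22⟩ := mem_openSegment_iff.mp h2
  obtain ⟨t3, ht30, ht31, e31, e32⟩ := mem_openSegment_iff.mp h3
  obtain ⟨t4, ht40, ht41, e41, e42⟩ := mem_openSegment_iff.mp h4
  obtain ⟨t5, ht50, ht51, e51, e52⟩ := mem_openSegment_iff.mp h5
  -- the two affine functionals C = det3 p1 p2 and D = det3 p1 x
  have hC1 := seg_aff p1 p2 e11 e12
  have hC2 := seg_aff p1 p2 e21 e22
  have hC3 := seg_aff p1 p2 e31 e32
  have hC4 := seg_aff p1 p2 e41 e42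
  have hC5 := seg_aff p1 p2 e51 e52
  have hD1 := seg_aff p1 x e11 e12
  have hD2 := seg_aff p1 x e21 e22
  have hD3 := seg_aff p1 x e31 e32
  have hD4 := seg_aff p1 x e41 e42
  have hD5 := seg_aff p1 x e51 e52
  rw [det3_left] at hC1 hC4
  rw [det3_right] at hC2
  rw [det3_right] at hD1 hD3
  rw [det3_left] at hD1 hD4
  -- D y = 0
  have hDy : det3 p1 x y = 0 := by
    have h0 : (1 - t1) * det3 p1 x y = 0 := by linarith
    rcases mul_eq_zero.mp h0 with h | h
    · linarith
    · exact h
  rw [hDy] at hD2 hD5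
  -- D p2 ≠ 0
  have hDp2 : det3 p1 x p2 ≠ 0 := by
    rw [det3_swap23]
    simpa using hind
  -- D z3 ≠ 0
  have hDz3 : det3 p1 x z3 ≠ 0 := by
    intro h0
    rw [h0] at hD4 hD5
    have hz1 : det3 p1 x z1 = 0 := by simpa using hD4
    rw [hz1] at hD2
    have ht : t2 * det3 p1 x p2 = 0 := by linarith
    rcases mul_eq_zero.mp ht with h | h
    · linarith
    · exact hDp2 h
  -- the product relation  1 - t4 = (1-t3)(1-t5)
  have hstar : (1 - t4) = (1 - t3)*(1 - t5) := by
    have hrel : ((1 - t4) - (1 - t3)*(1 - t5)) * det3 p1 x z3 = 0 := by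
      linear_combination -hD4 + hD3 + (1-t3)*hD5
    rcases mul_eq_zero.mp hrel with h | h
    · linarith
    · exact absurd h hDz3
  -- C-side contradiction
  have hCy : det3 p1 p2 x = (1 - t1) * det3 p1 p2 y := by linarith [hC1]
  have hCyne : det3 p1 p2 y ≠ 0 := by
    intro h0
    rw [h0] at hCy
    apply hind
    rw [hCy]; ring
  have hfin : ((1 - t3)*t5 + t3*(1 - t1)) * det3 p1 p2 y = 0 := by
    linear_combination hC4 - hC3 - (1-t3)*hC5 + (det3 p1 p2 z3)*hstar - t3*hCy
  rcases mul_eq_zero.mp hfin with h | h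
  · nlinarith [mul_pos (show (0:ℝ) < 1 - t3 by linarith) ht50,
      mul_pos ht30 (show (0:ℝ) < 1 - t1 by linarith)]
  · exact hCyne h

lemma lexlt_ne {a b u v : V} (h : LexLt a b u v) : u ≠ v := by
  rintro rfl; exact lexlt_irrefl h

lemma lexlt_online {a b p w : V} (h1 : det3 a b p = 0) (h2 : 0 < det3 a b w) :
    LexLt a b p w := Or.inl (by rw [h1]; exact h2)

lemma ne_online {a b p w : V} (h1 : det3 a b p = 0) (h2 : 0 < det3 a b w) : p ≠ w := by
  rintro rfl; rw [h1] at h2; exact lt_irrefl _ h2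

lemma coll_swap23 {p q r : V} (h : det3 p q r = 0) : det3 p r q = 0 := by
  rw [det3_swap23 p q r, h, neg_zero]

lemma seg_symm {u v r : V} (h : r ∈ openSegment ℝ u v) : r ∈ openSegment ℝ v u := by
  rw [openSegment_symm]; exact h

/-- a blocker between two weakly-above points (at least one strictly) is strictly above
and lexicographically strictly between -/
lemma blocker_above {a b u v : V} (hlex : LexLt a b u v)
    (hu0 : 0 ≤ det3 a b u) (hv0 : 0 ≤ det3 a b v)
    (hpos : 0 < det3 a b u ∨ 0 < det3 a b v)
    {r : V} (hseg : r ∈ openSegment ℝ u v) :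
    0 < det3 a b r ∧ LexLt a b u r ∧ LexLt a b r v ∧ det3 u v r = 0 := by
  obtain ⟨t, ht0, ht1, hf, hg, hc⟩ := seg_facts a b hseg
  obtain ⟨l1, l2⟩ := lex_between a b hseg hlex
  refine ⟨?_, l1, l2, hc⟩
  rcases hpos with h | h <;> nlinarith

lemma case3sub {P : Finset V} {a b p1 p2 p3 x y z1 z2 : V}
    (hnk : ¬ HasK4 P)
    (hno4 : ∀ u ∈ P, ∀ v ∈ P, u ≠ v → (P.filter (fun z => det3 u v z = 0)).card ≤ 3)
    (mp1 : p1 ∈ P) (mp2 : p2 ∈ P) (mp3 : p3 ∈ P) (mx : x ∈ P) (my : y ∈ P)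
    (mz1 : z1 ∈ P) (mz2 : z2 ∈ P)
    (hp1 : det3 a b p1 = 0) (hp2 : det3 a b p2 = 0) (hp3 : det3 a b p3 = 0)
    (hfx : 0 < det3 a b x) (hfy : 0 < det3 a b y)
    (hfz1 : 0 < det3 a b z1) (hfz2 : 0 < det3 a b z2)
    (Lxy : LexLt a b x y) (Lyz1 : LexLt a b y z1) (Lz1z2 : LexLt a b z1 z2)
    (habove : ∀ r ∈ P, 0 < det3 a b r → r = x ∨ r = y ∨ r = z1 ∨ r = z2)
    (vxy : Vis P x y) (vyz1 : Vis P y z1) (vxz1 : Vis P x z1)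
    (cbr : det3 y p2 x = 0)
    (cA : det3 z1 p1 x = 0)
    (cK : det3 z1 p3 y = 0) : False := by
  have nxy := lexlt_ne Lxy
  have nyz1 := lexlt_ne Lyz1
  have nz1z2 := lexlt_ne Lz1z2
  have Lxz1 := lexlt_trans Lxy Lyz1
  have Lxz2 := lexlt_trans Lxz1 Lz1z2
  have Lyz2 := lexlt_trans Lyz1 Lz1z2
  have nxz1 := lexlt_ne Lxz1
  have nxz2 := lexlt_ne Lxz2
  have nyz2 := lexlt_ne Lyz2
  have vxz2 : Vis P x z2 := by
    intro r hrP hseg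
    obtain ⟨hra, l1, l2, hcol⟩ := blocker_above Lxz2 (le_of_lt hfx) (le_of_lt hfz2)
      (Or.inl hfx) hseg
    rcases habove r hrP hra with rfl | rfl | rfl | rfl
    · exact lexlt_irrefl l1
    · exact no4c hno4 mx my mz2 mp2 nxy nxz2 (ne_online hp2 hfx).symm nyz2
        (ne_online hp2 hfy).symm (ne_online hp2 hfz2).symm
        (coll_swap23 hcol) (coll_cycle (coll_cycle cbr))
    · exact no4c hno4 mx mz1 mz2 mp1 nxz1 nxz2 (ne_online hp1 hfx).symm nz1z2
        (ne_online hp1 hfz1).symm (ne_online hp1 hfz2).symm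
        (coll_swap23 hcol) (coll_cycle (coll_cycle cA))
    · exact lexlt_irrefl l2
  have vyz2 : Vis P y z2 := by
    intro r hrP hseg
    obtain ⟨hra, l1, l2, hcol⟩ := blocker_above Lyz2 (le_of_lt hfy) (le_of_lt hfz2)
      (Or.inl hfy) hseg
    rcases habove r hrP hra with rfl | rfl | rfl | rfl
    · exact lexlt_asymm l1 Lxy
    · exact lexlt_irrefl l1
    · exact no4c hno4 my mz1 mz2 mp3 nyz1 nyz2 (ne_online hp3 hfy).symm nz1z2
        (ne_online hp3 hfz1).symm (ne_online hp3 hfz2).symm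
        (coll_swap23 hcol) (coll_cycle (coll_cycle cK))
    · exact lexlt_irrefl l2
  have vz1z2 : Vis P z1 z2 := by
    intro r hrP hseg
    obtain ⟨hra, l1, l2, _⟩ := blocker_above Lz1z2 (le_of_lt hfz1) (le_of_lt hfz2)
      (Or.inl hfz1) hseg
    rcases habove r hrP hra with rfl | rfl | rfl | rfl
    · exact lexlt_asymm l1 Lxz1
    · exact lexlt_asymm l1 Lyz1
    · exact lexlt_irrefl l1
    · exact lexlt_irrefl l2
  exact hnk (hasK4_of mx my mz1 mz2 nxy nxz1 nxz2 nyz1 nyz2 nz1z2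
    vxy vxz1 vxz2 vyz1 vyz2 vz1z2)

lemma case2sub {P : Finset V} {a b p1 p2 x y z1 z2 z3 : V}
    (hnk : ¬ HasK4 P)
    (hno4 : ∀ u ∈ P, ∀ v ∈ P, u ≠ v → (P.filter (fun z => det3 u v z = 0)).card ≤ 3)
    (mp1 : p1 ∈ P) (mp2 : p2 ∈ P) (mx : x ∈ P) (my : y ∈ P)
    (mz1 : z1 ∈ P) (mz2 : z2 ∈ P) (mz3 : z3 ∈ P)
    (hp1 : det3 a b p1 = 0) (hp2 : det3 a b p2 = 0) (np12 : p1 ≠ p2)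
    (hind : det3 p1 p2 x ≠ 0)
    (hfx : 0 < det3 a b x) (hfy : 0 < det3 a b y) (hfz1 : 0 < det3 a b z1)
    (hfz2 : 0 < det3 a b z2) (hfz3 : 0 < det3 a b z3)
    (Lxy : LexLt a b x y) (Lyz1 : LexLt a b y z1) (Lz1z2 : LexLt a b z1 z2)
    (Lz2z3 : LexLt a b z2 z3)
    (hC0 : ∀ r ∈ P, det3 a b r = 0 → r = p1 ∨ r = p2)
    (habove : ∀ r ∈ P, 0 < det3 a b r → r = x ∨ r = y ∨ r = z1 ∨ r = z2 ∨ r = z3)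
    (hbr : x ∈ openSegment ℝ y p1) : False := by
  have Lxz1 := lexlt_trans Lxy Lyz1
  have Lxz2 := lexlt_trans Lxz1 Lz1z2
  have Lxz3 := lexlt_trans Lxz2 Lz2z3
  have Lyz2 := lexlt_trans Lyz1 Lz1z2
  have Lyz3 := lexlt_trans Lyz2 Lz2z3
  have Lz1z3 := lexlt_trans Lz1z2 Lz2z3
  have nxy := lexlt_ne Lxy
  have nxz1 := lexlt_ne Lxz1
  have nxz2 := lexlt_ne Lxz2
  have nxz3 := lexlt_ne Lxz3
  have nyz1 := lexlt_ne Lyz1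
  have nyz2 := lexlt_ne Lyz2
  have nyz3 := lexlt_ne Lyz3
  have nz1z2 := lexlt_ne Lz1z2
  have nz1z3 := lexlt_ne Lz1z3
  have nz2z3 := lexlt_ne Lz2z3
  have np1x := ne_online hp1 hfx
  have np1y := ne_online hp1 hfy
  have np1z1 := ne_online hp1 hfz1
  have np1z2 := ne_online hp1 hfz2
  have np1z3 := ne_online hp1 hfz3
  have np2x := ne_online hp2 hfx
  have np2y := ne_online hp2 hfy
  have np2z1 := ne_online hp2 hfz1
  have np2z2 := ne_online hp2 hfz2
  have np2z3 := ne_online hp2 hfz3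
  have cbr : det3 y p1 x = 0 := coll_of_mem hbr
  have cbr1 : det3 p1 x y = 0 := coll_cycle cbr
  have cbr2 : det3 x y p1 = 0 := coll_cycle cbr1
  have cbryx : det3 y x p1 = 0 := coll_swap cbr2
  have cbrp1y : det3 p1 y x = 0 := coll_swap23 cbr1
  -- basic visibilities
  have vp1p2 : Vis P p1 p2 := by
    intro r hrP hseg
    obtain ⟨t, ht0, ht1, hf, _, _⟩ := seg_facts a b hseg
    rw [hp1, hp2] at hf
    rcases hC0 r hrP (by linarith) with rfl | rfl
    · exact left_not_mem_openSegment np12 hseg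
    · exact right_not_mem_openSegment np12 hseg
  have vp1x : Vis P p1 x := by
    intro r hrP hseg
    obtain ⟨hra, l1, l2, hcol⟩ := blocker_above (lexlt_online hp1 hfx)
      (le_of_eq hp1.symm) (le_of_lt hfx) (Or.inr hfx) hseg
    rcases habove r hrP hra with rfl | rfl | rfl | rfl | rfl
    · exact lexlt_irrefl l2
    · exact lexlt_asymm l2 Lxy
    · exact lexlt_asymm l2 Lxz1
    · exact lexlt_asymm l2 Lxz2
    · exact lexlt_asymm l2 Lxz3
  have vp2x : Vis P p2 x := by
    intro r hrP hseg
    obtain ⟨hra, l1, l2, hcol⟩ := blocker_above (lexlt_online hp2 hfx)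
      (le_of_eq hp2.symm) (le_of_lt hfx) (Or.inr hfx) hseg
    rcases habove r hrP hra with rfl | rfl | rfl | rfl | rfl
    · exact lexlt_irrefl l2
    · exact lexlt_asymm l2 Lxy
    · exact lexlt_asymm l2 Lxz1
    · exact lexlt_asymm l2 Lxz2
    · exact lexlt_asymm l2 Lxz3
  have vxy : Vis P x y := by
    intro r hrP hseg
    obtain ⟨hra, l1, l2, hcol⟩ := blocker_above Lxy (le_of_lt hfx) (le_of_lt hfy)
      (Or.inl hfx) hseg
    rcases habove r hrP hra with rfl | rfl | rfl | rfl | rfl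
    · exact lexlt_irrefl l1
    · exact lexlt_irrefl l2
    · exact lexlt_asymm l2 Lyz1
    · exact lexlt_asymm l2 Lyz2
    · exact lexlt_asymm l2 Lyz3
  have vp2y : Vis P p2 y := by
    intro r hrP hseg
    obtain ⟨hra, l1, l2, hcol⟩ := blocker_above (lexlt_online hp2 hfy)
      (le_of_eq hp2.symm) (le_of_lt hfy) (Or.inr hfy) hseg
    rcases habove r hrP hra with rfl | rfl | rfl | rfl | rfl
    · exact no4c hno4 my mx mp2 mp1 (Ne.symm nxy) np2y.symm np1y.symm np2x.symm np1x.symm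
        (Ne.symm np12) (coll_cycle hcol) cbryx
    · exact lexlt_irrefl l2
    · exact lexlt_asymm l2 Lyz1
    · exact lexlt_asymm l2 Lyz2
    · exact lexlt_asymm l2 Lyz3
  have vyz1 : Vis P y z1 := by
    intro r hrP hseg
    obtain ⟨hra, l1, l2, hcol⟩ := blocker_above Lyz1 (le_of_lt hfy) (le_of_lt hfz1)
      (Or.inl hfy) hseg
    rcases habove r hrP hra with rfl | rfl | rfl | rfl | rfl
    · exact lexlt_asymm l1 Lxy
    · exact lexlt_irrefl l1
    · exact lexlt_irrefl l2
    · exact lexlt_asymm l2 Lz1z2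
    · exact lexlt_asymm l2 Lz1z3
  have vxz1 : Vis P x z1 := by
    intro r hrP hseg
    obtain ⟨hra, l1, l2, hcol⟩ := blocker_above Lxz1 (le_of_lt hfx) (le_of_lt hfz1)
      (Or.inl hfx) hseg
    rcases habove r hrP hra with rfl | rfl | rfl | rfl | rfl
    · exact lexlt_irrefl l1
    · exact no4c hno4 mx my mz1 mp1 nxy nxz1 np1x.symm nyz1 np1y.symm np1z1.symm
        (coll_swap23 hcol) cbr2
    · exact lexlt_irrefl l2
    · exact lexlt_asymm l2 Lz1z2
    · exact lexlt_asymm l2 Lz1z3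
  have vp1z1 : Vis P p1 z1 := by
    intro r hrP hseg
    obtain ⟨hra, l1, l2, hcol⟩ := blocker_above (lexlt_online hp1 hfz1)
      (le_of_eq hp1.symm) (le_of_lt hfz1) (Or.inr hfz1) hseg
    rcases habove r hrP hra with rfl | rfl | rfl | rfl | rfl
    · exact no4c hno4 mp1 mx mz1 my np1x np1z1 np1y nxz1 nxy (Ne.symm nyz1)
        (coll_swap23 hcol) cbr1
    · exact no4c hno4 mp1 my mz1 mx np1y np1z1 np1x nyz1 (Ne.symm nxy) (Ne.symm nxz1)
        (coll_swap23 hcol) cbrp1y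
    · exact lexlt_irrefl l2
    · exact lexlt_asymm l2 Lz1z2
    · exact lexlt_asymm l2 Lz1z3
  have vz1z2 : Vis P z1 z2 := by
    intro r hrP hseg
    obtain ⟨hra, l1, l2, _⟩ := blocker_above Lz1z2 (le_of_lt hfz1) (le_of_lt hfz2)
      (Or.inl hfz1) hseg
    rcases habove r hrP hra with rfl | rfl | rfl | rfl | rfl
    · exact lexlt_asymm l1 Lxz1
    · exact lexlt_asymm l1 Lyz1
    · exact lexlt_irrefl l1
    · exact lexlt_irrefl l2
    · exact lexlt_asymm l2 Lz2z3
  -- z1 must be blocked from p2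
  have hq1 : ∃ r ∈ P, r ∈ openSegment ℝ p2 z1 := by
    by_contra hcon
    push_neg at hcon
    exact hnk (hasK4_of mp1 mp2 mx mz1 np12 np1x np1z1 np2x np2z1 nxz1
      vp1p2 vp1x vp1z1 vp2x (fun r hr => hcon r hr) vxz1)
  obtain ⟨r0, hr0P, hseg1⟩ := hq1
  obtain ⟨hra0, l10, l20, hcol0⟩ := blocker_above (lexlt_online hp2 hfz1)
    (le_of_eq hp2.symm) (le_of_lt hfz1) (Or.inr hfz1) hseg1
  rcases habove r0 hr0P hra0 with h0 | h0 | h0 | h0 | h0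
  · -- BRANCH A : x ∈ open (p2, z1)
    obtain rfl := h0.symm
    have cA1 : det3 x z1 p2 = 0 := coll_swap (coll_cycle hcol0)
    have vxz2 : Vis P x z2 := by
      intro r hrP hseg
      obtain ⟨hra, l1, l2, hcol⟩ := blocker_above Lxz2 (le_of_lt hfx) (le_of_lt hfz2)
        (Or.inl hfx) hseg
      rcases habove r hrP hra with rfl | rfl | rfl | rfl | rfl
      · exact lexlt_irrefl l1
      · exact no4c hno4 mx my mz2 mp1 nxy nxz2 np1x.symm nyz2 np1y.symm np1z2.symm
          (coll_swap23 hcol) cbr2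
      · exact no4c hno4 mx mz1 mz2 mp2 nxz1 nxz2 np2x.symm nz1z2 np2z1.symm np2z2.symm
          (coll_swap23 hcol) cA1
      · exact lexlt_irrefl l2
      · exact lexlt_asymm l2 Lz2z3
    have hq2 : ∃ r ∈ P, r ∈ openSegment ℝ p1 z2 := by
      by_contra hcon
      push_neg at hcon
      exact hnk (hasK4_of mp1 mx mz1 mz2 np1x np1z1 np1z2 nxz1 nxz2 nz1z2
        vp1x vp1z1 (fun r hr => hcon r hr) vxz1 vxz2 vz1z2)
    obtain ⟨r1, hr1P, hseg2⟩ := hq2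
    obtain ⟨hra1, l11, l21, hcol1⟩ := blocker_above (lexlt_online hp1 hfz2)
      (le_of_eq hp1.symm) (le_of_lt hfz2) (Or.inr hfz2) hseg2
    rcases habove r1 hr1P hra1 with h1 | h1 | h1 | h1 | h1
    · exact no4c hno4 mp1 mx mz2 my np1x np1z2 np1y nxz2 nxy (Ne.symm nyz2)
        (coll_swap23 (h1 ▸ hcol1)) cbr1
    · exact no4c hno4 mp1 my mz2 mx np1y np1z2 np1x nyz2 (Ne.symm nxy) (Ne.symm nxz2)
        (coll_swap23 (h1 ▸ hcol1)) cbrp1y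
    · -- z1 between p1 and z2
      obtain rfl := h1.symm
      have cA2 : det3 z1 z2 p1 = 0 := coll_swap (coll_cycle hcol1)
      have vyz2 : Vis P y z2 := by
        intro r hrP hseg
        obtain ⟨hra, l1, l2, hcol⟩ := blocker_above Lyz2 (le_of_lt hfy) (le_of_lt hfz2)
          (Or.inl hfy) hseg
        rcases habove r hrP hra with rfl | rfl | rfl | rfl | rfl
        · exact lexlt_asymm l1 Lxy
        · exact lexlt_irrefl l1
        · exact no4c hno4 mz1 mz2 my mp1 nz1z2 (Ne.symm nyz1) np1z1.symm (Ne.symm nyz2)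
            np1z2.symm np1y.symm (coll_swap (coll_cycle hcol)) cA2
        · exact lexlt_irrefl l2
        · exact lexlt_asymm l2 Lz2z3
      exact hnk (hasK4_of mx my mz1 mz2 nxy nxz1 nxz2 nyz1 nyz2 nz1z2
        vxy vxz1 vxz2 vyz1 vyz2 vz1z2)
    · exact lexlt_irrefl (h1 ▸ l21)
    · exact lexlt_asymm (h1 ▸ l21) Lz2z3
  · -- BRANCH B : y ∈ open (p2, z1)
    obtain rfl := h0.symm
    have cB1 : det3 y z1 p2 = 0 := coll_swap (coll_cycle hcol0)
    have vyz2 : Vis P y z2 := by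
      intro r hrP hseg
      obtain ⟨hra, l1, l2, hcol⟩ := blocker_above Lyz2 (le_of_lt hfy) (le_of_lt hfz2)
        (Or.inl hfy) hseg
      rcases habove r hrP hra with rfl | rfl | rfl | rfl | rfl
      · exact lexlt_asymm l1 Lxy
      · exact lexlt_irrefl l1
      · exact no4c hno4 my mz1 mz2 mp2 nyz1 nyz2 np2y.symm nz1z2 np2z1.symm np2z2.symm
          (coll_swap23 hcol) cB1
      · exact lexlt_irrefl l2
      · exact lexlt_asymm l2 Lz2z3
    have hq3 : ∃ r ∈ P, r ∈ openSegment ℝ x z2 := by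
      by_contra hcon
      push_neg at hcon
      exact hnk (hasK4_of mx my mz1 mz2 nxy nxz1 nxz2 nyz1 nyz2 nz1z2
        vxy vxz1 (fun r hr => hcon r hr) vyz1 vyz2 vz1z2)
    obtain ⟨r1, hr1P, hseg3⟩ := hq3
    obtain ⟨hra1, l11, l21, hcol1⟩ := blocker_above Lxz2 (le_of_lt hfx) (le_of_lt hfz2)
      (Or.inl hfx) hseg3
    rcases habove r1 hr1P hra1 with h1 | h1 | h1 | h1 | h1
    · exact lexlt_irrefl (h1 ▸ l11)
    · exact no4c hno4 mx my mz2 mp1 nxy nxz2 np1x.symm nyz2 np1y.symm np1z2.symm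
        (coll_swap23 (h1 ▸ hcol1)) cbr2
    · -- z1 between x and z2
      obtain rfl := h1.symm
      have cB3 : det3 x z2 z1 = 0 := hcol1
      have cB3a : det3 x z1 z2 = 0 := coll_swap23 cB3
      have cB3b : det3 z1 z2 x = 0 := coll_swap (coll_cycle cB3)
      have vp1z2 : Vis P p1 z2 := by
        intro r hrP hseg
        obtain ⟨hra, l1, l2, hcol⟩ := blocker_above (lexlt_online hp1 hfz2)
          (le_of_eq hp1.symm) (le_of_lt hfz2) (Or.inr hfz2) hseg
        rcases habove r hrP hra with rfl | rfl | rfl | rfl | rfl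
        · exact no4c hno4 mp1 mx mz2 my np1x np1z2 np1y nxz2 nxy (Ne.symm nyz2)
            (coll_swap23 hcol) cbr1
        · exact no4c hno4 mp1 my mz2 mx np1y np1z2 np1x nyz2 (Ne.symm nxy) (Ne.symm nxz2)
            (coll_swap23 hcol) cbrp1y
        · exact no4c hno4 mz1 mz2 mp1 mx nz1z2 np1z1.symm (Ne.symm nxz1) np1z2.symm
            (Ne.symm nxz2) np1x (coll_swap (coll_cycle hcol)) cB3b
        · exact lexlt_irrefl l2
        · exact lexlt_asymm l2 Lz2z3
      have vxz3 : Vis P x z3 := by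
        intro r hrP hseg
        obtain ⟨hra, l1, l2, hcol⟩ := blocker_above Lxz3 (le_of_lt hfx) (le_of_lt hfz3)
          (Or.inl hfx) hseg
        rcases habove r hrP hra with rfl | rfl | rfl | rfl | rfl
        · exact lexlt_irrefl l1
        · exact no4c hno4 mx my mz3 mp1 nxy nxz3 np1x.symm nyz3 np1y.symm np1z3.symm
            (coll_swap23 hcol) cbr2
        · exact no4c hno4 mx mz1 mz3 mz2 nxz1 nxz3 nxz2 nz1z3 nz1z2 (Ne.symm nz2z3)
            (coll_swap23 hcol) cB3a
        · exact no4c hno4 mx mz2 mz3 mz1 nxz2 nxz3 nxz1 nz2z3 (Ne.symm nz1z2)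
            (Ne.symm nz1z3) (coll_swap23 hcol) cB3
        · exact lexlt_irrefl l2
      have vz1z3 : Vis P z1 z3 := by
        intro r hrP hseg
        obtain ⟨hra, l1, l2, hcol⟩ := blocker_above Lz1z3 (le_of_lt hfz1) (le_of_lt hfz3)
          (Or.inl hfz1) hseg
        rcases habove r hrP hra with rfl | rfl | rfl | rfl | rfl
        · exact lexlt_asymm l1 Lxz1
        · exact lexlt_asymm l1 Lyz1
        · exact lexlt_irrefl l1
        · exact no4c hno4 mz1 mz2 mz3 mx nz1z2 nz1z3 (Ne.symm nxz1) nz2z3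
            (Ne.symm nxz2) (Ne.symm nxz3) (coll_swap23 hcol) cB3b
        · exact lexlt_irrefl l2
      have vz2z3 : Vis P z2 z3 := by
        intro r hrP hseg
        obtain ⟨hra, l1, l2, _⟩ := blocker_above Lz2z3 (le_of_lt hfz2) (le_of_lt hfz3)
          (Or.inl hfz2) hseg
        rcases habove r hrP hra with rfl | rfl | rfl | rfl | rfl
        · exact lexlt_asymm l1 Lxz2
        · exact lexlt_asymm l1 Lyz2
        · exact lexlt_asymm l1 Lz1z2
        · exact lexlt_irrefl l1
        · exact lexlt_irrefl l2
      have hq4 : ∃ r ∈ P, r ∈ openSegment ℝ y z3 := by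
        by_contra hcon
        push_neg at hcon
        exact hnk (hasK4_of mx my mz1 mz3 nxy nxz1 nxz3 nyz1 nyz3 nz1z3
          vxy vxz1 vxz3 vyz1 (fun r hr => hcon r hr) vz1z3)
      obtain ⟨r2, hr2P, hseg4⟩ := hq4
      obtain ⟨hra2, l12, l22, hcol2⟩ := blocker_above Lyz3 (le_of_lt hfy) (le_of_lt hfz3)
        (Or.inl hfy) hseg4
      rcases habove r2 hr2P hra2 with h2 | h2 | h2 | h2 | h2
      · exact lexlt_asymm (h2 ▸ l12) Lxy
      · exact lexlt_irrefl (h2 ▸ l12)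
      · exact no4c hno4 my mz1 mz3 mp2 nyz1 nyz3 np2y.symm nz1z3 np2z1.symm np2z3.symm
          (coll_swap23 (h2 ▸ hcol2)) cB1
      · -- z2 between y and z3
        obtain rfl := h2.symm
        have cB4 : det3 z2 z3 y = 0 := coll_swap (coll_cycle hcol2)
        have hq5 : ∃ r ∈ P, r ∈ openSegment ℝ p1 z3 := by
          by_contra hcon
          push_neg at hcon
          exact hnk (hasK4_of mp1 mz1 mz2 mz3 np1z1 np1z2 np1z3 nz1z2 nz1z3 nz2z3
            vp1z1 vp1z2 (fun r hr => hcon r hr) vz1z2 vz1z3 vz2z3)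
        obtain ⟨r3, hr3P, hseg5⟩ := hq5
        obtain ⟨hra3, l13, l23, hcol3⟩ := blocker_above (lexlt_online hp1 hfz3)
          (le_of_eq hp1.symm) (le_of_lt hfz3) (Or.inr hfz3) hseg5
        rcases habove r3 hr3P hra3 with h3 | h3 | h3 | h3 | h3
        · exact no4c hno4 mp1 mx mz3 my np1x np1z3 np1y nxz3 nxy (Ne.symm nyz3)
            (coll_swap23 (h3 ▸ hcol3)) cbr1
        · exact no4c hno4 mp1 my mz3 mx np1y np1z3 np1x nyz3 (Ne.symm nxy) (Ne.symm nxz3)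
            (coll_swap23 (h3 ▸ hcol3)) cbrp1y
        · -- z1 between p1 and z3 : the affine impossibility
          obtain rfl := h3.symm
          exact lemmaQ hind hbr (seg_symm hseg1) (seg_symm hseg3) (seg_symm hseg5)
            (seg_symm hseg4)
        · exact no4c hno4 mz2 mz3 mp1 my nz2z3 np1z2.symm (Ne.symm nyz2) np1z3.symm
            (Ne.symm nyz3) np1y (coll_swap (coll_cycle (h3 ▸ hcol3))) cB4
        · exact lexlt_irrefl (h3 ▸ l23)
      · exact lexlt_irrefl (h2 ▸ l22)
    · exact lexlt_irrefl (h1 ▸ l21)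
    · exact lexlt_asymm (h1 ▸ l21) Lz2z3
  · exact lexlt_irrefl (h0 ▸ l20)
  · exact lexlt_asymm (h0 ▸ l20) Lz1z2
  · exact lexlt_asymm (h0 ▸ l20) Lz1z3

lemma peel {a b : V} (hab : a ≠ b) (F : Finset V) (hne : 0 < F.card) :
    ∃ x ∈ F, (∀ w ∈ F, w ≠ x → LexLt a b x w) ∧ (F.erase x).card = F.card - 1 := by
  obtain ⟨x, hx, hmin⟩ := exists_lexmin a b F (Finset.card_pos.mp hne)
  exact ⟨x, hx, fun w hw hne' => lexlt_of_min hab (hmin w hw) hne'.symm,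
    by rw [Finset.card_erase_of_mem hx]⟩

/-- the n = 7 core: with at most 3 collinear there is always a K4, i.e. no-K4 is contradictory -/
lemma lemmaY {P : Finset V} (hcard : P.card = 7)
    (hno4 : ∀ u ∈ P, ∀ v ∈ P, u ≠ v → (P.filter (fun z => det3 u v z = 0)).card ≤ 3) :
    HasK4 P := by
  classical
  by_contra hnk
  obtain ⟨a, haP, b, hbP, hab, hall⟩ := exists_bottom (P := P) (by omega)
  set S : Finset V := P.filter (fun z => det3 a b z = 0) with hSdef
  set A : Finset V := P.filter (fun z => 0 < det3 a b z) with hAdef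
  have memS : ∀ {z}, z ∈ S → z ∈ P ∧ det3 a b z = 0 := fun h => Finset.mem_filter.mp h
  have memA : ∀ {z}, z ∈ A → z ∈ P ∧ 0 < det3 a b z := fun h => Finset.mem_filter.mp h
  have haS : a ∈ S := Finset.mem_filter.mpr ⟨haP, det3_left a b⟩
  have hbS : b ∈ S := Finset.mem_filter.mpr ⟨hbP, det3_right a b⟩
  have hS3 : S.card ≤ 3 := hno4 a haP b hbP hab
  have hS2 : 2 ≤ S.card := by
    have : {a, b} ⊆ S := by
      intro z hz
      simp only [Finset.mem_insert, Finset.mem_singleton] at hz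
      rcases hz with rfl | rfl
      · exact haS
      · exact hbS
    calc 2 = ({a, b} : Finset V).card := by
            rw [Finset.card_insert_of_notMem (by simp [hab]), Finset.card_singleton]
      _ ≤ S.card := Finset.card_le_card this
  have hAeq : P.filter (fun z => ¬ det3 a b z = 0) = A := by
    apply Finset.filter_congr
    intro z hz
    constructor
    · intro h
      rcases lt_or_eq_of_le (hall z hz) with h' | h'
      · exact h'
      · exact absurd h'.symm h
    · intro h
      linarith
  have hcards : S.card + A.card = 7 := by
    have h0 := Finset.card_filter_add_card_filter_not (s := P)
      (p := fun z => det3 a b z = 0)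
    rw [hAeq, hcard] at h0
    rw [hSdef]
    omega
  -- a helper for membership in A
  have mkA : ∀ {z}, z ∈ P → 0 < det3 a b z → z ∈ A := fun h1 h2 => Finset.mem_filter.mpr ⟨h1, h2⟩
  rcases (show S.card = 2 ∨ S.card = 3 by omega) with h | h
  · -- CASE |S| = 2 : S = {a, b}
    have hSeq : S = {a, b} := by
      symm
      apply Finset.eq_of_subset_of_card_le
      · intro z hz
        simp only [Finset.mem_insert, Finset.mem_singleton] at hz
        rcases hz with rfl | rfl
        · exact haS
        · exact hbS
      · rw [h, Finset.card_insert_of_notMem (by simp [hab]), Finset.card_singleton]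
    have hC0 : ∀ r ∈ P, det3 a b r = 0 → r = a ∨ r = b := by
      intro r hr h0
      have : r ∈ S := Finset.mem_filter.mpr ⟨hr, h0⟩
      rw [hSeq] at this
      simpa using this
    have hA5 : A.card = 5 := by omega
    obtain ⟨x, hxA, hminx, hcx⟩ := peel hab A (by omega)
    obtain ⟨y, hyA1, hminy, hcy⟩ := peel hab (A.erase x) (by omega)
    obtain ⟨z1, hz1A2, hminz1, hcz1⟩ := peel hab ((A.erase x).erase y) (by omega)
    obtain ⟨z2, hz2A3, hminz2, hcz2⟩ := peel hab (((A.erase x).erase y).erase z1) (by omega)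
    obtain ⟨z3, hz3A4, hminz3, hcz3⟩ := peel hab ((((A.erase x).erase y).erase z1).erase z2)
      (by omega)
    have hyA : y ∈ A := Finset.mem_of_mem_erase hyA1
    have hz1A : z1 ∈ A := Finset.mem_of_mem_erase (Finset.mem_of_mem_erase hz1A2)
    have hz2A : z2 ∈ A := Finset.mem_of_mem_erase (Finset.mem_of_mem_erase
      (Finset.mem_of_mem_erase hz2A3))
    have hz3A : z3 ∈ A := Finset.mem_of_mem_erase (Finset.mem_of_mem_erase
      (Finset.mem_of_mem_erase (Finset.mem_of_mem_erase hz3A4)))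
    have Lxy : LexLt a b x y := hminx y hyA (Finset.ne_of_mem_erase hyA1)
    have Lyz1 : LexLt a b y z1 := hminy z1 (Finset.mem_of_mem_erase hz1A2)
      (Finset.ne_of_mem_erase hz1A2)
    have Lz1z2 : LexLt a b z1 z2 := hminz1 z2 (Finset.mem_of_mem_erase hz2A3)
      (Finset.ne_of_mem_erase hz2A3)
    have Lz2z3 : LexLt a b z2 z3 := hminz2 z3 (Finset.mem_of_mem_erase hz3A4)
      (Finset.ne_of_mem_erase hz3A4)
    have habove : ∀ r ∈ P, 0 < det3 a b r → r = x ∨ r = y ∨ r = z1 ∨ r = z2 ∨ r = z3 := by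
      intro r hrP hrf
      have hrA : r ∈ A := mkA hrP hrf
      by_contra hcon
      push_neg at hcon
      obtain ⟨n1, n2, n3, n4, n5⟩ := hcon
      have : r ∈ (((((A.erase x).erase y).erase z1).erase z2).erase z3) :=
        Finset.mem_erase.mpr ⟨n5, Finset.mem_erase.mpr ⟨n4, Finset.mem_erase.mpr ⟨n3,
          Finset.mem_erase.mpr ⟨n2, Finset.mem_erase.mpr ⟨n1, hrA⟩⟩⟩⟩⟩
      have hempty : (((((A.erase x).erase y).erase z1).erase z2).erase z3).card = 0 := by omega
      rw [Finset.card_eq_zero] at hempty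
      rw [hempty] at this
      exact absurd this (Finset.notMem_empty r)
    obtain ⟨hxP, hfx⟩ := memA hxA
    obtain ⟨hyP, hfy⟩ := memA hyA
    obtain ⟨hz1P, hfz1⟩ := memA hz1A
    obtain ⟨hz2P, hfz2⟩ := memA hz2A
    obtain ⟨hz3P, hfz3⟩ := memA hz3A
    have hpa : det3 a b a = 0 := det3_left a b
    have hpb : det3 a b b = 0 := det3_right a b
    -- root visibilities
    have vab : Vis P a b := by
      intro r hrP hseg
      obtain ⟨t, ht0, ht1, hf, _, _⟩ := seg_facts a b hseg
      rw [hpa, hpb] at hf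
      rcases hC0 r hrP (by linarith) with rfl | rfl
      · exact left_not_mem_openSegment hab hseg
      · exact right_not_mem_openSegment hab hseg
    have Lxz1 := lexlt_trans Lxy Lyz1
    have Lxz2 := lexlt_trans Lxz1 Lz1z2
    have Lxz3 := lexlt_trans Lxz2 Lz2z3
    have Lyz2 := lexlt_trans Lyz1 Lz1z2
    have Lyz3 := lexlt_trans Lyz2 Lz2z3
    have vax : Vis P a x := by
      intro r hrP hseg
      obtain ⟨hra, l1, l2, _⟩ := blocker_above (lexlt_online hpa hfx)
        (le_of_eq hpa.symm) (le_of_lt hfx) (Or.inr hfx) hseg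
      rcases habove r hrP hra with rfl | rfl | rfl | rfl | rfl
      · exact lexlt_irrefl l2
      · exact lexlt_asymm l2 Lxy
      · exact lexlt_asymm l2 Lxz1
      · exact lexlt_asymm l2 Lxz2
      · exact lexlt_asymm l2 Lxz3
    have vbx : Vis P b x := by
      intro r hrP hseg
      obtain ⟨hra, l1, l2, _⟩ := blocker_above (lexlt_online hpb hfx)
        (le_of_eq hpb.symm) (le_of_lt hfx) (Or.inr hfx) hseg
      rcases habove r hrP hra with rfl | rfl | rfl | rfl | rfl
      · exact lexlt_irrefl l2
      · exact lexlt_asymm l2 Lxy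
      · exact lexlt_asymm l2 Lxz1
      · exact lexlt_asymm l2 Lxz2
      · exact lexlt_asymm l2 Lxz3
    have vxy : Vis P x y := by
      intro r hrP hseg
      obtain ⟨hra, l1, l2, _⟩ := blocker_above Lxy (le_of_lt hfx) (le_of_lt hfy)
        (Or.inl hfx) hseg
      rcases habove r hrP hra with rfl | rfl | rfl | rfl | rfl
      · exact lexlt_irrefl l1
      · exact lexlt_irrefl l2
      · exact lexlt_asymm l2 Lyz1
      · exact lexlt_asymm l2 Lyz2
      · exact lexlt_asymm l2 Lyz3
    have nax := ne_online hpa hfx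
    have nay := ne_online hpa hfy
    have nbx := ne_online hpb hfx
    have nby := ne_online hpb hfy
    have nxy := lexlt_ne Lxy
    -- y must be blocked from a or from b, with blocker x
    by_cases hv1 : Vis P a y
    · by_cases hv2 : Vis P b y
      · exact hnk (hasK4_of haP hbP hxP hyP hab nax nay nbx nby nxy
          vab vax hv1 vbx hv2 vxy)
      · obtain ⟨r0, hr0P, hseg0⟩ := not_vis hv2
        obtain ⟨hra0, l10, l20, _⟩ := blocker_above (lexlt_online hpb hfy)
          (le_of_eq hpb.symm) (le_of_lt hfy) (Or.inr hfy) hseg0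
        rcases habove r0 hr0P hra0 with h0 | h0 | h0 | h0 | h0
        · obtain rfl := h0.symm
          refine case2sub (p1 := b) (p2 := a) hnk hno4 hbP haP hxP hyP hz1P hz2P hz3P
            hpb hpa (Ne.symm hab) ?_ hfx hfy hfz1 hfz2 hfz3 Lxy Lyz1 Lz1z2 Lz2z3
            (fun r hr h0 => (hC0 r hr h0).symm) habove (seg_symm hseg0)
          rw [det3_swap b a x]
          exact neg_ne_zero.mpr (ne_of_gt hfx)
        · exact lexlt_irrefl (h0 ▸ l20)
        · exact lexlt_asymm (h0 ▸ l20) Lyz1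
        · exact lexlt_asymm (h0 ▸ l20) Lyz2
        · exact lexlt_asymm (h0 ▸ l20) Lyz3
    · obtain ⟨r0, hr0P, hseg0⟩ := not_vis hv1
      obtain ⟨hra0, l10, l20, _⟩ := blocker_above (lexlt_online hpa hfy)
        (le_of_eq hpa.symm) (le_of_lt hfy) (Or.inr hfy) hseg0
      rcases habove r0 hr0P hra0 with h0 | h0 | h0 | h0 | h0
      · obtain rfl := h0.symm
        refine case2sub (p1 := a) (p2 := b) hnk hno4 haP hbP hxP hyP hz1P hz2P hz3P
          hpa hpb hab ?_ hfx hfy hfz1 hfz2 hfz3 Lxy Lyz1 Lz1z2 Lz2z3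
          hC0 habove (seg_symm hseg0)
        exact ne_of_gt hfx
      · exact lexlt_irrefl (h0 ▸ l20)
      · exact lexlt_asymm (h0 ▸ l20) Lyz1
      · exact lexlt_asymm (h0 ▸ l20) Lyz2
      · exact lexlt_asymm (h0 ▸ l20) Lyz3
  · -- CASE |S| = 3
    obtain ⟨q1, hq1S, hminq1, hcq1⟩ := peel hab S (by omega)
    obtain ⟨q2, hq2S1, hminq2, hcq2⟩ := peel hab (S.erase q1) (by omega)
    obtain ⟨q3, hq3S2, hminq3, hcq3⟩ := peel hab ((S.erase q1).erase q2) (by omega)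
    have hq2S : q2 ∈ S := Finset.mem_of_mem_erase hq2S1
    have hq3S : q3 ∈ S := Finset.mem_of_mem_erase (Finset.mem_of_mem_erase hq3S2)
    have L12 : LexLt a b q1 q2 := hminq1 q2 hq2S (Finset.ne_of_mem_erase hq2S1)
    have L23 : LexLt a b q2 q3 := hminq2 q3 (Finset.mem_of_mem_erase hq3S2)
      (Finset.ne_of_mem_erase hq3S2)
    have L13 := lexlt_trans L12 L23
    have nq12 := lexlt_ne L12
    have nq23 := lexlt_ne L23
    have nq13 := lexlt_ne L13
    obtain ⟨hq1P, hq1v⟩ := memS hq1S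
    obtain ⟨hq2P, hq2v⟩ := memS hq2S
    obtain ⟨hq3P, hq3v⟩ := memS hq3S
    have hC03 : ∀ r ∈ P, det3 a b r = 0 → r = q1 ∨ r = q2 ∨ r = q3 := by
      intro r hrP hrf
      have hrS : r ∈ S := Finset.mem_filter.mpr ⟨hrP, hrf⟩
      by_contra hcon
      push_neg at hcon
      obtain ⟨n1, n2, n3⟩ := hcon
      have : r ∈ ((S.erase q1).erase q2).erase q3 :=
        Finset.mem_erase.mpr ⟨n3, Finset.mem_erase.mpr ⟨n2, Finset.mem_erase.mpr ⟨n1, hrS⟩⟩⟩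
      have hempty : (((S.erase q1).erase q2).erase q3).card = 0 := by omega
      rw [Finset.card_eq_zero] at hempty
      rw [hempty] at this
      exact absurd this (Finset.notMem_empty r)
    -- peel the four points above
    obtain ⟨x, hxA, hminx, hcx⟩ := peel hab A (by omega)
    obtain ⟨y, hyA1, hminy, hcy⟩ := peel hab (A.erase x) (by omega)
    obtain ⟨z1, hz1A2, hminz1, hcz1⟩ := peel hab ((A.erase x).erase y) (by omega)
    obtain ⟨z2, hz2A3, hminz2, hcz2⟩ := peel hab (((A.erase x).erase y).erase z1) (by omega)
    have hyA : y ∈ A := Finset.mem_of_mem_erase hyA1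
    have hz1A : z1 ∈ A := Finset.mem_of_mem_erase (Finset.mem_of_mem_erase hz1A2)
    have hz2A : z2 ∈ A := Finset.mem_of_mem_erase (Finset.mem_of_mem_erase
      (Finset.mem_of_mem_erase hz2A3))
    have Lxy : LexLt a b x y := hminx y hyA (Finset.ne_of_mem_erase hyA1)
    have Lyz1 : LexLt a b y z1 := hminy z1 (Finset.mem_of_mem_erase hz1A2)
      (Finset.ne_of_mem_erase hz1A2)
    have Lz1z2 : LexLt a b z1 z2 := hminz1 z2 (Finset.mem_of_mem_erase hz2A3)
      (Finset.ne_of_mem_erase hz2A3)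
    have habove : ∀ r ∈ P, 0 < det3 a b r → r = x ∨ r = y ∨ r = z1 ∨ r = z2 := by
      intro r hrP hrf
      have hrA : r ∈ A := mkA hrP hrf
      by_contra hcon
      push_neg at hcon
      obtain ⟨n1, n2, n3, n4⟩ := hcon
      have : r ∈ ((((A.erase x).erase y).erase z1).erase z2) :=
        Finset.mem_erase.mpr ⟨n4, Finset.mem_erase.mpr ⟨n3,
          Finset.mem_erase.mpr ⟨n2, Finset.mem_erase.mpr ⟨n1, hrA⟩⟩⟩⟩
      have hempty : ((((A.erase x).erase y).erase z1).erase z2).card = 0 := by omega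
      rw [Finset.card_eq_zero] at hempty
      rw [hempty] at this
      exact absurd this (Finset.notMem_empty r)
    obtain ⟨hxP, hfx⟩ := memA hxA
    obtain ⟨hyP, hfy⟩ := memA hyA
    obtain ⟨hz1P, hfz1⟩ := memA hz1A
    obtain ⟨hz2P, hfz2⟩ := memA hz2A
    have Lxz1 := lexlt_trans Lxy Lyz1
    have Lxz2 := lexlt_trans Lxz1 Lz1z2
    have Lyz2 := lexlt_trans Lyz1 Lz1z2
    have nxy := lexlt_ne Lxy
    have nxz1 := lexlt_ne Lxz1
    have nyz1 := lexlt_ne Lyz1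
    have nz1z2 := lexlt_ne Lz1z2
    -- visibilities among the line points
    have vq1q2 : Vis P q1 q2 := by
      intro r hrP hseg
      obtain ⟨t, ht0, ht1, hf, _, _⟩ := seg_facts a b hseg
      rw [hq1v, hq2v] at hf
      obtain ⟨l1, l2⟩ := lex_between a b hseg L12
      rcases hC03 r hrP (by linarith) with rfl | rfl | rfl
      · exact lexlt_irrefl l1
      · exact lexlt_irrefl l2
      · exact lexlt_asymm l2 L23
    have vq2q3 : Vis P q2 q3 := by
      intro r hrP hseg
      obtain ⟨t, ht0, ht1, hf, _, _⟩ := seg_facts a b hseg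
      rw [hq2v, hq3v] at hf
      obtain ⟨l1, l2⟩ := lex_between a b hseg L23
      rcases hC03 r hrP (by linarith) with rfl | rfl | rfl
      · exact lexlt_asymm l1 L12
      · exact lexlt_irrefl l1
      · exact lexlt_irrefl l2
    -- the line points see x
    have vqx : ∀ q, det3 a b q = 0 → Vis P q x := by
      intro q hqv r hrP hseg
      obtain ⟨hra, l1, l2, _⟩ := blocker_above (lexlt_online hqv hfx)
        (le_of_eq hqv.symm) (le_of_lt hfx) (Or.inr hfx) hseg
      rcases habove r hrP hra with h0 | h0 | h0 | h0
      · exact lexlt_irrefl (h0 ▸ l2)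
      · exact lexlt_asymm (h0 ▸ l2) Lxy
      · exact lexlt_asymm (h0 ▸ l2) Lxz1
      · exact lexlt_asymm (h0 ▸ l2) Lxz2
    have vxy : Vis P x y := by
      intro r hrP hseg
      obtain ⟨hra, l1, l2, _⟩ := blocker_above Lxy (le_of_lt hfx) (le_of_lt hfy)
        (Or.inl hfx) hseg
      rcases habove r hrP hra with h0 | h0 | h0 | h0
      · exact lexlt_irrefl (h0 ▸ l1)
      · exact lexlt_irrefl (h0 ▸ l2)
      · exact lexlt_asymm (h0 ▸ l2) Lyz1
      · exact lexlt_asymm (h0 ▸ l2) Lyz2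
    -- blockers of a line point from y must be x
    have hbl : ∀ q, det3 a b q = 0 → ¬ Vis P q y → det3 q y x = 0 := by
      intro q hqv hnv
      obtain ⟨r, hrP, hseg⟩ := not_vis hnv
      obtain ⟨hra, l1, l2, hcol⟩ := blocker_above (lexlt_online hqv hfy)
        (le_of_eq hqv.symm) (le_of_lt hfy) (Or.inr hfy) hseg
      rcases habove r hrP hra with h0 | h0 | h0 | h0
      · exact h0 ▸ hcol
      · exact absurd (h0 ▸ l2) (fun hh => lexlt_irrefl hh)
      · exact absurd (h0 ▸ l2) (fun hh => lexlt_asymm hh Lyz1)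
      · exact absurd (h0 ▸ l2) (fun hh => lexlt_asymm hh Lyz2)
    have nq1x := ne_online hq1v hfx
    have nq2x := ne_online hq2v hfx
    have nq3x := ne_online hq3v hfx
    have nq1y := ne_online hq1v hfy
    have nq2y := ne_online hq2v hfy
    have nq3y := ne_online hq3v hfy
    have nq1z1 := ne_online hq1v hfz1
    have nq2z1 := ne_online hq2v hfz1
    have nq3z1 := ne_online hq3v hfz1
    -- y is blocked from q2 (by x)
    have hB12 : ¬ Vis P q1 y ∨ ¬ Vis P q2 y := by
      by_contra hc
      push_neg at hc
      exact hnk (hasK4_of hq1P hq2P hxP hyP nq12 nq1x nq1y nq2x nq2y nxy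
        vq1q2 (vqx q1 hq1v) hc.1 (vqx q2 hq2v) hc.2 vxy)
    have hB23 : ¬ Vis P q2 y ∨ ¬ Vis P q3 y := by
      by_contra hc
      push_neg at hc
      exact hnk (hasK4_of hq2P hq3P hxP hyP nq23 nq2x nq2y nq3x nq3y nxy
        vq2q3 (vqx q2 hq2v) hc.1 (vqx q3 hq3v) hc.2 vxy)
    by_cases hv2 : Vis P q2 y
    · have c1 : det3 q1 y x = 0 := hbl q1 hq1v (hB12.resolve_right (not_not_intro hv2))
      have c3 : det3 q3 y x = 0 := hbl q3 hq3v ((hB23.resolve_left (not_not_intro hv2)))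
      exact no4c hno4 hyP hxP hq1P hq3P (Ne.symm nxy) nq1y.symm nq3y.symm nq1x.symm
        nq3x.symm nq13 (coll_cycle c1) (coll_cycle c3)
    · have c2 : det3 q2 y x = 0 := hbl q2 hq2v hv2
      have cbr : det3 y q2 x = 0 := coll_swap c2
      -- z1 visibilities
      have vyz1 : Vis P y z1 := by
        intro r hrP hseg
        obtain ⟨hra, l1, l2, _⟩ := blocker_above Lyz1 (le_of_lt hfy) (le_of_lt hfz1)
          (Or.inl hfy) hseg
        rcases habove r hrP hra with h0 | h0 | h0 | h0
        · exact lexlt_asymm (h0 ▸ l1) Lxy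
        · exact lexlt_irrefl (h0 ▸ l1)
        · exact lexlt_irrefl (h0 ▸ l2)
        · exact lexlt_asymm (h0 ▸ l2) Lz1z2
      have vxz1 : Vis P x z1 := by
        intro r hrP hseg
        obtain ⟨hra, l1, l2, hcol⟩ := blocker_above Lxz1 (le_of_lt hfx) (le_of_lt hfz1)
          (Or.inl hfx) hseg
        rcases habove r hrP hra with h0 | h0 | h0 | h0
        · exact lexlt_irrefl (h0 ▸ l1)
        · exact no4c hno4 hxP hyP hz1P hq2P nxy nxz1 nq2x.symm nyz1 nq2y.symm nq2z1.symm
            (coll_swap23 (h0 ▸ hcol)) (coll_cycle (coll_cycle cbr))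
        · exact lexlt_irrefl (h0 ▸ l2)
        · exact lexlt_asymm (h0 ▸ l2) Lz1z2
      have vq2z1 : Vis P q2 z1 := by
        intro r hrP hseg
        obtain ⟨hra, l1, l2, hcol⟩ := blocker_above (lexlt_online hq2v hfz1)
          (le_of_eq hq2v.symm) (le_of_lt hfz1) (Or.inr hfz1) hseg
        rcases habove r hrP hra with h0 | h0 | h0 | h0
        · exact no4c hno4 hq2P hxP hz1P hyP nq2x nq2z1 nq2y nxz1 nxy (Ne.symm nyz1)
            (coll_swap23 (h0 ▸ hcol)) (coll_cycle cbr)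
        · exact no4c hno4 hq2P hyP hz1P hxP nq2y nq2z1 nq2x nyz1 (Ne.symm nxy)
            (Ne.symm nxz1) (coll_swap23 (h0 ▸ hcol)) c2
        · exact lexlt_irrefl (h0 ▸ l2)
        · exact lexlt_asymm (h0 ▸ l2) Lz1z2
      -- z1 is blocked from q1 and from q3, each by x or y
      have hblz : ∀ q, det3 a b q = 0 → ¬ Vis P q z1 →
          det3 q z1 x = 0 ∨ det3 q z1 y = 0 := by
        intro q hqv hnv
        obtain ⟨r, hrP, hseg⟩ := not_vis hnv
        obtain ⟨hra, l1, l2, hcol⟩ := blocker_above (lexlt_online hqv hfz1)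
          (le_of_eq hqv.symm) (le_of_lt hfz1) (Or.inr hfz1) hseg
        rcases habove r hrP hra with h0 | h0 | h0 | h0
        · exact Or.inl (h0 ▸ hcol)
        · exact Or.inr (h0 ▸ hcol)
        · exact absurd (h0 ▸ l2) (fun hh => lexlt_irrefl hh)
        · exact absurd (h0 ▸ l2) (fun hh => lexlt_asymm hh Lz1z2)
      have hnv1 : ¬ Vis P q1 z1 := by
        intro hv
        exact hnk (hasK4_of hq1P hq2P hxP hz1P nq12 nq1x nq1z1 nq2x nq2z1 nxz1
          vq1q2 (vqx q1 hq1v) hv (vqx q2 hq2v) vq2z1 vxz1)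
      have hnv3 : ¬ Vis P q3 z1 := by
        intro hv
        exact hnk (hasK4_of hq2P hq3P hxP hz1P nq23 nq2x nq2z1 nq3x nq3z1 nxz1
          vq2q3 (vqx q2 hq2v) vq2z1 (vqx q3 hq3v) hv vxz1)
      rcases hblz q1 hq1v hnv1 with cx1 | cy1 <;> rcases hblz q3 hq3v hnv3 with cx3 | cy3
      · exact no4c hno4 hz1P hxP hq1P hq3P (Ne.symm nxz1) nq1z1.symm nq3z1.symm
          nq1x.symm nq3x.symm nq13 (coll_cycle cx1) (coll_cycle cx3)
      · exact case3sub hnk hno4 hq1P hq2P hq3P hxP hyP hz1P hz2P hq1v hq2v hq3v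
          hfx hfy hfz1 hfz2 Lxy Lyz1 Lz1z2 habove vxy vyz1 vxz1 cbr
          (coll_swap cx1) (coll_swap cy3)
      · exact case3sub hnk hno4 hq3P hq2P hq1P hxP hyP hz1P hz2P hq3v hq2v hq1v
          hfx hfy hfz1 hfz2 Lxy Lyz1 Lz1z2 habove vxy vyz1 vxz1 cbr
          (coll_swap cx3) (coll_swap cy1)
      · exact no4c hno4 hz1P hyP hq1P hq3P (Ne.symm nyz1) nq1z1.symm nq3z1.symm
          nq1y.symm nq3y.symm nq13 (coll_cycle cy1) (coll_cycle cy3)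

theorem mainthm : ∀ n : ℕ, 7 ≤ n → ∀ P : Finset V, P.card = n → ¬ HasK4 P →
    ∃ u ∈ P, ∃ v ∈ P, u ≠ v ∧ P.card - 2 ≤ (P.filter (fun z => det3 u v z = 0)).card := by
  intro n hn
  induction n, hn using Nat.le_induction with
  | base =>
    intro P hcard hnk
    by_cases hbig : ∃ u ∈ P, ∃ v ∈ P, u ≠ v ∧ 4 ≤ (P.filter (fun z => det3 u v z = 0)).card
    · obtain ⟨u, hu, v, hv, huv, hk⟩ := hbig
      refine ⟨u, hu, v, hv, huv, ?_⟩
      rcases le_or_gt 5 ((P.filter (fun z => det3 u v z = 0)).card) with h | h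
      · omega
    -- the filter has exactly 4 elements, so exactly 3 points off: K4, contradiction
      · exfalso
        apply hnk
        have hc4 : (P.filter (fun z => det3 u v z = 0)).card = 4 := by omega
        exact three_off hu hv huv hk (by omega)
    · exfalso
      apply hnk
      push_neg at hbig
      exact lemmaY hcard (fun u hu v hv huv => by
        have := hbig u hu v hv huv; omega)
  | succ n hn ih =>
    intro P hcard hnk
    have hne : P.Nonempty := Finset.card_pos.mp (by omega)
    obtain ⟨w, hwP, hwext⟩ := exists_extreme hne
    have hcard' : (P.erase w).card = n := by
      rw [Finset.card_erase_of_mem hwP, hcard]; omega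
    have hnk' : ¬ HasK4 (P.erase w) := noK4_erase hnk hwext
    obtain ⟨u, hu, v, hv, huv, hbig⟩ := ih (P.erase w) hcard' hnk'
    have huP : u ∈ P := Finset.mem_of_mem_erase hu
    have hvP : v ∈ P := Finset.mem_of_mem_erase hv
    refine ⟨u, huP, v, hvP, huv, ?_⟩
    have hmono : ((P.erase w).filter (fun z => det3 u v z = 0)).card ≤
        (P.filter (fun z => det3 u v z = 0)).card :=
      Finset.card_le_card (Finset.filter_subset_filter _ (Finset.erase_subset _ _))
    rcases le_or_gt (P.card - 2) ((P.filter (fun z => det3 u v z = 0)).card) with h | h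
    · exact h
    · exfalso
      apply hnk
      have hcard'' : (P.filter (fun z => det3 u v z = 0)).card = n - 2 := by omega
      exact three_off huP hvP huv (by omega) (by omega)


lemma collinear_line {u v : V} (huv : u ≠ v) : Collinear ℝ {z : V | det3 u v z = 0} := by
  rw [collinear_iff_exists_forall_eq_smul_vadd]
  refine ⟨u, v - u, fun z hz => ?_⟩
  simp only [Set.mem_setOf_eq, det3] at hz
  by_cases h1 : v.1 - u.1 = 0
  · have h2 : v.2 - u.2 ≠ 0 := by
      intro hc
      exact huv (Prod.ext (by linarith) (by linarith)).symm
    refine ⟨(z.2 - u.2)/(v.2 - u.2), ?_⟩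
    have hz1 : z.1 = u.1 := by
      rw [h1] at hz
      rcases mul_eq_zero.mp (show (v.2-u.2)*(z.1-u.1) = 0 by linarith) with h | h
      · exact absurd h h2
      · linarith
    apply Prod.ext
    · show z.1 = ((z.2-u.2)/(v.2-u.2)) * (v.1-u.1) + u.1
      rw [hz1, h1]
      ring
    · show z.2 = ((z.2-u.2)/(v.2-u.2)) * (v.2-u.2) + u.2
      field_simp
      ring
  · refine ⟨(z.1 - u.1)/(v.1 - u.1), ?_⟩
    apply Prod.ext
    · show z.1 = ((z.1-u.1)/(v.1-u.1)) * (v.1-u.1) + u.1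
      field_simp
      ring
    · show z.2 = ((z.1-u.1)/(v.1-u.1)) * (v.2-u.2) + u.2
      field_simp
      linear_combination hz

end BLC

/-- For every `ℓ ≥ 2`, every set of at least `max {7, ℓ + 2}` points in the
plane contains `ℓ` collinear points or `4` pairwise mutually visible points. -/
theorem big_line_clique_four (ℓ : ℕ) (hl : 2 ≤ ℓ) :
    ∀ P : Finset (ℝ × ℝ), max 7 (ℓ + 2) ≤ P.card →
      (∃ S ⊆ P, S.card = ℓ ∧ Collinear ℝ (↑S : Set (ℝ × ℝ))) ∨
      (∃ S ⊆ P, S.card = 4 ∧ PairwiseVisible P S) := by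
  intro P hP
  have h7 : 7 ≤ P.card := le_trans (le_max_left _ _) hP
  have hl2 : ℓ + 2 ≤ P.card := le_trans (le_max_right _ _) hP
  by_cases hk : BLC.HasK4 P
  · exact Or.inr hk
  · left
    obtain ⟨u, hu, v, hv, huv, hbig⟩ := BLC.mainthm P.card h7 P rfl hk
    have hl3 : ℓ ≤ (P.filter (fun z => BLC.det3 u v z = 0)).card := by omega
    obtain ⟨S, hSsub, hScard⟩ := Finset.exists_subset_card_eq hl3
    refine ⟨S, le_trans hSsub (Finset.filter_subset _ _), hScard, ?_⟩
    apply Collinear.subset ?_ (BLC.collinear_line huv)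
    intro z hz
    exact (Finset.mem_filter.mp (hSsub (Finset.mem_coe.mp hz))).2
end
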